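/- arXiv:0906.1162 — 6 statements merged into one kernel-verified Lean document; each statement's English description precedes it below -/
import Mathlib

section
/- Let 1 ≤ p < ∞ and let q satisfy 1/p + 1/q = 1. Let f ∈ L_p(ℝ), let (λ_i)_{i≥1} be a sequence of distinct real numbers, set f_i = f_(λ_i), and suppose there exist g_i ∈ L_q(ℝ) with ∫_ℝ f_i g_j = δ_{ij} for all i, j and sup_i ‖f_i‖_p · ‖g_i‖_q < ∞ (a bounded biorthogonal system). Then the sequence (λ_i) is uniformly discrete, i.e. inf{|λ_i − λ_j| : i ≠ j} > 0. -/
open MeasureTheory ENNReal Filter Topology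

/-- Hölder pairing bound: for `F ∈ ℒp` and `G ∈ L_q` with conjugate exponents,
the product is integrable and the pairing is bounded by the product of norms. -/
lemma holder_pairing_aux {p q : ℝ≥0∞} (hpq : p⁻¹ + q⁻¹ = 1)
    {F : ℝ → ℝ} (hF : MemLp F p (volume : Measure ℝ)) (G : Lp ℝ q (volume : Measure ℝ)) :
    Integrable (fun t => F t * G t) volume ∧
      |∫ t, F t * G t| ≤ (eLpNorm F p volume).toReal * ‖G‖ := by
  have hGm : AEStronglyMeasurable (⇑G) (volume : Measure ℝ) := Lp.aestronglyMeasurable G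
  have hmeas : AEStronglyMeasurable (fun t => F t * G t) (volume : Measure ℝ) :=
    hF.1.mul hGm
  have hpqr : (1 : ℝ≥0∞) / 1 = 1 / q + 1 / p := by
    simp only [one_div]
    rw [inv_one, ← hpq, add_comm]
  have h1 : eLpNorm (fun t => F t * G t) 1 volume ≤
      eLpNorm (⇑G) q volume * eLpNorm F p volume := by
    have := eLpNorm_smul_le_mul_eLpNorm (μ := (volume : Measure ℝ)) (p := q) (q := p) (r := 1) hF.1 hGm
      (hpqr := ⟨by simpa [one_div] using hpqr.symm⟩)
    have heq : (⇑G • F) = fun t => F t * G t := by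
      funext t; simp [Pi.smul_apply', smul_eq_mul, mul_comm]
    rwa [heq] at this
  have hfin : eLpNorm (⇑G) q volume * eLpNorm F p volume < ∞ :=
    ENNReal.mul_lt_top (Lp.eLpNorm_lt_top G) hF.2
  have hmem1 : MemLp (fun t => F t * G t) 1 volume := ⟨hmeas, lt_of_le_of_lt h1 hfin⟩
  have hint : Integrable (fun t => F t * G t) volume := memLp_one_iff_integrable.mp hmem1
  refine ⟨hint, ?_⟩
  have hb1 : |∫ t, F t * G t| ≤ ∫ t, ‖F t * G t‖ := by
    rw [← Real.norm_eq_abs]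
    exact norm_integral_le_integral_norm _
  have hb2 : (∫ t, ‖F t * G t‖) = (eLpNorm (fun t => F t * G t) 1 volume).toReal := by
    rw [integral_norm_eq_lintegral_enorm hmeas, eLpNorm_one_eq_lintegral_enorm]
  have hb3 : (eLpNorm (fun t => F t * G t) 1 volume).toReal ≤
      (eLpNorm (⇑G) q volume * eLpNorm F p volume).toReal :=
    ENNReal.toReal_mono hfin.ne h1
  have hb4 : (eLpNorm (⇑G) q volume * eLpNorm F p volume).toReal =
      (eLpNorm F p volume).toReal * ‖G‖ := by
    rw [ENNReal.toReal_mul, Lp.norm_def, mul_comm]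
  linarith [hb1, hb2 ▸ hb1, hb3, hb4]

/-- If `(f_(λ_i), g_i)` is a bounded biorthogonal system in `L_p(ℝ) × L_q(ℝ)`
(`1 ≤ p < ∞`, `1/p + 1/q = 1`), where the `λ_i` are distinct, then `(λ_i)` is
uniformly discrete. -/
theorem translates_bounded_biorthogonal_uniformly_discrete
    (p q : ℝ≥0∞) [Fact (1 ≤ p)] [Fact (1 ≤ q)] (hp : 1 ≤ p) (hp' : p ≠ ∞)
    (hpq : p⁻¹ + q⁻¹ = 1)
    (f : Lp ℝ p (volume : Measure ℝ))
    (lam : ℕ → ℝ) (hlam : Function.Injective lam)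
    (g : ℕ → Lp ℝ q (volume : Measure ℝ))
    (hbi : ∀ i j : ℕ, (∫ t : ℝ, f (t - lam i) * g j t) = if i = j then (1 : ℝ) else 0)
    (hbd : ∃ C : ℝ, ∀ i : ℕ,
      (eLpNorm (fun t : ℝ => f (t - lam i)) p volume).toReal * ‖g i‖ ≤ C) :
    ∃ δ > (0 : ℝ), ∀ i j : ℕ, i ≠ j → δ ≤ |lam i - lam j| := by
  obtain ⟨C, hC⟩ := hbd
  have hmp : ∀ s : ℝ, MeasurePreserving (fun t : ℝ => t - s) volume volume :=
    fun s => measurePreserving_sub_right volume s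
  have hFmem : ∀ a : ℝ, MemLp (fun t : ℝ => f (t - a)) p volume :=
    fun a => (Lp.memLp f).comp_measurePreserving (hmp a)
  have hFnorm : ∀ a : ℝ, eLpNorm (fun t : ℝ => f (t - a)) p volume = eLpNorm (⇑f) p volume :=
    fun a => eLpNorm_comp_measurePreserving (Lp.aestronglyMeasurable f) (hmp a)
  have pair := fun (a : ℝ) (i : ℕ) => holder_pairing_aux hpq (hFmem a) (g i)
  -- positivity of ‖f‖ and basic bounds
  have hfg : ∀ i : ℕ, 1 ≤ ‖f‖ * ‖g i‖ := by
    intro i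
    have h := (pair (lam i) i).2
    rw [hbi i i, if_pos rfl] at h
    rw [hFnorm, ← Lp.norm_def] at h
    simpa using h
  have hCge : ∀ i : ℕ, ‖f‖ * ‖g i‖ ≤ C := by
    intro i
    have h := hC i
    rwa [hFnorm, ← Lp.norm_def] at h
  have hC1 : 1 ≤ C := (hfg 0).trans (hCge 0)
  have hfpos : 0 < ‖f‖ := by
    rcases (norm_nonneg f).lt_or_eq with h | h
    · exact h
    · exfalso; have := hfg 0; rw [← h, zero_mul] at this; linarith
  have hCpos : 0 < C := lt_of_lt_of_le one_pos hC1
  -- the translation operator and its continuity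
  let cm : ℝ → C(ℝ, ℝ) := fun s => ⟨fun t => t - s, (continuous_id.sub continuous_const)⟩
  have hcm : Continuous cm :=
    ContinuousMap.continuous_of_continuous_uncurry _ (continuous_snd.sub continuous_fst)
  have hmp' : ∀ s : ℝ, MeasurePreserving (cm s) volume volume := fun s => hmp s
  let T : ℝ → Lp ℝ p (volume : Measure ℝ) :=
    fun s => Lp.compMeasurePreserving (cm s) (hmp' s) f
  have hT : Continuous T :=
    Continuous.compMeasurePreservingLp continuous_const hcm hmp' hp'
  have hT0 : T 0 = f := by
    apply Lp.ext
    filter_upwards [Lp.coeFn_compMeasurePreserving (μ := (volume : Measure ℝ)) f (hmp' 0)]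
      with t ht
    rw [show ((T 0 : Lp ℝ p (volume : Measure ℝ)) : ℝ → ℝ) t
        = ((Lp.compMeasurePreserving (⇑(cm 0)) (hmp' 0) f : Lp ℝ p (volume : Measure ℝ)) : ℝ → ℝ) t
      from rfl, ht]
    show (f : ℝ → ℝ) (t - 0) = (f : ℝ → ℝ) t
    rw [sub_zero]
  have htend : Tendsto (fun s => ‖f - T s‖) (𝓝 0) (𝓝 0) := by
    have h1 : Tendsto (fun s => f - T s) (𝓝 0) (𝓝 (f - T 0)) :=
      tendsto_const_nhds.sub (hT.tendsto 0)
    rw [hT0, sub_self] at h1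
    simpa using h1.norm
  have hev : ∀ᶠ s in 𝓝 (0 : ℝ), ‖f - T s‖ < ‖f‖ / C :=
    htend.eventually (gt_mem_nhds (by positivity))
  obtain ⟨δ, hδpos, hδ⟩ := Metric.eventually_nhds_iff.mp hev
  refine ⟨δ, hδpos, fun i j hij => ?_⟩
  by_contra hcon
  push_neg at hcon
  set s : ℝ := lam j - lam i with hs_def
  have hsδ : dist s 0 < δ := by
    rw [Real.dist_eq, sub_zero, hs_def, abs_sub_comm]
    exact hcon
  have hlt : ‖f - T s‖ < ‖f‖ / C := hδ hsδ
  -- the integral identity : ∫ (f(t-λ_i) - f(t-λ_j)) g_i = 1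
  have hint : (∫ t : ℝ, (f (t - lam i) - f (t - lam j)) * g i t) = 1 := by
    have e : (fun t : ℝ => (f (t - lam i) - f (t - lam j)) * g i t) =
        fun t : ℝ => f (t - lam i) * g i t - f (t - lam j) * g i t := by
      funext t; ring
    rw [e, integral_sub (pair (lam i) i).1 (pair (lam j) i).1, hbi i i, hbi j i,
      if_pos rfl, if_neg (fun h => hij h.symm), sub_zero]
  -- Hölder on the difference
  have hDmem : MemLp (fun t : ℝ => f (t - lam i) - f (t - lam j)) p volume := by
    have h := (hFmem (lam i)).sub (hFmem (lam j))
    simpa [Pi.sub_def] using h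
  have hpairD := (holder_pairing_aux hpq hDmem (g i)).2
  rw [hint] at hpairD
  -- identify the eLpNorm of the difference with ‖f - T s‖
  have hnorm : (eLpNorm (fun t : ℝ => f (t - lam i) - f (t - lam j)) p volume).toReal
      = ‖f - T s‖ := by
    have harg : ∀ t : ℝ, t - lam i - s = t - lam j := by intro t; rw [hs_def]; ring
    have e1 : (fun t : ℝ => f (t - lam i) - f (t - lam j)) =
        (fun u : ℝ => f u - f (u - s)) ∘ (fun t : ℝ => t - lam i) := by
      funext t
      simp only [Function.comp_apply, harg t]
    have hmeas2 : AEStronglyMeasurable (fun u : ℝ => f u - f (u - s)) volume :=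
      (Lp.aestronglyMeasurable f).sub
        ((Lp.aestronglyMeasurable f).comp_measurePreserving (hmp s))
    rw [e1, eLpNorm_comp_measurePreserving hmeas2 (hmp (lam i)), Lp.norm_def]
    congr 1
    apply eLpNorm_congr_ae
    filter_upwards [Lp.coeFn_sub f (T s),
      Lp.coeFn_compMeasurePreserving (μ := (volume : Measure ℝ)) f (hmp' s)] with t h1 h2
    rw [h1, Pi.sub_apply, h2]
    rfl
  rw [hnorm] at hpairD
  have h1le : (1 : ℝ) ≤ ‖f - T s‖ * ‖g i‖ := by simpa using hpairD
  have hgipos : 0 < ‖g i‖ := by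
    rcases (norm_nonneg (g i)).lt_or_eq with h | h
    · exact h
    · exfalso; rw [← h, mul_zero] at h1le; linarith
  have hstrict : (1 : ℝ) < (‖f‖ / C) * ‖g i‖ :=
    lt_of_le_of_lt h1le (mul_lt_mul_of_pos_right hlt hgipos)
  have hle1 : (‖f‖ / C) * ‖g i‖ ≤ 1 := by
    rw [div_mul_eq_mul_div, div_le_one hCpos]
    exact hCge i
  linarith
end

section
/- Let 1 < p < ∞ with conjugate exponent q (1/p + 1/q = 1). Let f ∈ L_p(ℝ) ∩ L_1(ℝ), let (λ_i)_{i≥1} be uniformly discrete, and set f_i = f_(λ_i). Then there is no sequence (g_i)_{i≥1} ⊆ L_q(ℝ) such that (f_i, g_i)_{i≥1} is a Schauder frame for the whole space L_p(ℝ), i.e. such that every h ∈ L_p(ℝ) satisfies h = Σ_{i=1}^∞ ⟨h, g_i⟩ f_i with convergence in the L_p norm. -/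
open MeasureTheory ENNReal Filter Topology

set_option linter.unusedSectionVars false
set_option maxHeartbeats 1000000

section Aux
variable {p q : ℝ≥0∞} [Fact (1 ≤ p)] [Fact (1 ≤ q)]

lemma NSF.holder_rel (hpq : p⁻¹ + q⁻¹ = 1) : 1 / (1 : ℝ≥0∞) = 1 / p + 1 / q := by
  simp only [one_div]
  rw [inv_one, ← hpq]

lemma NSF.integrable_pair (hpq : p⁻¹ + q⁻¹ = 1)
    (h : Lp ℝ p (volume : Measure ℝ)) {w : ℝ → ℝ} (hw : MemLp w q volume) :
    Integrable (fun t => h t * w t) volume := by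
  have hm : MemLp ((⇑h : ℝ → ℝ) • w) 1 volume :=
    MemLp.smul hw (Lp.memLp h) (hpqr := holderConjugate_iff.mpr hpq)
  rw [memLp_one_iff_integrable] at hm
  exact hm

lemma NSF.pair_bound (hpq : p⁻¹ + q⁻¹ = 1)
    (h : Lp ℝ p (volume : Measure ℝ)) {w : ℝ → ℝ} (hw : MemLp w q volume) :
    ‖∫ t, h t * w t‖ ≤ (eLpNorm w q volume).toReal * ‖h‖ := by
  have h1 : ‖∫ t, h t * w t‖ ≤ ∫ t, ‖h t * w t‖ := norm_integral_le_integral_norm _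
  have h2 : ∫ t, ‖h t * w t‖ = (∫⁻ t, ‖h t * w t‖₊ ∂(volume : Measure ℝ)).toReal :=
    integral_norm_eq_lintegral_enorm ((Lp.aestronglyMeasurable h).mul hw.1)
  have h3 : (∫⁻ t, ‖h t * w t‖₊ ∂(volume : Measure ℝ))
      = eLpNorm ((⇑h : ℝ → ℝ) • w) 1 volume := by
    rw [eLpNorm_one_eq_lintegral_enorm]
    rfl
  have h4 : eLpNorm ((⇑h : ℝ → ℝ) • w) 1 volume ≤ eLpNorm (⇑h) p volume * eLpNorm w q volume :=
    eLpNorm_smul_le_mul_eLpNorm hw.1 (Lp.aestronglyMeasurable h) (hpqr := holderConjugate_iff.mpr hpq)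
  have hfin : eLpNorm (⇑h) p volume * eLpNorm w q volume ≠ ∞ :=
    ENNReal.mul_ne_top (Lp.eLpNorm_lt_top h).ne hw.2.ne
  have h5 := ENNReal.toReal_mono hfin h4
  rw [ENNReal.toReal_mul] at h5
  calc ‖∫ t, h t * w t‖ ≤ ∫ t, ‖h t * w t‖ := h1
    _ = (eLpNorm ((⇑h : ℝ → ℝ) • w) 1 volume).toReal := by rw [h2, h3]
    _ ≤ (eLpNorm (⇑h) p volume).toReal * (eLpNorm w q volume).toReal := h5
    _ = (eLpNorm w q volume).toReal * ‖h‖ := by rw [Lp.norm_def]; ring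

noncomputable def NSF.pairCLM (hpq : p⁻¹ + q⁻¹ = 1)
    {w : ℝ → ℝ} (hw : MemLp w q volume) :
    Lp ℝ p (volume : Measure ℝ) →L[ℝ] ℝ :=
  LinearMap.mkContinuous
    { toFun := fun h => ∫ t, h t * w t
      map_add' := fun h₁ h₂ => by
        rw [← integral_add (NSF.integrable_pair hpq h₁ hw) (NSF.integrable_pair hpq h₂ hw)]
        refine integral_congr_ae ?_
        filter_upwards [Lp.coeFn_add h₁ h₂] with t ht
        rw [ht]
        simp [add_mul]
      map_smul' := fun c h => by
        rw [← integral_smul]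
        refine integral_congr_ae ?_
        filter_upwards [Lp.coeFn_smul c h] with t ht
        rw [ht]
        simp [mul_assoc] }
    ((eLpNorm w q volume).toReal)
    (fun h => NSF.pair_bound hpq h hw)

@[simp] lemma NSF.pairCLM_apply (hpq : p⁻¹ + q⁻¹ = 1)
    {w : ℝ → ℝ} (hw : MemLp w q volume) (h : Lp ℝ p (volume : Measure ℝ)) :
    NSF.pairCLM hpq hw h = ∫ t, h t * w t := rfl

end Aux

lemma NSF.card_sep {δ L a : ℝ} (hδ : 0 < δ) (hL : 0 ≤ L) {lam : ℕ → ℝ}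
    (hsep : ∀ i j : ℕ, i ≠ j → δ ≤ |lam i - lam j|) (s : Finset ℕ)
    (hs : ∀ i ∈ s, lam i ∈ Set.Ioc a (a + L)) : (s.card : ℝ) ≤ L / δ + 1 := by
  have hinj : Set.InjOn (fun i => ⌊(lam i - a) / δ⌋) s := by
    intro i hi j hj hij
    by_contra hne
    have h1 := hsep i j hne
    have h2 : |(lam i - a) / δ - (lam j - a) / δ| < 1 :=
      Int.abs_sub_lt_one_of_floor_eq_floor hij
    rw [div_sub_div_same] at h2
    have h3 : lam i - a - (lam j - a) = lam i - lam j := by ring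
    rw [h3, abs_div, abs_of_pos hδ, div_lt_one hδ] at h2
    linarith
  have hmaps : ∀ i ∈ s, ⌊(lam i - a) / δ⌋ ∈ Finset.Icc (0 : ℤ) ⌊L / δ⌋ := by
    intro i hi
    rcases hs i hi with ⟨h1, h2⟩
    rw [Finset.mem_Icc]
    refine ⟨Int.floor_nonneg.mpr (div_nonneg (by linarith) hδ.le), ?_⟩
    exact Int.floor_le_floor ((div_le_div_iff_of_pos_right hδ).mpr (by linarith))
  have hcard : s.card ≤ (Finset.Icc (0 : ℤ) ⌊L / δ⌋).card :=
    Finset.card_le_card_of_injOn _ hmaps hinj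
  have h0 : (0 : ℤ) ≤ ⌊L / δ⌋ := Int.floor_nonneg.mpr (div_nonneg hL hδ.le)
  have hcc : (Finset.Icc (0 : ℤ) ⌊L / δ⌋).card = (⌊L / δ⌋ + 1).toNat := by
    rw [Int.card_Icc]
    norm_num
  have hfl : (⌊L / δ⌋ : ℝ) ≤ L / δ := Int.floor_le _
  have h4 : ((s.card : ℕ) : ℝ) ≤ (((⌊L / δ⌋ + 1).toNat : ℤ) : ℝ) := by
    exact_mod_cast le_trans (Nat.cast_le.mpr (hcc ▸ hcard)) (le_of_eq rfl)
  rw [Int.toNat_of_nonneg (by omega)] at h4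
  push_cast at h4
  linarith

lemma NSF.lintegral_window {f' : ℝ → ℝ} (hf' : Measurable f') {ε : ℝ} (hε : 0 ≤ ε) :
    (∫⁻ r, (∫⁻ x in Set.Ioc r (r + ε), ‖f' x‖₊ ∂(volume : Measure ℝ)) ∂(volume : Measure ℝ))
      ≤ ENNReal.ofReal ε * ∫⁻ x, ‖f' x‖₊ ∂(volume : Measure ℝ) := by
  set k : ℝ × ℝ → ℝ≥0∞ :=
    fun z => if z.1 < z.2 ∧ z.2 ≤ z.1 + ε then (‖f' z.2‖₊ : ℝ≥0∞) else 0 with hk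
  have hkm : Measurable k := by
    apply Measurable.ite
    · exact (measurableSet_lt measurable_fst measurable_snd).inter
        (measurableSet_le measurable_snd (measurable_fst.add_const ε))
    · exact (hf'.comp measurable_snd).enorm
    · exact measurable_const
  have h1 : ∀ r : ℝ, (∫⁻ x in Set.Ioc r (r + ε), ‖f' x‖₊ ∂(volume : Measure ℝ))
      = ∫⁻ x, k (r, x) ∂(volume : Measure ℝ) := by
    intro r
    rw [← lintegral_indicator measurableSet_Ioc]
    refine lintegral_congr fun x => ?_
    simp only [hk, Set.indicator_apply, Set.mem_Ioc]
  have h2 : ∀ x r : ℝ, k (r, x)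
      = (Set.Ico (x - ε) x).indicator (fun _ => (‖f' x‖₊ : ℝ≥0∞)) r := by
    intro x r
    simp only [hk, Set.indicator_apply, Set.mem_Ico]
    have h : (r < x ∧ x ≤ r + ε) ↔ (x - ε ≤ r ∧ r < x) :=
      ⟨fun ⟨a, b⟩ => ⟨by linarith, a⟩, fun ⟨a, b⟩ => ⟨b, by linarith⟩⟩
    rw [if_congr h rfl rfl]
  calc (∫⁻ r, (∫⁻ x in Set.Ioc r (r + ε), ‖f' x‖₊ ∂(volume : Measure ℝ)) ∂(volume : Measure ℝ))
      = ∫⁻ r, ∫⁻ x, k (r, x) ∂(volume : Measure ℝ) ∂(volume : Measure ℝ) := by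
        simp_rw [h1]
    _ = ∫⁻ x, ∫⁻ r, k (r, x) ∂(volume : Measure ℝ) ∂(volume : Measure ℝ) :=
        lintegral_lintegral_swap hkm.aemeasurable
    _ = ∫⁻ x, (‖f' x‖₊ : ℝ≥0∞) * ENNReal.ofReal ε ∂(volume : Measure ℝ) := by
        refine lintegral_congr fun x => ?_
        simp_rw [h2 x]
        rw [lintegral_indicator_const measurableSet_Ico]
        rw [Real.volume_Ico]
        congr 2
        ring
    _ = ENNReal.ofReal ε * ∫⁻ x, ‖f' x‖₊ ∂(volume : Measure ℝ) := by
        rw [lintegral_mul_const' _ _ ofReal_ne_top, mul_comm]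
    _ ≤ ENNReal.ofReal ε * ∫⁻ x, ‖f' x‖₊ ∂(volume : Measure ℝ) := le_rfl

lemma NSF.intervalIntegrable_of_memℒp {q : ℝ≥0∞} [Fact (1 ≤ q)] {w : ℝ → ℝ}
    (hw : MemLp w q volume) (a b : ℝ) : IntervalIntegrable w volume a b := by
  rw [intervalIntegrable_iff]
  haveI : IsFiniteMeasure ((volume : Measure ℝ).restrict (Set.uIoc a b)) := by
    constructor
    rw [Measure.restrict_apply_univ, Set.uIoc]
    exact measure_Ioc_lt_top
  exact (hw.restrict _).integrable Fact.out

lemma NSF.cont_window {w : ℝ → ℝ} (hw : ∀ a b : ℝ, IntervalIntegrable w volume a b) (ε : ℝ) :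
    Continuous fun t => ∫ x in t..(t + ε), w x := by
  have hprim : Continuous fun b => ∫ x in (0:ℝ)..b, w x :=
    intervalIntegral.continuous_primitive hw 0
  have heq : (fun t => ∫ x in t..(t + ε), w x)
      = fun t => (∫ x in (0:ℝ)..(t + ε), w x) - ∫ x in (0:ℝ)..t, w x := by
    funext t
    have h := intervalIntegral.integral_add_adjacent_intervals (hw 0 t) (hw t (t + ε))
    linarith
  rw [heq]
  exact (hprim.comp (continuous_id.add continuous_const)).sub hprim

lemma NSF.mul_indicator_integral (w : ℝ → ℝ) (s : Set ℝ) (hs : MeasurableSet s) :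
    ∫ x, w x * s.indicator (fun _ => (1:ℝ)) x ∂(volume : Measure ℝ) = ∫ x in s, w x := by
  rw [← integral_indicator hs]
  congr 1
  funext x
  by_cases hx : x ∈ s <;> simp [Set.indicator_of_mem, Set.indicator_of_notMem, hx]

/-- Let `1 < p < ∞` with conjugate exponent `q`, let `f ∈ L_p(ℝ) ∩ L_1(ℝ)`, and
let `(f_i)` be a uniformly discrete sequence of translates of `f`. Then there is
no sequence `(g_i) ⊆ L_q(ℝ)` making `(f_i, g_i)` a Schauder frame for all of
`L_p(ℝ)`. -/
theorem no_schauder_frame_of_translates_Lp_inter_L1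
    (p q : ℝ≥0∞) [Fact (1 ≤ p)] [Fact (1 ≤ q)] (hp : 1 < p) (hp' : p ≠ ∞)
    (hpq : p⁻¹ + q⁻¹ = 1)
    (f : Lp ℝ p (volume : Measure ℝ)) (hf1 : Integrable (f : ℝ → ℝ) volume)
    (lam : ℕ → ℝ)
    (hlam : ∃ δ > (0 : ℝ), ∀ i j : ℕ, i ≠ j → δ ≤ |lam i - lam j|)
    (F : ℕ → Lp ℝ p (volume : Measure ℝ))
    (hF : ∀ i : ℕ, (F i : ℝ → ℝ) =ᵐ[volume] fun x => f (x - lam i)) :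
    ¬ ∃ g : ℕ → Lp ℝ q (volume : Measure ℝ),
        ∀ h : Lp ℝ p (volume : Measure ℝ),
          Tendsto (fun n : ℕ => ∑ i ∈ Finset.range n, (∫ t : ℝ, h t * g i t) • F i)
            atTop (𝓝 h) := by
  rintro ⟨g, hg⟩
  obtain ⟨δ, hδ, hsep⟩ := hlam
  -- exponent bookkeeping
  have hp0 : p ≠ 0 := (zero_lt_one.trans hp).ne'
  have hq0 : q ≠ 0 := by
    intro h
    have h1 : (1 : ℝ≥0∞) ≤ q := Fact.out
    rw [h] at h1
    simp at h1
  have hq' : q ≠ ∞ := by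
    intro h
    rw [h, ENNReal.inv_top, add_zero] at hpq
    exact hp.ne' (ENNReal.inv_eq_one.mp hpq)
  have hptr : 1 < p.toReal := by
    rw [← ENNReal.toReal_one]
    exact (ENNReal.toReal_lt_toReal ENNReal.one_ne_top hp').mpr hp
  have hptr0 : (0:ℝ) < 1 / p.toReal := by positivity
  -- the partial-sum operators
  have hgmem : ∀ i : ℕ, MemLp (⇑(g i) : ℝ → ℝ) q volume := fun i => Lp.memLp (g i)
  set S : ℕ → (Lp ℝ p (volume : Measure ℝ) →L[ℝ] Lp ℝ p (volume : Measure ℝ)) :=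
    fun N => ∑ i ∈ Finset.range N, (NSF.pairCLM hpq (hgmem i)).smulRight (F i) with hS
  have hSapp : ∀ (N : ℕ) (h : Lp ℝ p (volume : Measure ℝ)),
      S N h = ∑ i ∈ Finset.range N, (∫ t : ℝ, h t * g i t) • F i := by
    intro N h
    simp [hS, ContinuousLinearMap.sum_apply, ContinuousLinearMap.smulRight_apply]
  have hSt : ∀ h : Lp ℝ p (volume : Measure ℝ), Tendsto (fun N => S N h) atTop (𝓝 h) := by
    intro h
    have he : (fun N => S N h)
        = fun n : ℕ => ∑ i ∈ Finset.range n, (∫ t : ℝ, h t * g i t) • F i :=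
      funext fun N => hSapp N h
    rw [he]
    exact hg h
  -- Banach–Steinhaus
  obtain ⟨C, hC⟩ : ∃ C, ∀ N, ‖S N‖ ≤ C := by
    apply banach_steinhaus
    intro h
    obtain ⟨C0, hC0⟩ := (hSt h).norm.bddAbove_range
    exact ⟨C0, fun N => hC0 ⟨N, rfl⟩⟩
  have hCnn : 0 ≤ C := le_trans (norm_nonneg (S 0)) (hC 0)
  have hSle : ∀ (N : ℕ) (h : Lp ℝ p (volume : Measure ℝ)), ‖S N h‖ ≤ C * ‖h‖ :=
    fun N h => le_trans ((S N).le_opNorm h)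
      (mul_le_mul_of_nonneg_right (hC N) (norm_nonneg h))
  -- norms of the translates
  have hFnorm : ∀ i : ℕ, ‖F i‖ = ‖f‖ := by
    intro i
    rw [Lp.norm_def, Lp.norm_def]
    congr 1
    rw [eLpNorm_congr_ae (hF i)]
    exact eLpNorm_comp_measurePreserving (Lp.aestronglyMeasurable f)
      (measurePreserving_sub_right volume (lam i))
  -- degenerate case : f = 0
  rcases eq_or_lt_of_le (norm_nonneg f) with hρ | hρ
  · have hf0 : f = 0 := norm_eq_zero.mp hρ.symm
    have hF0 : ∀ i, F i = 0 := by
      intro i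
      apply norm_eq_zero.mp
      rw [hFnorm i, ← hρ]
    set h₀ : Lp ℝ p (volume : Measure ℝ) :=
      indicatorConstLp p measurableSet_Ioc
        (by rw [Real.volume_Ioc]; exact ofReal_ne_top : volume (Set.Ioc (0:ℝ) 1) ≠ ∞)
        (1 : ℝ) with hh₀
    have hzero : Tendsto (fun n : ℕ => (0 : Lp ℝ p (volume : Measure ℝ))) atTop (𝓝 h₀) := by
      have h1 := hg h₀
      have h2 : (fun n : ℕ => ∑ i ∈ Finset.range n, (∫ t : ℝ, h₀ t * g i t) • F i)
          = fun _ : ℕ => (0 : Lp ℝ p (volume : Measure ℝ)) := by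
        funext n
        simp [hF0]
      rwa [h2] at h1
    have h₀eq : h₀ = 0 := tendsto_nhds_unique hzero tendsto_const_nhds
    have : ‖h₀‖ = 1 := by
      rw [hh₀, norm_indicatorConstLp hp0 hp']
      simp [Real.volume_Ioc]
    rw [h₀eq] at this
    simp at this
  ·
    -- main case : ‖f‖ > 0
    -- coefficient bound from uniform boundedness
    have hcoef : ∀ (i : ℕ) (h : Lp ℝ p (volume : Measure ℝ)),
        |∫ t : ℝ, h t * g i t| * ‖f‖ ≤ 2 * C * ‖h‖ := by
      intro i h
      have hdiff : (∫ t : ℝ, h t * g i t) • F i = S (i+1) h - S i h := by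
        rw [hSapp, hSapp, Finset.sum_range_succ]
        abel
      have hb : ‖(∫ t : ℝ, h t * g i t) • F i‖ ≤ 2 * C * ‖h‖ := by
        rw [hdiff]
        calc ‖S (i+1) h - S i h‖ ≤ ‖S (i+1) h‖ + ‖S i h‖ := norm_sub_le _ _
          _ ≤ C * ‖h‖ + C * ‖h‖ := add_le_add (hSle _ _) (hSle _ _)
          _ = 2 * C * ‖h‖ := by ring
      rwa [norm_smul, Real.norm_eq_abs, hFnorm i] at hb
    -- choice of ε
    have hpt0 : p.toReal ≠ 0 := (lt_trans zero_lt_one hptr).ne'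
    set If : ℝ := (∫⁻ x, ‖f x‖₊ ∂(volume : Measure ℝ)).toReal with hIf
    have hIfnn : (0:ℝ) ≤ If := ENNReal.toReal_nonneg
    have hden : (0:ℝ) < 4 * C * If + 1 := by positivity
    set c : ℝ := δ * ‖f‖ / (4 * C * If + 1) with hc
    have hcpos : 0 < c := div_pos (mul_pos hδ hρ) hden
    set ε : ℝ := c ^ p.toReal with hεdef
    have hε : 0 < ε := Real.rpow_pos_of_pos hcpos _
    have hεr : ε ^ (1 / p.toReal) = c := by
      rw [hεdef, ← Real.rpow_mul hcpos.le, mul_one_div, div_self hpt0, Real.rpow_one]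
    -- test elements
    have hIocvol : ∀ t : ℝ, volume (Set.Ioc t (t + ε)) = ENNReal.ofReal ε := by
      intro t; rw [Real.volume_Ioc]; congr 1; ring
    have hIocne : ∀ t : ℝ, volume (Set.Ioc t (t + ε)) ≠ ∞ := by
      intro t; rw [hIocvol t]; exact ofReal_ne_top
    set u : ℝ → Lp ℝ p (volume : Measure ℝ) :=
      fun t => indicatorConstLp p measurableSet_Ioc (hIocne t) (1 : ℝ) with hu
    have hucoe : ∀ t : ℝ, ⇑(u t) =ᵐ[volume]
        (Set.Ioc t (t + ε)).indicator (fun _ => (1:ℝ)) := by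
      intro t
      simp only [hu]
      exact indicatorConstLp_coeFn
    have hunorm : ∀ t : ℝ, ‖u t‖ = ε ^ (1 / p.toReal) := by
      intro t
      simp only [hu]
      rw [norm_indicatorConstLp hp0 hp', measureReal_def, hIocvol t, ENNReal.toReal_ofReal hε.le]
      simp
    have hvmem : ∀ t : ℝ,
        MemLp ((Set.Ioc t (t + ε)).indicator (fun _ => (1:ℝ))) q volume := fun t =>
      memLp_indicator_const q measurableSet_Ioc 1 (Or.inr (hIocne t))
    set W : ℝ → (Lp ℝ p (volume : Measure ℝ) →L[ℝ] ℝ) :=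
      fun t => NSF.pairCLM hpq (hvmem t) with hW
    have hWapp : ∀ (t : ℝ) (z : Lp ℝ p (volume : Measure ℝ)),
        W t z = ∫ x, z x * (Set.Ioc t (t + ε)).indicator (fun _ => (1:ℝ)) x := fun t z => rfl
    -- the window function φ
    set φ : ℝ → ℝ := fun r => ∫ x in r..(r + ε), f x with hφ
    have hφcont : Continuous φ := NSF.cont_window (fun a b => hf1.intervalIntegrable) ε
    have hgii : ∀ (i : ℕ) (a b : ℝ), IntervalIntegrable (⇑(g i)) volume a b :=
      fun i => NSF.intervalIntegrable_of_memℒp (hgmem i)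
    have hacont : ∀ i : ℕ, Continuous fun t => ∫ x in t..(t + ε), (g i : ℝ → ℝ) x :=
      fun i => NSF.cont_window (hgii i) ε
    -- pairing computations
    have hpairF : ∀ (t : ℝ) (i : ℕ), W t (F i) = φ (t - lam i) := by
      intro t i
      rw [hWapp]
      have h1 : (∫ x, (F i : ℝ → ℝ) x * (Set.Ioc t (t + ε)).indicator (fun _ => (1:ℝ)) x ∂volume)
          = ∫ x, f (x - lam i) * (Set.Ioc t (t + ε)).indicator (fun _ => (1:ℝ)) x ∂volume := by
        refine integral_congr_ae ?_
        filter_upwards [hF i] with x hx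
        rw [hx]
      rw [h1, NSF.mul_indicator_integral _ _ measurableSet_Ioc,
        ← intervalIntegral.integral_of_le (by linarith : t ≤ t + ε),
        intervalIntegral.integral_comp_sub_right (fun x => f x) (lam i)]
      have h2 : t + ε - lam i = (t - lam i) + ε := by ring
      rw [h2]
    have hcoefa : ∀ (t : ℝ) (i : ℕ),
        (∫ x : ℝ, (u t : ℝ → ℝ) x * (g i : ℝ → ℝ) x ∂volume)
          = ∫ x in t..(t + ε), (g i : ℝ → ℝ) x := by
      intro t i
      have h1 : (∫ x, (u t : ℝ → ℝ) x * (g i : ℝ → ℝ) x ∂volume)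
          = ∫ x, (g i : ℝ → ℝ) x * (Set.Ioc t (t + ε)).indicator (fun _ => (1:ℝ)) x ∂volume := by
        refine integral_congr_ae ?_
        filter_upwards [hucoe t] with x hx
        rw [hx]
        exact mul_comm _ _
      rw [h1, NSF.mul_indicator_integral _ _ measurableSet_Ioc,
        ← intervalIntegral.integral_of_le (by linarith : t ≤ t + ε)]
    -- value of W t (u t)
    have hWu : ∀ t : ℝ, W t (u t) = ε := by
      intro t
      rw [hWapp]
      have h1 : (∫ x, (u t : ℝ → ℝ) x * (Set.Ioc t (t + ε)).indicator (fun _ => (1:ℝ)) x ∂volume)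
          = ∫ x, (Set.Ioc t (t + ε)).indicator (fun _ => (1:ℝ)) x ∂volume := by
        refine integral_congr_ae ?_
        filter_upwards [hucoe t] with x hx
        rw [hx]
        by_cases hm : x ∈ Set.Ioc t (t + ε) <;>
          simp [Set.indicator_of_mem, Set.indicator_of_notMem, hm]
      rw [h1, integral_indicator_const (1:ℝ) measurableSet_Ioc, measureReal_def, hIocvol t,
        ENNReal.toReal_ofReal hε.le, smul_eq_mul, mul_one]
    -- Q N t
    set Q : ℕ → ℝ → ℝ := fun N t => ∑ i ∈ Finset.range N,
      (∫ x in t..(t + ε), (g i : ℝ → ℝ) x) * φ (t - lam i) with hQdef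
    have hQ : ∀ (N : ℕ) (t : ℝ), W t (S N (u t)) = Q N t := by
      intro N t
      rw [hSapp, map_sum, hQdef]
      refine Finset.sum_congr rfl fun i _ => ?_
      rw [_root_.map_smul, smul_eq_mul, hpairF t i, hcoefa t i]
    -- pointwise limit
    have hlimQ : ∀ t : ℝ, Tendsto (fun N => Q N t) atTop (𝓝 ε) := by
      intro t
      have h2 := ((W t).continuous.tendsto (u t)).comp (hSt (u t))
      have h4 : Tendsto (fun N => W t (S N (u t))) atTop (𝓝 ε) := by
        rw [← hWu t]; exact h2
      have h3 : (fun N => W t (S N (u t))) = fun N => Q N t := funext fun N => hQ N t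
      rw [← h3]
      exact h4
    -- uniform bound
    have hvnorm : ∀ t : ℝ,
        (eLpNorm ((Set.Ioc t (t + ε)).indicator fun _ => (1:ℝ)) q volume).toReal
          = ε ^ (1 / q.toReal) := by
      intro t
      rw [eLpNorm_indicator_const measurableSet_Ioc hq0 hq', hIocvol t]
      rw [ENNReal.toReal_mul, ← ENNReal.toReal_rpow, ENNReal.toReal_ofReal hε.le]
      simp
    have hQbdd : ∀ (N : ℕ) (t : ℝ),
        |Q N t| ≤ ε ^ (1 / q.toReal) * (C * ε ^ (1 / p.toReal)) := by
      intro N t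
      rw [← hQ N t]
      have h1 : |W t (S N (u t))|
          ≤ (eLpNorm ((Set.Ioc t (t + ε)).indicator fun _ => (1:ℝ)) q volume).toReal
            * ‖S N (u t)‖ := by
        rw [← Real.norm_eq_abs]
        exact NSF.pair_bound hpq _ (hvmem t)
      calc |W t (S N (u t))|
          ≤ (eLpNorm ((Set.Ioc t (t + ε)).indicator fun _ => (1:ℝ)) q volume).toReal
            * ‖S N (u t)‖ := h1
        _ ≤ ε ^ (1 / q.toReal) * (C * ε ^ (1 / p.toReal)) := by
            rw [hvnorm t]
            refine mul_le_mul_of_nonneg_left ?_ (Real.rpow_nonneg hε.le _)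
            calc ‖S N (u t)‖ ≤ C * ‖u t‖ := hSle N (u t)
              _ = C * ε ^ (1 / p.toReal) := by rw [hunorm t]
    -- dominated convergence
    haveI hfmIoc : IsFiniteMeasure ((volume : Measure ℝ).restrict (Set.Ioc (0:ℝ) δ)) := by
      constructor
      rw [Measure.restrict_apply_univ]
      exact measure_Ioc_lt_top
    have hQcont : ∀ N : ℕ, Continuous (Q N) := by
      intro N
      rw [hQdef]
      apply continuous_finset_sum
      intro i _
      exact (hacont i).mul (hφcont.comp (continuous_id.sub continuous_const))
    have hDCT : Tendsto (fun N => ∫ t in Set.Ioc (0:ℝ) δ, Q N t) atTop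
        (𝓝 (∫ _ in Set.Ioc (0:ℝ) δ, ε)) := by
      apply tendsto_integral_of_dominated_convergence
        (fun _ => ε ^ (1 / q.toReal) * (C * ε ^ (1 / p.toReal)))
      · exact fun N => ((hQcont N).aestronglyMeasurable).restrict
      · exact integrable_const _
      · intro N
        exact Eventually.of_forall fun t => by rw [Real.norm_eq_abs]; exact hQbdd N t
      · exact Eventually.of_forall fun t => hlimQ t
    have hconst : (∫ _ in Set.Ioc (0:ℝ) δ, ε ∂(volume : Measure ℝ)) = δ * ε := by
      rw [setIntegral_const, measureReal_def, Real.volume_Ioc, smul_eq_mul,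
        ENNReal.toReal_ofReal (by linarith : (0:ℝ) ≤ δ - 0)]
      ring
    -- coefficient bound for the test elements
    have haε : ∀ (i : ℕ) (t : ℝ), |∫ x in t..(t + ε), (g i : ℝ → ℝ) x|
        ≤ 2 * C * ε ^ (1 / p.toReal) / ‖f‖ := by
      intro i t
      rw [le_div_iff₀ hρ]
      have h1 := hcoef i (u t)
      rw [hcoefa t i, hunorm t] at h1
      exact h1
    -- translation of the φ integrals
    have htrans : ∀ i : ℕ, (∫ t in Set.Ioc (0:ℝ) δ, |φ (t - lam i)|)
        = ∫ r in Set.Ioc (0 - lam i) (δ - lam i), |φ r| := by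
      intro i
      rw [← intervalIntegral.integral_of_le hδ.le,
        intervalIntegral.integral_comp_sub_right (fun r => |φ r|) (lam i),
        intervalIntegral.integral_of_le (by linarith : 0 - lam i ≤ δ - lam i)]
    -- measurable representative of f
    obtain ⟨f', hf'm, hf'eq⟩ := (Lp.aestronglyMeasurable f).aemeasurable
    have hnn : (fun x : ℝ => (‖f x‖₊ : ℝ≥0∞)) =ᵐ[volume] fun x => (‖f' x‖₊ : ℝ≥0∞) :=
      hf'eq.mono fun x hx => by simp [hx]
    -- pointwise domination of φ by a window lintegral
    have hφle : ∀ r : ℝ, (‖φ r‖₊ : ℝ≥0∞) ≤ ∫⁻ x in Set.Ioc r (r + ε), ‖f' x‖₊ ∂volume := by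
      intro r
      have h0 : φ r = ∫ x in Set.Ioc r (r + ε), f x ∂volume := by
        rw [hφ]
        exact intervalIntegral.integral_of_le (by linarith)
      rw [h0]
      calc (‖∫ x in Set.Ioc r (r + ε), f x ∂volume‖₊ : ℝ≥0∞)
          ≤ ∫⁻ x in Set.Ioc r (r + ε), ‖f x‖₊ ∂volume :=
            enorm_integral_le_lintegral_enorm _
        _ = ∫⁻ x in Set.Ioc r (r + ε), ‖f' x‖₊ ∂volume :=
            lintegral_congr_ae (ae_restrict_of_ae hnn)
    have hLf : (∫⁻ x, ‖f x‖₊ ∂(volume : Measure ℝ)) ≠ ∞ := hf1.2.ne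
    have hφglobal : (∫⁻ r, ‖φ r‖₊ ∂(volume : Measure ℝ))
        ≤ ENNReal.ofReal ε * ∫⁻ x, ‖f x‖₊ ∂(volume : Measure ℝ) := by
      calc (∫⁻ r, ‖φ r‖₊ ∂(volume : Measure ℝ))
          ≤ ∫⁻ r, (∫⁻ x in Set.Ioc r (r + ε), ‖f' x‖₊ ∂volume) ∂volume :=
            lintegral_mono hφle
        _ ≤ ENNReal.ofReal ε * ∫⁻ x, ‖f' x‖₊ ∂(volume : Measure ℝ) :=
            NSF.lintegral_window hf'm hε.le
        _ = ENNReal.ofReal ε * ∫⁻ x, ‖f x‖₊ ∂(volume : Measure ℝ) := by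
            congr 1
            exact lintegral_congr_ae hnn.symm
    have hφmeas : Measurable fun r => (‖φ r‖₊ : ℝ≥0∞) := hφcont.measurable.enorm
    -- the ENNReal core estimate with the bounded-overlap counting
    have hEcore : ∀ N : ℕ, (∑ i ∈ Finset.range N,
          ∫⁻ r in Set.Ioc (0 - lam i) (δ - lam i), ‖φ r‖₊ ∂volume)
        ≤ 2 * (ENNReal.ofReal ε * ∫⁻ x, ‖f x‖₊ ∂(volume : Measure ℝ)) := by
      intro N
      have h1 : ∀ i : ℕ, (∫⁻ r in Set.Ioc (0 - lam i) (δ - lam i), ‖φ r‖₊ ∂volume)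
          = ∫⁻ r, (Set.Ioc (0 - lam i) (δ - lam i)).indicator
              (fun r => (‖φ r‖₊ : ℝ≥0∞)) r ∂volume :=
        fun i => (lintegral_indicator measurableSet_Ioc _).symm
      simp_rw [h1]
      rw [← lintegral_finset_sum _ (fun i _ => hφmeas.indicator measurableSet_Ioc)]
      calc (∫⁻ r, ∑ i ∈ Finset.range N, (Set.Ioc (0 - lam i) (δ - lam i)).indicator
              (fun r => (‖φ r‖₊ : ℝ≥0∞)) r ∂volume)
          ≤ ∫⁻ r, 2 * (‖φ r‖₊ : ℝ≥0∞) ∂volume := by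
            apply lintegral_mono
            intro r
            classical
            show (∑ i ∈ Finset.range N, (Set.Ioc (0 - lam i) (δ - lam i)).indicator
              (fun r => (‖φ r‖₊ : ℝ≥0∞)) r) ≤ 2 * (‖φ r‖₊ : ℝ≥0∞)
            have hsum : (∑ i ∈ Finset.range N, (Set.Ioc (0 - lam i) (δ - lam i)).indicator
                (fun r => (‖φ r‖₊ : ℝ≥0∞)) r)
                = ((Finset.range N).filter
                    (fun i => r ∈ Set.Ioc (0 - lam i) (δ - lam i))).card
                  • (‖φ r‖₊ : ℝ≥0∞) := by
              rw [Finset.sum_indicator_eq_sum_filter, Finset.sum_const]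
            have hcard : ((((Finset.range N).filter
                (fun i => r ∈ Set.Ioc (0 - lam i) (δ - lam i))).card : ℕ) : ℝ) ≤ δ / δ + 1 := by
              apply NSF.card_sep hδ hδ.le hsep (a := -r)
              intro i hi
              rw [Finset.mem_filter] at hi
              rcases hi.2 with ⟨ha, hb⟩
              exact ⟨by linarith, by linarith⟩
            have hdd : δ / δ + 1 = (2:ℝ) := by rw [div_self hδ.ne']; norm_num
            rw [hdd] at hcard
            have hcard2 : (((Finset.range N).filter
                (fun i => r ∈ Set.Ioc (0 - lam i) (δ - lam i))).card : ℕ) ≤ 2 := by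
              exact_mod_cast hcard
            rw [hsum, nsmul_eq_mul]
            apply mul_le_mul_left
            exact_mod_cast hcard2
        _ = 2 * ∫⁻ r, (‖φ r‖₊ : ℝ≥0∞) ∂volume := lintegral_const_mul 2 hφmeas
        _ ≤ 2 * (ENNReal.ofReal ε * ∫⁻ x, ‖f x‖₊ ∂(volume : Measure ℝ)) :=
            mul_le_mul_right hφglobal 2
    -- finiteness
    have hfinIoc : ∀ i : ℕ,
        (∫⁻ r in Set.Ioc (0 - lam i) (δ - lam i), ‖φ r‖₊ ∂volume) ≠ ∞ := by
      intro i
      apply ne_of_lt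
      calc (∫⁻ r in Set.Ioc (0 - lam i) (δ - lam i), ‖φ r‖₊ ∂volume)
          ≤ ∫⁻ r, ‖φ r‖₊ ∂(volume : Measure ℝ) := setLIntegral_le_lintegral _ _
        _ ≤ ENNReal.ofReal ε * ∫⁻ x, ‖f x‖₊ ∂(volume : Measure ℝ) := hφglobal
        _ < ∞ := ENNReal.mul_lt_top ofReal_lt_top hLf.lt_top
    -- the real core estimate
    have hcore : ∀ N : ℕ, (∑ i ∈ Finset.range N, ∫ t in Set.Ioc (0:ℝ) δ, |φ (t - lam i)|)
        ≤ 2 * (ε * If) := by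
      intro N
      have h1 : ∀ i : ℕ, (∫ t in Set.Ioc (0:ℝ) δ, |φ (t - lam i)|)
          = (∫⁻ r in Set.Ioc (0 - lam i) (δ - lam i), ‖φ r‖₊ ∂volume).toReal := by
        intro i
        rw [htrans i]
        simp_rw [← enorm_eq_nnnorm]
        rw [← integral_norm_eq_lintegral_enorm
          ((hφcont.aestronglyMeasurable).restrict)]
        simp_rw [Real.norm_eq_abs]
      simp_rw [h1]
      rw [← ENNReal.toReal_sum (fun i _ => hfinIoc i)]
      have h3 := ENNReal.toReal_mono
        (ENNReal.mul_ne_top (by norm_num) (ENNReal.mul_ne_top ofReal_ne_top hLf)) (hEcore N)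
      rw [ENNReal.toReal_mul, ENNReal.toReal_mul, ENNReal.toReal_ofReal hε.le] at h3
      simpa [hIf] using h3
    -- per-N bound of the averaged pairing
    have hAεnn : (0:ℝ) ≤ 2 * C * ε ^ (1 / p.toReal) / ‖f‖ := by positivity
    have hQint : ∀ N : ℕ, (∫ t in Set.Ioc (0:ℝ) δ, Q N t)
        ≤ (2 * C * ε ^ (1 / p.toReal) / ‖f‖) * (2 * (ε * If)) := by
      intro N
      have hint1 : ∀ i : ℕ, IntegrableOn
          (fun t => (∫ x in t..(t + ε), (g i : ℝ → ℝ) x) * φ (t - lam i))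
          (Set.Ioc (0:ℝ) δ) volume :=
        fun i => ((hacont i).mul
          (hφcont.comp (continuous_id.sub continuous_const))).integrableOn_Ioc
      have hint2 : ∀ i : ℕ, IntegrableOn
          (fun t => (2 * C * ε ^ (1 / p.toReal) / ‖f‖) * |φ (t - lam i)|)
          (Set.Ioc (0:ℝ) δ) volume :=
        fun i => (continuous_const.mul
          ((hφcont.comp (continuous_id.sub continuous_const)).abs)).integrableOn_Ioc
      calc (∫ t in Set.Ioc (0:ℝ) δ, Q N t)
          = ∑ i ∈ Finset.range N, ∫ t in Set.Ioc (0:ℝ) δ,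
              (∫ x in t..(t + ε), (g i : ℝ → ℝ) x) * φ (t - lam i) := by
            simp_rw [hQdef]
            exact integral_finset_sum _ fun i _ => hint1 i
        _ ≤ ∑ i ∈ Finset.range N, ∫ t in Set.Ioc (0:ℝ) δ,
              (2 * C * ε ^ (1 / p.toReal) / ‖f‖) * |φ (t - lam i)| := by
            apply Finset.sum_le_sum
            intro i _
            apply integral_mono (hint1 i) (hint2 i)
            intro t
            calc (∫ x in t..(t + ε), (g i : ℝ → ℝ) x) * φ (t - lam i)
                ≤ |(∫ x in t..(t + ε), (g i : ℝ → ℝ) x) * φ (t - lam i)| := le_abs_self _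
              _ = |∫ x in t..(t + ε), (g i : ℝ → ℝ) x| * |φ (t - lam i)| := abs_mul _ _
              _ ≤ (2 * C * ε ^ (1 / p.toReal) / ‖f‖) * |φ (t - lam i)| :=
                  mul_le_mul_of_nonneg_right (haε i t) (abs_nonneg _)
        _ = (2 * C * ε ^ (1 / p.toReal) / ‖f‖)
              * ∑ i ∈ Finset.range N, ∫ t in Set.Ioc (0:ℝ) δ, |φ (t - lam i)| := by
            simp_rw [integral_const_mul]
            rw [Finset.mul_sum]
        _ ≤ (2 * C * ε ^ (1 / p.toReal) / ‖f‖) * (2 * (ε * If)) :=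
            mul_le_mul_of_nonneg_left (hcore N) hAεnn
    -- pass to the limit
    have hfinal : δ * ε ≤ (2 * C * ε ^ (1 / p.toReal) / ‖f‖) * (2 * (ε * If)) := by
      have h1 : Tendsto (fun N => ∫ t in Set.Ioc (0:ℝ) δ, Q N t) atTop (𝓝 (δ * ε)) := by
        rw [← hconst]
        exact hDCT
      exact le_of_tendsto' h1 hQint
    -- algebra and contradiction
    have h2 : δ * ‖f‖ * ε ≤ 4 * C * If * ε ^ (1 / p.toReal) * ε := by
      have h3 := mul_le_mul_of_nonneg_right hfinal (norm_nonneg f)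
      calc δ * ‖f‖ * ε = δ * ε * ‖f‖ := by ring
        _ ≤ (2 * C * ε ^ (1 / p.toReal) / ‖f‖) * (2 * (ε * If)) * ‖f‖ := h3
        _ = 4 * C * If * ε ^ (1 / p.toReal) * ε := by
            field_simp
            ring
    have hkey : δ * ‖f‖ ≤ 4 * C * If * ε ^ (1 / p.toReal) :=
      le_of_mul_le_mul_right h2 hε
    rw [hεr] at hkey
    have hlt : 4 * C * If * c < (4 * C * If + 1) * c :=
      mul_lt_mul_of_pos_right (by linarith) hcpos
    have heq : (4 * C * If + 1) * c = δ * ‖f‖ := by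
      rw [hc, mul_comm, div_mul_cancel₀ _ hden.ne']
    linarith
end

section
/- Let 1 ≤ p ≤ 2, let f ∈ L_p(ℝ) with f ≠ 0, let (λ_i)_{i≥1} be a sequence of distinct reals, and suppose (f_(λ_i))_{i≥1} is an unconditional basic sequence in L_p(ℝ). Then (f_(λ_i))_{i≥1} is equivalent to the unit vector basis of ℓ_p: there exist constants 0 < c ≤ C such that c (Σ_i |a_i|^p)^{1/p} ≤ ‖Σ_i a_i f_(λ_i)‖_p ≤ C (Σ_i |a_i|^p)^{1/p} for every finitely supported scalar sequence (a_i). -/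
open MeasureTheory ENNReal NNReal

namespace UncondTranslatesAux

/-- sign pattern associated to a subset -/
def sg (T : Finset ℕ) (i : ℕ) : ℝ := if i ∈ T then -1 else 1

lemma sg_eq_one_or (T : Finset ℕ) (i : ℕ) : sg T i = 1 ∨ sg T i = -1 := by
  unfold sg; split <;> simp

lemma sg_of_not_mem {T : Finset ℕ} {i : ℕ} (h : i ∉ T) : sg T i = 1 := if_neg h

lemma sg_of_mem {T : Finset ℕ} {i : ℕ} (h : i ∈ T) : sg T i = -1 := if_pos h

lemma sg_mul_self (T : Finset ℕ) (i : ℕ) : sg T i * sg T i = 1 := by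
  rcases sg_eq_one_or T i with h | h <;> rw [h] <;> norm_num

lemma powerset_split {M : Type*} [AddCommMonoid M] {s : Finset ℕ} {j : ℕ} (hj : j ∈ s)
    (F : Finset ℕ → M) :
    ∑ T ∈ s.powerset, F T
      = ∑ T ∈ (s.erase j).powerset, (F T + F (insert j T)) := by
  have hrw : s.powerset = (s.erase j).powerset ∪ (s.erase j).powerset.image (insert j) := by
    nth_rewrite 1 [← Finset.insert_erase hj]
    exact Finset.powerset_insert _ _
  have hdisj : Disjoint (s.erase j).powerset ((s.erase j).powerset.image (insert j)) := by
    rw [Finset.disjoint_left]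
    intro T hT hT'
    rcases Finset.mem_image.mp hT' with ⟨T', _, rfl⟩
    have : j ∉ insert j T' := by
      intro h
      exact (Finset.mem_erase.mp (Finset.mem_powerset.mp hT h)).1 rfl
    exact this (Finset.mem_insert_self _ _)
  rw [hrw, Finset.sum_union hdisj, Finset.sum_image ?_, ← Finset.sum_add_distrib]
  intro T hT T' hT' h
  have hjT : j ∉ T := fun hh => (Finset.mem_erase.mp (Finset.mem_powerset.mp hT hh)).1 rfl
  have hjT' : j ∉ T' := fun hh => (Finset.mem_erase.mp (Finset.mem_powerset.mp hT' hh)).1 rfl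
  rw [← Finset.erase_insert hjT, ← Finset.erase_insert hjT', h]

lemma sum_sg_left {j : ℕ} {s T : Finset ℕ} (hj : j ∉ s) (hjT : j ∉ T) (b : ℕ → ℝ) :
    ∑ i ∈ insert j s, sg T i * b i = b j + ∑ i ∈ s, sg T i * b i := by
  rw [Finset.sum_insert hj, sg_of_not_mem hjT, one_mul]

lemma sum_sg_both {j : ℕ} {s T : Finset ℕ} (hj : j ∉ s) (b : ℕ → ℝ) :
    ∑ i ∈ insert j s, sg (insert j T) i * b i = -b j + ∑ i ∈ s, sg T i * b i := by
  rw [Finset.sum_insert hj, sg_of_mem (Finset.mem_insert_self _ _), neg_one_mul]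
  congr 1
  refine Finset.sum_congr rfl fun i hi => ?_
  have hij : i ≠ j := fun h => hj (h ▸ hi)
  unfold sg
  simp [Finset.mem_insert, hij]

lemma sum_powerset_sq (s : Finset ℕ) (b : ℕ → ℝ) :
    ∑ T ∈ s.powerset, (∑ i ∈ s, sg T i * b i) ^ 2
      = 2 ^ s.card * ∑ i ∈ s, b i ^ 2 := by
  induction s using Finset.induction_on with
  | empty => simp
  | @insert j s hj ih =>
    rw [powerset_split (Finset.mem_insert_self j s), Finset.erase_insert hj]
    have hstep : ∀ T ∈ s.powerset,
        (∑ i ∈ insert j s, sg T i * b i) ^ 2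
          + (∑ i ∈ insert j s, sg (insert j T) i * b i) ^ 2
        = 2 * (∑ i ∈ s, sg T i * b i) ^ 2 + 2 * b j ^ 2 := by
      intro T hT
      have hjT : j ∉ T := fun hh => hj (Finset.mem_powerset.mp hT hh)
      rw [sum_sg_left hj hjT, sum_sg_both hj]
      ring
    rw [Finset.sum_congr rfl hstep, Finset.sum_add_distrib, ← Finset.mul_sum, ih,
      Finset.sum_const, Finset.card_powerset, Finset.sum_insert hj,
      Finset.card_insert_of_notMem hj, nsmul_eq_mul]
    push_cast
    ring



lemma rpow_add_le {x y : ℝ} (hx : 0 ≤ x) (hy : 0 ≤ y) {q : ℝ} (hq0 : 0 ≤ q) (hq1 : q ≤ 1) :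
    (x + y) ^ q ≤ x ^ q + y ^ q := by
  lift x to ℝ≥0 using hx
  lift y to ℝ≥0 using hy
  have := NNReal.rpow_add_le_add_rpow x y hq0 hq1
  exact_mod_cast this

lemma rpow_sum_le_sum_rpow {ι : Type*} [DecidableEq ι] (s : Finset ι) (c : ι → ℝ) (hc : ∀ i ∈ s, 0 ≤ c i)
    {q : ℝ} (hq0 : 0 < q) (hq1 : q ≤ 1) :
    (∑ i ∈ s, c i) ^ q ≤ ∑ i ∈ s, c i ^ q := by
  induction s using Finset.induction_on with
  | empty => simp [Real.zero_rpow hq0.ne']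
  | @insert j s hj ih =>
    rw [Finset.sum_insert hj, Finset.sum_insert hj]
    have h1 : 0 ≤ c j := hc j (Finset.mem_insert_self _ _)
    have h2 : ∀ i ∈ s, 0 ≤ c i := fun i hi => hc i (Finset.mem_insert_of_mem hi)
    calc (c j + ∑ i ∈ s, c i) ^ q ≤ c j ^ q + (∑ i ∈ s, c i) ^ q :=
          rpow_add_le h1 (Finset.sum_nonneg h2) hq0.le hq1
      _ ≤ c j ^ q + ∑ i ∈ s, c i ^ q := by
          exact add_le_add_right (ih h2) _

lemma abs_rpow_eq_sq_rpow {p : ℝ} (u : ℝ) : |u| ^ p = (u ^ 2) ^ (p / 2) := by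
  rw [← sq_abs, ← Real.rpow_natCast |u| 2, ← Real.rpow_mul (abs_nonneg u)]
  norm_num
  congr 1
  ring

lemma sum_powerset_rpow_le {p : ℝ} (hp1 : 1 ≤ p) (hp2 : p ≤ 2) (s : Finset ℕ) (b : ℕ → ℝ) :
    ∑ T ∈ s.powerset, |∑ i ∈ s, sg T i * b i| ^ p
      ≤ 2 ^ s.card * ∑ i ∈ s, |b i| ^ p := by
  have hp0 : 0 < p := lt_of_lt_of_le one_pos hp1
  set N : ℝ := (2 : ℝ) ^ s.card with hN
  have hNpos : 0 < N := by positivity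
  set u : Finset ℕ → ℝ := fun T => (∑ i ∈ s, sg T i * b i) ^ 2 with hu
  have hunn : ∀ T, 0 ≤ u T := fun T => sq_nonneg _
  -- concavity step
  have key : ∑ T ∈ s.powerset, (1 / N) * u T ^ (p / 2)
      ≤ (∑ T ∈ s.powerset, (1 / N) * u T) ^ (p / 2) := by
    have harith := Real.arith_mean_le_rpow_mean s.powerset (fun _ => 1 / N)
      (fun T => u T ^ (p / 2)) (fun _ _ => by positivity)
      ?_ (fun T _ => Real.rpow_nonneg (hunn T) _) (p := 2 / p) ?_
    · refine harith.trans_eq ?_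
      have h1 : (1 : ℝ) / (2 / p) = p / 2 := by
        field_simp
      rw [h1]
      congr 1
      refine Finset.sum_congr rfl fun T _ => ?_
      congr 1
      rw [← Real.rpow_mul (hunn T)]
      rw [show p / 2 * (2 / p) = 1 by field_simp]
      exact Real.rpow_one _
    · rw [Finset.sum_const, Finset.card_powerset, nsmul_eq_mul]
      push_cast
      field_simp
      rw [hN]
    · rw [le_div_iff₀ hp0]
      linarith
  have hsum : ∑ T ∈ s.powerset, (1 / N) * u T = ∑ i ∈ s, b i ^ 2 := by
    rw [← Finset.mul_sum, hu]
    rw [sum_powerset_sq s b]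
    field_simp
    rw [hN]
  have hsub : (∑ i ∈ s, b i ^ 2) ^ (p / 2) ≤ ∑ i ∈ s, |b i| ^ p := by
    calc (∑ i ∈ s, b i ^ 2) ^ (p / 2) ≤ ∑ i ∈ s, (b i ^ 2) ^ (p / 2) :=
          rpow_sum_le_sum_rpow s _ (fun i _ => sq_nonneg _) (by linarith) (by linarith)
      _ = ∑ i ∈ s, |b i| ^ p := by
          refine Finset.sum_congr rfl fun i _ => ?_
          rw [abs_rpow_eq_sq_rpow]
  calc ∑ T ∈ s.powerset, |∑ i ∈ s, sg T i * b i| ^ p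
      = N * ∑ T ∈ s.powerset, (1 / N) * u T ^ (p / 2) := by
        rw [Finset.mul_sum]
        refine Finset.sum_congr rfl fun T _ => ?_
        rw [abs_rpow_eq_sq_rpow]
        field_simp
        rfl
    _ ≤ N * (∑ T ∈ s.powerset, (1 / N) * u T) ^ (p / 2) := by
        exact mul_le_mul_of_nonneg_left key hNpos.le
    _ = N * (∑ i ∈ s, b i ^ 2) ^ (p / 2) := by rw [hsum]
    _ ≤ N * ∑ i ∈ s, |b i| ^ p := mul_le_mul_of_nonneg_left hsub hNpos.le

lemma le_sum_powerset_rpow {p : ℝ} (hp0 : 0 < p) {s : Finset ℕ} {j : ℕ} (hj : j ∈ s)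
    (b : ℕ → ℝ) :
    2 ^ s.card * (|b j| ^ p / 2) ≤ ∑ T ∈ s.powerset, |∑ i ∈ s, sg T i * b i| ^ p := by
  rw [powerset_split hj]
  have hpair : ∀ T ∈ (s.erase j).powerset,
      |b j| ^ p ≤ |∑ i ∈ s, sg T i * b i| ^ p + |∑ i ∈ s, sg (insert j T) i * b i| ^ p := by
    intro T hT
    have hTs : T ⊆ s.erase j := Finset.mem_powerset.mp hT
    have hjT : j ∉ T := fun h => (Finset.mem_erase.mp (hTs h)).1 rfl
    have hjs : j ∉ s.erase j := Finset.notMem_erase _ _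
    have hs' : s = insert j (s.erase j) := (Finset.insert_erase hj).symm
    rw [hs', sum_sg_left hjs hjT, sum_sg_both hjs]
    set R : ℝ := ∑ i ∈ s.erase j, sg T i * b i with hR
    have habs : |b j| ≤ max |b j + R| |-b j + R| := by
      have h2 : |(b j + R) - (-b j + R)| ≤ |b j + R| + |-b j + R| := abs_sub _ _
      have h3 : (b j + R) - (-b j + R) = 2 * b j := by ring
      rw [h3, abs_mul] at h2
      have : |(2 : ℝ)| = 2 := by norm_num
      rw [this] at h2
      rcases le_total |b j + R| |-b j + R| with h | h
      · rw [max_eq_right h]; linarith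
      · rw [max_eq_left h]; linarith
    rcases le_total |b j + R| |-b j + R| with h | h
    · rw [max_eq_right h] at habs
      calc |b j| ^ p ≤ |-b j + R| ^ p := Real.rpow_le_rpow (abs_nonneg _) habs hp0.le
        _ ≤ _ := le_add_of_nonneg_left (Real.rpow_nonneg (abs_nonneg _) _)
    · rw [max_eq_left h] at habs
      calc |b j| ^ p ≤ |b j + R| ^ p := Real.rpow_le_rpow (abs_nonneg _) habs hp0.le
        _ ≤ _ := le_add_of_nonneg_right (Real.rpow_nonneg (abs_nonneg _) _)
  calc (2:ℝ) ^ s.card * (|b j| ^ p / 2)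
      = 2 ^ (s.erase j).card * |b j| ^ p := by
        rw [show s.card = (s.erase j).card + 1 from (Finset.card_erase_add_one hj).symm]
        ring
    _ = ∑ _T ∈ (s.erase j).powerset, |b j| ^ p := by
        rw [Finset.sum_const, Finset.card_powerset, nsmul_eq_mul]
        push_cast
        ring
    _ ≤ _ := Finset.sum_le_sum hpair


end UncondTranslatesAux

open UncondTranslatesAux

set_option maxHeartbeats 2000000 in
/-- Let `1 ≤ p ≤ 2`, `f ∈ L_p(ℝ)`, `f ≠ 0`, and let `(f_(λ_i))` be an
unconditional basic sequence of distinct translates of `f` in `L_p(ℝ)`.  Then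
`(f_(λ_i))` is equivalent to the unit vector basis of `ℓ_p`. -/
theorem unconditional_translates_equiv_lp_basis
    (p : ℝ) (hp : 1 ≤ p) (hp2 : p ≤ 2)
    [Fact (1 ≤ ENNReal.ofReal p)]
    (f : Lp ℝ (ENNReal.ofReal p) (volume : Measure ℝ)) (hf : f ≠ 0)
    (lam : ℕ → ℝ) (hlam : Function.Injective lam)
    (F : ℕ → Lp ℝ (ENNReal.ofReal p) (volume : Measure ℝ))
    (hF : ∀ i : ℕ, (F i : ℝ → ℝ) =ᵐ[volume] fun x => f (x - lam i))
    (hunc : ∃ C : ℝ, ∀ (a : ℕ → ℝ) (s : Finset ℕ) (sgn : ℕ → ℝ),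
      (∀ i, sgn i = 1 ∨ sgn i = -1) →
      ‖∑ i ∈ s, (sgn i * a i) • F i‖ ≤ C * ‖∑ i ∈ s, a i • F i‖)
    (hbasic : ∃ K : ℝ, ∀ (a : ℕ → ℝ) (m n : ℕ), m ≤ n →
      ‖∑ i ∈ Finset.range m, a i • F i‖ ≤ K * ‖∑ i ∈ Finset.range n, a i • F i‖) :
    ∃ c C : ℝ, 0 < c ∧ c ≤ C ∧ ∀ (a : ℕ → ℝ) (s : Finset ℕ),
      c * (∑ i ∈ s, |a i| ^ p) ^ (1 / p) ≤ ‖∑ i ∈ s, a i • F i‖ ∧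
      ‖∑ i ∈ s, a i • F i‖ ≤ C * (∑ i ∈ s, |a i| ^ p) ^ (1 / p) := by
  classical
  clear hbasic
  obtain ⟨C, hC⟩ := hunc
  have hp0 : 0 < p := lt_of_lt_of_le one_pos hp
  have hq0 : (ENNReal.ofReal p) ≠ 0 := by
    simp only [ne_eq, ENNReal.ofReal_eq_zero, not_le]
    linarith
  have hqT : (ENNReal.ofReal p) ≠ ∞ := ENNReal.ofReal_ne_top
  have hqp : (ENNReal.ofReal p).toReal = p := ENNReal.toReal_ofReal hp0.le
  have hgm : Measurable (f : ℝ → ℝ) := (Lp.stronglyMeasurable f).measurable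
  set G : ℕ → ℝ → ℝ := fun i x => (f : ℝ → ℝ) (x - lam i) with hGdef
  have hGm : ∀ i, Measurable (G i) := fun i => hgm.comp (measurable_id.sub measurable_const)
  have hrpm : Measurable fun y : ℝ => y ^ p := (Real.continuous_rpow_const hp0.le).measurable
  -- coercion of finite sums
  have hcoe : ∀ (b : ℕ → ℝ) (s : Finset ℕ),
      (⇑(∑ i ∈ s, b i • F i) : ℝ → ℝ) =ᵐ[volume] fun x => ∑ i ∈ s, b i * G i x := by
    intro b s
    induction s using Finset.induction_on with
    | empty =>
      simp only [Finset.sum_empty]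
      filter_upwards [Lp.coeFn_zero (E := ℝ) (p := ENNReal.ofReal p)
        (μ := (volume : Measure ℝ))] with x hx
      simpa using hx
    | @insert j s hj ih =>
      rw [Finset.sum_insert hj]
      filter_upwards [Lp.coeFn_add (b j • F j) (∑ i ∈ s, b i • F i),
        Lp.coeFn_smul (b j) (F j), ih, hF j] with x h1 h2 h3 h4
      rw [Finset.sum_insert hj, h1]
      simp only [Pi.add_apply]
      rw [h2]
      simp only [Pi.smul_apply, smul_eq_mul]
      rw [h3, h4]
  -- measurability of integrands
  have hmS : ∀ (b : ℕ → ℝ) (s : Finset ℕ), Measurable fun x => ∑ i ∈ s, b i * G i x :=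
    fun b s => Finset.measurable_sum s fun i _ => measurable_const.mul (hGm i)
  have hmInt : ∀ (b : ℕ → ℝ) (s : Finset ℕ),
      Measurable fun x => ENNReal.ofReal (|∑ i ∈ s, b i * G i x| ^ p) :=
    fun b s => (hrpm.comp (hmS b s).abs).ennreal_ofReal
  have hofReal : ∀ u : ℝ, ENNReal.ofReal (|u| ^ p) = (‖u‖₊ : ℝ≥0∞) ^ p := by
    intro u
    rw [← enorm_eq_nnnorm, Real.enorm_eq_ofReal_abs, ENNReal.ofReal_rpow_of_nonneg (abs_nonneg u) hp0.le]
  set NB : (ℕ → ℝ) → Finset ℕ → ℝ≥0∞ :=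
    fun b s => ∫⁻ x, ENNReal.ofReal (|∑ i ∈ s, b i * G i x| ^ p) with hNBdef
  have hsnorm : ∀ (b : ℕ → ℝ) (s : Finset ℕ),
      eLpNorm (⇑(∑ i ∈ s, b i • F i)) (ENNReal.ofReal p) volume = (NB b s) ^ (1 / p) := by
    intro b s
    rw [eLpNorm_congr_ae (hcoe b s), eLpNorm_eq_lintegral_rpow_enorm_toReal hq0 hqT, hqp]
    congr 1
    exact lintegral_congr fun x => (hofReal _).symm
  have hNBfin : ∀ (b : ℕ → ℝ) (s : Finset ℕ), NB b s ≠ ∞ := by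
    intro b s
    have h1 : NB b s = (eLpNorm (⇑(∑ i ∈ s, b i • F i)) (ENNReal.ofReal p) volume) ^ p := by
      rw [hsnorm, ← ENNReal.rpow_mul, one_div, inv_mul_cancel₀ hp0.ne', ENNReal.rpow_one]
    rw [h1]
    exact ENNReal.rpow_ne_top_of_nonneg hp0.le (Lp.eLpNorm_ne_top _)
  have hnormp : ∀ (b : ℕ → ℝ) (s : Finset ℕ),
      ‖∑ i ∈ s, b i • F i‖ ^ p = (NB b s).toReal := by
    intro b s
    rw [Lp.norm_def, hsnorm, ENNReal.toReal_rpow, ← ENNReal.rpow_mul, one_div,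
      inv_mul_cancel₀ hp0.ne', ENNReal.rpow_one]
  -- the integral of |f|^p
  set If : ℝ≥0∞ := ∫⁻ x, ENNReal.ofReal (|(f : ℝ → ℝ) x| ^ p) with hIfdef
  have hIf_eq : If = (eLpNorm (f : ℝ → ℝ) (ENNReal.ofReal p) volume) ^ p := by
    rw [eLpNorm_eq_lintegral_rpow_enorm_toReal hq0 hqT, hqp, ← ENNReal.rpow_mul,
      one_div, inv_mul_cancel₀ hp0.ne', ENNReal.rpow_one]
    exact lintegral_congr fun x => hofReal _
  have hIf_fin : If ≠ ∞ := by
    rw [hIf_eq]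
    exact ENNReal.rpow_ne_top_of_nonneg hp0.le (Lp.eLpNorm_ne_top f)
  have hnf_pos : 0 < ‖f‖ := norm_pos_iff.mpr hf
  have hnf : ‖f‖ ^ p = If.toReal := by
    rw [Lp.norm_def, hIf_eq, ENNReal.toReal_rpow]
  have hIf_rpow : If.toReal ^ (1 / p) = ‖f‖ := by
    rw [← hnf, ← Real.rpow_mul (norm_nonneg f), mul_one_div, div_self hp0.ne', Real.rpow_one]
  -- translation invariance
  have htrans : ∀ (c t : ℝ),
      (∫⁻ x, ENNReal.ofReal (|c * (f : ℝ → ℝ) (x - t)| ^ p))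
        = ENNReal.ofReal (|c| ^ p) * If := by
    intro c t
    have h1 : ∀ x : ℝ, ENNReal.ofReal (|c * (f : ℝ → ℝ) (x - t)| ^ p)
        = ENNReal.ofReal (|c| ^ p) * ENNReal.ofReal (|(f : ℝ → ℝ) (x - t)| ^ p) := by
      intro x
      rw [abs_mul, Real.mul_rpow (abs_nonneg _) (abs_nonneg _),
        ENNReal.ofReal_mul (Real.rpow_nonneg (abs_nonneg _) _)]
    simp_rw [h1]
    have hm2 : Measurable fun x : ℝ => ENNReal.ofReal (|(f : ℝ → ℝ) (x - t)| ^ p) :=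
      (hrpm.comp (hgm.comp (measurable_id.sub measurable_const)).abs).ennreal_ofReal
    rw [lintegral_const_mul _ hm2]
    congr 1
    have hm1 : Measurable fun y : ℝ => ENNReal.ofReal (|(f : ℝ → ℝ) y| ^ p) :=
      (hrpm.comp hgm.abs).ennreal_ofReal
    exact (measurePreserving_sub_right volume t).lintegral_comp hm1
  -- norm of each translate
  have hFnorm : ∀ i, ‖F i‖ = ‖f‖ := by
    intro i
    rw [Lp.norm_def, Lp.norm_def]
    congr 1
    rw [eLpNorm_congr_ae (hF i)]
    exact eLpNorm_comp_measurePreserving (Lp.aestronglyMeasurable f)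
      (measurePreserving_sub_right volume (lam i))
  -- C is at least 1
  have hC1 : 1 ≤ C := by
    have h := hC (fun _ => 1) {0} (fun _ => 1) (fun _ => Or.inl rfl)
    simp only [one_mul, Finset.sum_singleton, one_smul] at h
    rw [hFnorm 0] at h
    nlinarith [hnf_pos]
  have hCpos : 0 < C := lt_of_lt_of_le one_pos hC1
  -- ====================== upper bound ======================
  have hupper : ∀ (a : ℕ → ℝ) (s : Finset ℕ), ∃ T,
      ‖∑ i ∈ s, (sg T i * a i) • F i‖ ^ p ≤ (∑ i ∈ s, |a i| ^ p) * If.toReal := by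
    intro a s
    have hA0 : (0:ℝ) ≤ ∑ i ∈ s, |a i| ^ p :=
      Finset.sum_nonneg fun i _ => Real.rpow_nonneg (abs_nonneg _) _
    have hsum : ∑ T ∈ s.powerset, NB (fun i => sg T i * a i) s
        ≤ ENNReal.ofReal ((2 : ℝ) ^ s.card)
          * (ENNReal.ofReal (∑ i ∈ s, |a i| ^ p) * If) := by
      have hunf : ∑ T ∈ s.powerset, NB (fun i => sg T i * a i) s
          = ∫⁻ x, ∑ T ∈ s.powerset,
              ENNReal.ofReal (|∑ i ∈ s, (sg T i * a i) * G i x| ^ p) := by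
        simp only [hNBdef]
        rw [lintegral_finset_sum _ (fun T _ => hmInt (fun i => sg T i * a i) s)]
      rw [hunf]
      have hpt : ∀ x : ℝ,
          ∑ T ∈ s.powerset, ENNReal.ofReal (|∑ i ∈ s, (sg T i * a i) * G i x| ^ p)
            ≤ ENNReal.ofReal ((2 : ℝ) ^ s.card * ∑ i ∈ s, |a i * G i x| ^ p) := by
        intro x
        rw [← ENNReal.ofReal_sum_of_nonneg (fun T _ => Real.rpow_nonneg (abs_nonneg _) _)]
        apply ENNReal.ofReal_le_ofReal
        have h := sum_powerset_rpow_le hp hp2 s (fun i => a i * G i x)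
        simpa only [mul_assoc] using h
      calc ∫⁻ x, ∑ T ∈ s.powerset, ENNReal.ofReal (|∑ i ∈ s, (sg T i * a i) * G i x| ^ p)
          ≤ ∫⁻ x, ENNReal.ofReal ((2 : ℝ) ^ s.card * ∑ i ∈ s, |a i * G i x| ^ p) :=
            lintegral_mono hpt
        _ = ENNReal.ofReal ((2 : ℝ) ^ s.card)
              * ∫⁻ x, ENNReal.ofReal (∑ i ∈ s, |a i * G i x| ^ p) := by
            have h2 : ∀ x : ℝ, ENNReal.ofReal ((2 : ℝ) ^ s.card * ∑ i ∈ s, |a i * G i x| ^ p)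
                = ENNReal.ofReal ((2 : ℝ) ^ s.card)
                  * ENNReal.ofReal (∑ i ∈ s, |a i * G i x| ^ p) := by
              intro x
              rw [ENNReal.ofReal_mul (by positivity : (0:ℝ) ≤ (2:ℝ) ^ s.card)]
            simp_rw [h2]
            have hm3 : Measurable fun x : ℝ => ENNReal.ofReal (∑ i ∈ s, |a i * G i x| ^ p) :=
              (Finset.measurable_sum s fun i _ =>
                hrpm.comp ((measurable_const.mul (hGm i)).abs)).ennreal_ofReal
            rw [lintegral_const_mul _ hm3]
        _ = ENNReal.ofReal ((2 : ℝ) ^ s.card)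
              * (ENNReal.ofReal (∑ i ∈ s, |a i| ^ p) * If) := by
            congr 1
            have h3 : ∀ x : ℝ, ENNReal.ofReal (∑ i ∈ s, |a i * G i x| ^ p)
                = ∑ i ∈ s, ENNReal.ofReal (|a i * G i x| ^ p) :=
              fun x => ENNReal.ofReal_sum_of_nonneg
                (fun i _ => Real.rpow_nonneg (abs_nonneg _) _)
            simp_rw [h3]
            have hm4 : ∀ i ∈ s, Measurable fun x => ENNReal.ofReal (|a i * G i x| ^ p) :=
              fun i _ => (hrpm.comp ((measurable_const.mul (hGm i)).abs)).ennreal_ofReal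
            rw [lintegral_finset_sum _ hm4]
            have h4 : ∀ i ∈ s, (∫⁻ x, ENNReal.ofReal (|a i * G i x| ^ p))
                = ENNReal.ofReal (|a i| ^ p) * If := fun i _ => htrans (a i) (lam i)
            calc ∑ i ∈ s, ∫⁻ x, ENNReal.ofReal (|a i * G i x| ^ p)
                = ∑ i ∈ s, ENNReal.ofReal (|a i| ^ p) * If := Finset.sum_congr rfl h4
              _ = ENNReal.ofReal (∑ i ∈ s, |a i| ^ p) * If := by
                  rw [← Finset.sum_mul, ← ENNReal.ofReal_sum_of_nonneg
                    (fun i _ => Real.rpow_nonneg (abs_nonneg _) _)]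
    -- pass to real numbers
    have hRfin : ENNReal.ofReal ((2 : ℝ) ^ s.card)
        * (ENNReal.ofReal (∑ i ∈ s, |a i| ^ p) * If) ≠ ∞ :=
      ENNReal.mul_ne_top ENNReal.ofReal_ne_top (ENNReal.mul_ne_top ENNReal.ofReal_ne_top hIf_fin)
    have htR := ENNReal.toReal_mono hRfin hsum
    rw [ENNReal.toReal_sum (fun T _ => hNBfin _ _), ENNReal.toReal_mul, ENNReal.toReal_mul,
      ENNReal.toReal_ofReal (by positivity : (0:ℝ) ≤ (2:ℝ) ^ s.card),
      ENNReal.toReal_ofReal hA0] at htR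
    have hex : ∃ T ∈ s.powerset, (NB (fun i => sg T i * a i) s).toReal
        ≤ (∑ i ∈ s, |a i| ^ p) * If.toReal := by
      refine Finset.exists_le_of_sum_le ⟨∅, Finset.empty_mem_powerset s⟩ ?_
      rw [Finset.sum_const, Finset.card_powerset, nsmul_eq_mul]
      calc ∑ T ∈ s.powerset, (NB (fun i => sg T i * a i) s).toReal
          ≤ (2:ℝ) ^ s.card * ((∑ i ∈ s, |a i| ^ p) * If.toReal) := htR
        _ = ((2 ^ s.card : ℕ) : ℝ) * ((∑ i ∈ s, |a i| ^ p) * If.toReal) := by push_cast; ring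
    obtain ⟨T, _, hT⟩ := hex
    refine ⟨T, ?_⟩
    have h5 : ‖∑ i ∈ s, (sg T i * a i) • F i‖ ^ p
        = (NB (fun i => sg T i * a i) s).toReal := hnormp _ _
    rw [h5]
    exact hT
  have main_upper : ∀ (a : ℕ → ℝ) (s : Finset ℕ),
      ‖∑ i ∈ s, a i • F i‖ ≤ (C * ‖f‖) * (∑ i ∈ s, |a i| ^ p) ^ (1 / p) := by
    intro a s
    have hA0 : (0:ℝ) ≤ ∑ i ∈ s, |a i| ^ p :=
      Finset.sum_nonneg fun i _ => Real.rpow_nonneg (abs_nonneg _) _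
    obtain ⟨T, hT⟩ := hupper a s
    have h1 : ‖∑ i ∈ s, a i • F i‖ ≤ C * ‖∑ i ∈ s, (sg T i * a i) • F i‖ := by
      have h2 := hC (fun i => sg T i * a i) s (sg T) (sg_eq_one_or T)
      simp only [← mul_assoc, sg_mul_self, one_mul] at h2
      exact h2
    have hX0 : (0:ℝ) ≤ ‖∑ i ∈ s, (sg T i * a i) • F i‖ := norm_nonneg _
    have h4 : ‖∑ i ∈ s, (sg T i * a i) • F i‖
        ≤ ((∑ i ∈ s, |a i| ^ p) * If.toReal) ^ (1 / p) := by
      have h5 : ‖∑ i ∈ s, (sg T i * a i) • F i‖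
          = (‖∑ i ∈ s, (sg T i * a i) • F i‖ ^ p) ^ (1 / p) := by
        rw [← Real.rpow_mul hX0, mul_one_div, div_self hp0.ne', Real.rpow_one]
      rw [h5]
      exact Real.rpow_le_rpow (Real.rpow_nonneg hX0 _) hT (by positivity)
    have h6 : ((∑ i ∈ s, |a i| ^ p) * If.toReal) ^ (1 / p)
        = (∑ i ∈ s, |a i| ^ p) ^ (1 / p) * ‖f‖ := by
      rw [Real.mul_rpow hA0 ENNReal.toReal_nonneg, hIf_rpow]
    calc ‖∑ i ∈ s, a i • F i‖ ≤ C * ‖∑ i ∈ s, (sg T i * a i) • F i‖ := h1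
      _ ≤ C * ((∑ i ∈ s, |a i| ^ p) * If.toReal) ^ (1 / p) :=
          mul_le_mul_of_nonneg_left h4 hCpos.le
      _ = (C * ‖f‖) * (∑ i ∈ s, |a i| ^ p) ^ (1 / p) := by rw [h6]; ring
  -- ====================== separation ======================
  set Φ : C(ℝ, C(ℝ, ℝ)) :=
    ContinuousMap.curry ⟨fun z : ℝ × ℝ => z.2 - z.1, continuous_snd.sub continuous_fst⟩ with hΦ
  have hΦapp : ∀ t x : ℝ, (Φ t) x = x - t := by
    intro t x
    simp [hΦ]
  have hmpΦ : ∀ t : ℝ, MeasurePreserving (⇑(Φ t)) volume volume := by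
    intro t
    have h1 : ⇑(Φ t) = fun x => x - t := funext fun x => hΦapp t x
    rw [h1]
    exact measurePreserving_sub_right volume t
  set Tr : ℝ → Lp ℝ (ENNReal.ofReal p) volume :=
    fun t => Lp.compMeasurePreserving (⇑(Φ t)) (hmpΦ t) f with hTrdef
  have hTr_coe : ∀ t, ⇑(Tr t) =ᵐ[volume] fun x => (f : ℝ → ℝ) (x - t) := by
    intro t
    refine (Lp.coeFn_compMeasurePreserving f (hmpΦ t)).trans ?_
    refine Filter.EventuallyEq.of_eq (funext fun x => ?_)
    simp only [Function.comp_apply, hΦapp]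
  have hTrF : ∀ i, F i = Tr (lam i) :=
    fun i => Lp.ext ((hF i).trans (hTr_coe (lam i)).symm)
  have hTr_shift : ∀ u t : ℝ, Tr (u + t)
      = Lp.compMeasurePreserving (fun x => x - t) (measurePreserving_sub_right volume t)
          (Tr u) := by
    intro u t
    apply Lp.ext
    have h1 := Lp.coeFn_compMeasurePreserving (Tr u) (measurePreserving_sub_right volume t)
    have h2 : (⇑(Tr u) ∘ fun x : ℝ => x - t)
        =ᵐ[volume] fun x => (f : ℝ → ℝ) (x - t - u) :=
      (measurePreserving_sub_right volume t).quasiMeasurePreserving.ae_eq (hTr_coe u)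
    refine (hTr_coe (u + t)).trans (Filter.EventuallyEq.trans ?_ (h1.trans h2).symm)
    refine Filter.EventuallyEq.of_eq (funext fun x => ?_)
    have h3 : x - (u + t) = x - t - u := by ring
    rw [h3]
  have hdist_eq : ∀ u t : ℝ, dist (Tr (u + t)) (Tr t) = dist (Tr u) (Tr 0) := by
    intro u t
    have h0 : Tr t = Lp.compMeasurePreserving (fun x => x - t)
        (measurePreserving_sub_right volume t) (Tr 0) := by
      have h := hTr_shift 0 t
      rwa [zero_add] at h
    rw [hTr_shift u t, h0]
    exact (Lp.isometry_compMeasurePreserving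
      (measurePreserving_sub_right volume t)).dist_eq _ _
  set m0 : ℝ := 2 * ‖f‖ / (C + 1) with hm0def
  have hm0pos : 0 < m0 := div_pos (by linarith) (by linarith)
  have hpair : ∀ i j, i ≠ j → m0 ≤ ‖F i - F j‖ := by
    intro i j hij
    set sg2 : ℕ → ℝ := fun k => if k = j then -1 else 1 with hsg2
    have hsg2or : ∀ k, sg2 k = 1 ∨ sg2 k = -1 := by
      intro k
      simp only [hsg2]
      split <;> simp
    have h1 := hC sg2 {i, j} sg2 hsg2or
    have e1 : (∑ k ∈ ({i, j} : Finset ℕ), (sg2 k * sg2 k) • F k) = F i + F j := by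
      rw [Finset.sum_pair hij]
      have hsq : ∀ k, sg2 k * sg2 k = 1 := by
        intro k
        rcases hsg2or k with h | h <;> rw [h] <;> norm_num
      rw [hsq i, hsq j, one_smul, one_smul]
    have e2 : (∑ k ∈ ({i, j} : Finset ℕ), sg2 k • F k) = F i - F j := by
      rw [Finset.sum_pair hij]
      have hi : sg2 i = 1 := if_neg hij
      have hjj : sg2 j = -1 := if_pos rfl
      rw [hi, hjj, one_smul, neg_one_smul, ← sub_eq_add_neg]
    rw [e1, e2] at h1
    have h2 : 2 * ‖f‖ ≤ ‖F i + F j‖ + ‖F i - F j‖ := by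
      have h3 : (F i + F j) + (F i - F j) = F i + F i := by abel
      calc 2 * ‖f‖ = ‖F i + F i‖ := by
            rw [← two_smul ℝ (F i), norm_smul, hFnorm i]
            norm_num
        _ ≤ ‖F i + F j‖ + ‖F i - F j‖ := by rw [← h3]; exact norm_add_le _ _
    have h4 : 2 * ‖f‖ ≤ (C + 1) * ‖F i - F j‖ := by nlinarith
    rw [hm0def, div_le_iff₀ (by linarith)]
    linarith
  have hTr_cont : Filter.Tendsto Tr (nhds 0) (nhds (Tr 0)) := by
    exact Filter.Tendsto.compMeasurePreservingLp (f := fun _ : ℝ => f) (f₀ := f)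
      (g := fun t => Φ t) (g₀ := Φ 0) tendsto_const_nhds (Φ.continuous.tendsto 0)
      hmpΦ (hmpΦ 0) hqT
  obtain ⟨δ, hδpos, hδ⟩ := Metric.tendsto_nhds_nhds.mp hTr_cont m0 hm0pos
  have hsep : ∀ i j, i ≠ j → δ ≤ |lam i - lam j| := by
    intro i j hij
    by_contra hcon
    push_neg at hcon
    have h1 : dist (lam i - lam j) 0 < δ := by
      rw [Real.dist_eq, sub_zero]
      exact hcon
    have h2 := hδ h1
    have h3 : dist (Tr (lam i - lam j)) (Tr 0) = ‖F i - F j‖ := by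
      rw [← hdist_eq (lam i - lam j) (lam j), sub_add_cancel, ← hTrF i, ← hTrF j,
        dist_eq_norm]
    rw [h3] at h2
    exact absurd h2 (not_lt.mpr (hpair i j hij))
  -- ====================== the set E0 ======================
  obtain ⟨α, hαpos, hApos⟩ : ∃ α : ℝ, 0 < α ∧ 0 < volume {x | α < |(f : ℝ → ℝ) x|} := by
    by_contra hcon
    push_neg at hcon
    have hnull : ∀ n : ℕ, volume {x : ℝ | 1 / (n + 1 : ℝ) < |(f : ℝ → ℝ) x|} = 0 := by
      intro n
      exact le_antisymm (hcon _ (by positivity)) zero_le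
    have hsub : {x : ℝ | (f : ℝ → ℝ) x ≠ 0}
        ⊆ ⋃ n : ℕ, {x : ℝ | 1 / (n + 1 : ℝ) < |(f : ℝ → ℝ) x|} := by
      intro x hx
      obtain ⟨n, hn⟩ := exists_nat_one_div_lt (abs_pos.mpr hx)
      exact Set.mem_iUnion.mpr ⟨n, hn⟩
    have h0 : volume {x : ℝ | (f : ℝ → ℝ) x ≠ 0} = 0 :=
      measure_mono_null hsub (measure_iUnion_null fun n => hnull n)
    have hg0 : (f : ℝ → ℝ) =ᵐ[volume] 0 := by
      rw [Filter.EventuallyEq, ae_iff]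
      simpa using h0
    have hnorm0 : ‖f‖ = 0 := by
      rw [Lp.norm_def, eLpNorm_congr_ae hg0, eLpNorm_zero, ENNReal.toReal_zero]
    exact absurd hnorm0 (ne_of_gt hnf_pos)
  have hAmeas : MeasurableSet {x : ℝ | α < |(f : ℝ → ℝ) x|} :=
    measurableSet_lt measurable_const hgm.abs
  have hhpos : 0 < δ / 2 := by positivity
  have hcover : {x : ℝ | α < |(f : ℝ → ℝ) x|}
      ⊆ ⋃ k : ℤ, ({x : ℝ | α < |(f : ℝ → ℝ) x|}
          ∩ Set.Ico (k * (δ / 2)) (k * (δ / 2) + δ / 2)) := by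
    intro x hx
    refine Set.mem_iUnion.mpr ⟨⌊x / (δ / 2)⌋, hx, ?_, ?_⟩
    · calc (⌊x / (δ / 2)⌋ : ℝ) * (δ / 2) ≤ x / (δ / 2) * (δ / 2) :=
          mul_le_mul_of_nonneg_right (Int.floor_le _) hhpos.le
        _ = x := div_mul_cancel₀ x hhpos.ne'
    · have h1 : x / (δ / 2) < ⌊x / (δ / 2)⌋ + 1 := Int.lt_floor_add_one _
      calc x = x / (δ / 2) * (δ / 2) := (div_mul_cancel₀ x hhpos.ne').symm
        _ < ((⌊x / (δ / 2)⌋ : ℝ) + 1) * (δ / 2) := mul_lt_mul_of_pos_right h1 hhpos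
        _ = (⌊x / (δ / 2)⌋ : ℝ) * (δ / 2) + δ / 2 := by ring
  obtain ⟨k0, hk0⟩ : ∃ k : ℤ, 0 < volume ({x : ℝ | α < |(f : ℝ → ℝ) x|}
      ∩ Set.Ico (k * (δ / 2)) (k * (δ / 2) + δ / 2)) := by
    by_contra hcon
    push_neg at hcon
    have h0 : volume {x : ℝ | α < |(f : ℝ → ℝ) x|} = 0 :=
      measure_mono_null hcover
        (measure_iUnion_null fun k => le_antisymm (hcon k) zero_le)
    exact absurd h0 (ne_of_gt hApos)
  set E0 : Set ℝ := {x : ℝ | α < |(f : ℝ → ℝ) x|}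
      ∩ Set.Ico ((k0 : ℝ) * (δ / 2)) ((k0 : ℝ) * (δ / 2) + δ / 2) with hE0def
  have hE0meas : MeasurableSet E0 := hAmeas.inter measurableSet_Ico
  have hE0fin : volume E0 < ⊤ :=
    lt_of_le_of_lt (measure_mono Set.inter_subset_right)
      (by rw [Real.volume_Ico]; exact ENNReal.ofReal_lt_top)
  set m : ℝ := (volume E0).toReal with hmdef
  have hmpos : 0 < m := ENNReal.toReal_pos (ne_of_gt hk0) (ne_of_lt hE0fin)
  set Ej : ℕ → Set ℝ := fun j => (fun x : ℝ => x - lam j) ⁻¹' E0 with hEjdef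
  have hmsub : ∀ j : ℕ, Measurable fun x : ℝ => x - lam j :=
    fun j => measurable_id.sub measurable_const
  have hEjmeas : ∀ j, MeasurableSet (Ej j) := fun j => (hmsub j) hE0meas
  have hEjvol : ∀ j, volume (Ej j) = volume E0 := fun j =>
    (measurePreserving_sub_right volume (lam j)).measure_preimage
      hE0meas.nullMeasurableSet
  have hEjdisj : ∀ i j : ℕ, i ≠ j → Disjoint (Ej i) (Ej j) := by
    intro i j hij
    rw [Set.disjoint_left]
    rintro x hxi hxj
    have h1 := hxi.2
    have h2 := hxj.2
    have h3 : |lam i - lam j| < δ / 2 := by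
      rw [abs_sub_lt_iff]
      constructor
      · have := h1.1
        have := h2.2
        have h4 : lam i - lam j = (x - lam j) - (x - lam i) := by ring
        rw [h4]
        linarith [h1.1, h2.2]
      · have h4 : lam j - lam i = (x - lam i) - (x - lam j) := by ring
        rw [h4]
        linarith [h2.1, h1.2]
    have h5 := hsep i j hij
    linarith
  -- ====================== lower bound ======================
  have hlower : ∀ (a : ℕ → ℝ) (s : Finset ℕ), ∃ T,
      (∑ i ∈ s, |a i| ^ p) * (α ^ p / 2 * m) ≤ ‖∑ i ∈ s, (sg T i * a i) • F i‖ ^ p := by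
    intro a s
    have hA0 : (0:ℝ) ≤ ∑ i ∈ s, |a i| ^ p :=
      Finset.sum_nonneg fun i _ => Real.rpow_nonneg (abs_nonneg _) _
    set H : ℝ → ℝ≥0∞ := fun x => ∑ T ∈ s.powerset,
        ENNReal.ofReal (|∑ i ∈ s, (sg T i * a i) * G i x| ^ p) with hHdef
    have hHmeas : Measurable H :=
      Finset.measurable_sum _ fun T _ => hmInt (fun i => sg T i * a i) s
    have hHint : ∫⁻ x, H x = ∑ T ∈ s.powerset, NB (fun i => sg T i * a i) s := by
      simp only [hHdef, hNBdef]
      rw [lintegral_finset_sum _ (fun T _ => hmInt (fun i => sg T i * a i) s)]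
    have hstep : ∀ j ∈ s,
        ENNReal.ofReal ((2:ℝ) ^ s.card * (|a j| ^ p * (α ^ p / 2))) * volume E0
          ≤ ∫⁻ x in Ej j, H x := by
      intro j hj
      have hpt : ∀ x ∈ Ej j,
          ENNReal.ofReal ((2:ℝ) ^ s.card * (|a j| ^ p * (α ^ p / 2))) ≤ H x := by
        intro x hx
        have hGx : α ≤ |G j x| := le_of_lt hx.1
        have hb := le_sum_powerset_rpow hp0 hj (fun i => a i * G i x)
        have h1 : (2:ℝ) ^ s.card * (|a j| ^ p * (α ^ p / 2))
            ≤ 2 ^ s.card * (|a j * G j x| ^ p / 2) := by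
          have h2 : |a j| ^ p * α ^ p ≤ |a j * G j x| ^ p := by
            rw [abs_mul, Real.mul_rpow (abs_nonneg _) (abs_nonneg _)]
            exact mul_le_mul_of_nonneg_left
              (Real.rpow_le_rpow hαpos.le hGx hp0.le)
              (Real.rpow_nonneg (abs_nonneg _) _)
          have h3 : (0:ℝ) ≤ (2:ℝ) ^ s.card := by positivity
          have h4 : |a j| ^ p * (α ^ p / 2) = (|a j| ^ p * α ^ p) / 2 := by ring
          rw [h4]
          have h5 : (|a j| ^ p * α ^ p) / 2 ≤ |a j * G j x| ^ p / 2 := by linarith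
          exact mul_le_mul_of_nonneg_left h5 h3
        calc ENNReal.ofReal ((2:ℝ) ^ s.card * (|a j| ^ p * (α ^ p / 2)))
            ≤ ENNReal.ofReal ((2:ℝ) ^ s.card * (|a j * G j x| ^ p / 2)) :=
              ENNReal.ofReal_le_ofReal h1
          _ ≤ ENNReal.ofReal (∑ T ∈ s.powerset, |∑ i ∈ s, sg T i * (a i * G i x)| ^ p) :=
              ENNReal.ofReal_le_ofReal hb
          _ = H x := by
              rw [ENNReal.ofReal_sum_of_nonneg
                (fun T _ => Real.rpow_nonneg (abs_nonneg _) _)]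
              simp only [hHdef, mul_assoc]
      calc ENNReal.ofReal ((2:ℝ) ^ s.card * (|a j| ^ p * (α ^ p / 2))) * volume E0
          = ENNReal.ofReal ((2:ℝ) ^ s.card * (|a j| ^ p * (α ^ p / 2))) * volume (Ej j) := by
            rw [hEjvol]
        _ = ∫⁻ _x in Ej j, ENNReal.ofReal ((2:ℝ) ^ s.card * (|a j| ^ p * (α ^ p / 2))) :=
            (setLIntegral_const _ _).symm
        _ ≤ ∫⁻ x in Ej j, H x := setLIntegral_mono hHmeas hpt
    have hsum : ENNReal.ofReal ((2:ℝ) ^ s.card * ((∑ i ∈ s, |a i| ^ p) * (α ^ p / 2)))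
        * volume E0 ≤ ∑ T ∈ s.powerset, NB (fun i => sg T i * a i) s := by
      rw [← hHint]
      calc ENNReal.ofReal ((2:ℝ) ^ s.card * ((∑ i ∈ s, |a i| ^ p) * (α ^ p / 2))) * volume E0
          = ∑ j ∈ s, ENNReal.ofReal ((2:ℝ) ^ s.card * (|a j| ^ p * (α ^ p / 2)))
              * volume E0 := by
            rw [← Finset.sum_mul]
            congr 1
            rw [← ENNReal.ofReal_sum_of_nonneg (fun j _ => by positivity)]
            congr 1
            rw [← Finset.mul_sum, ← Finset.sum_mul]
        _ ≤ ∑ j ∈ s, ∫⁻ x in Ej j, H x := Finset.sum_le_sum hstep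
        _ = ∫⁻ x in ⋃ j ∈ s, Ej j, H x :=
            (lintegral_biUnion_finset
              (fun i _ j _ hij => hEjdisj i j hij) (fun j _ => hEjmeas j) H).symm
        _ ≤ ∫⁻ x, H x := setLIntegral_le_lintegral _ _
    -- pass to real numbers
    have hSumFin : (∑ T ∈ s.powerset, NB (fun i => sg T i * a i) s) ≠ ∞ := by
      rw [← lt_top_iff_ne_top]
      exact ENNReal.sum_lt_top.mpr fun T _ => lt_top_iff_ne_top.mpr (hNBfin _ _)
    have htR := ENNReal.toReal_mono hSumFin hsum
    rw [ENNReal.toReal_sum (fun T _ => hNBfin _ _)] at htR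
    rw [ENNReal.toReal_mul, ENNReal.toReal_ofReal (by positivity)] at htR
    have hex : ∃ T ∈ s.powerset,
        (∑ i ∈ s, |a i| ^ p) * (α ^ p / 2 * m)
          ≤ (NB (fun i => sg T i * a i) s).toReal := by
      refine Finset.exists_le_of_sum_le ⟨∅, Finset.empty_mem_powerset s⟩ ?_
      rw [Finset.sum_const, Finset.card_powerset, nsmul_eq_mul]
      calc ((2 ^ s.card : ℕ) : ℝ) * ((∑ i ∈ s, |a i| ^ p) * (α ^ p / 2 * m))
          = (2:ℝ) ^ s.card * ((∑ i ∈ s, |a i| ^ p) * (α ^ p / 2)) * m := by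
            push_cast; ring
        _ ≤ ∑ T ∈ s.powerset, (NB (fun i => sg T i * a i) s).toReal := htR
    obtain ⟨T, _, hT⟩ := hex
    refine ⟨T, ?_⟩
    have h5 : ‖∑ i ∈ s, (sg T i * a i) • F i‖ ^ p
        = (NB (fun i => sg T i * a i) s).toReal := hnormp _ _
    rw [h5]
    exact hT
  have hκpos : 0 < α ^ p / 2 * m := by positivity
  have main_lower : ∀ (a : ℕ → ℝ) (s : Finset ℕ),
      ((α ^ p / 2 * m) ^ (1 / p) / C) * (∑ i ∈ s, |a i| ^ p) ^ (1 / p)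
        ≤ ‖∑ i ∈ s, a i • F i‖ := by
    intro a s
    have hA0 : (0:ℝ) ≤ ∑ i ∈ s, |a i| ^ p :=
      Finset.sum_nonneg fun i _ => Real.rpow_nonneg (abs_nonneg _) _
    obtain ⟨T, hT⟩ := hlower a s
    have h1 := hC a s (sg T) (sg_eq_one_or T)
    have hX0 : (0:ℝ) ≤ ‖∑ i ∈ s, (sg T i * a i) • F i‖ := norm_nonneg _
    have h2 : ((∑ i ∈ s, |a i| ^ p) * (α ^ p / 2 * m)) ^ (1 / p)
        ≤ ‖∑ i ∈ s, (sg T i * a i) • F i‖ := by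
      have h3 := Real.rpow_le_rpow (by positivity) hT (by positivity : (0:ℝ) ≤ 1 / p)
      have h4 : (‖∑ i ∈ s, (sg T i * a i) • F i‖ ^ p) ^ (1 / p)
          = ‖∑ i ∈ s, (sg T i * a i) • F i‖ := by
        rw [← Real.rpow_mul hX0, mul_one_div, div_self hp0.ne', Real.rpow_one]
      rwa [h4] at h3
    have h5 : ((∑ i ∈ s, |a i| ^ p) * (α ^ p / 2 * m)) ^ (1 / p)
        = (∑ i ∈ s, |a i| ^ p) ^ (1 / p) * (α ^ p / 2 * m) ^ (1 / p) :=
      Real.mul_rpow hA0 hκpos.le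
    have h6 : (∑ i ∈ s, |a i| ^ p) ^ (1 / p) * (α ^ p / 2 * m) ^ (1 / p)
        ≤ C * ‖∑ i ∈ s, a i • F i‖ := by
      calc (∑ i ∈ s, |a i| ^ p) ^ (1 / p) * (α ^ p / 2 * m) ^ (1 / p)
          = ((∑ i ∈ s, |a i| ^ p) * (α ^ p / 2 * m)) ^ (1 / p) := h5.symm
        _ ≤ ‖∑ i ∈ s, (sg T i * a i) • F i‖ := h2
        _ ≤ C * ‖∑ i ∈ s, a i • F i‖ := h1
    calc ((α ^ p / 2 * m) ^ (1 / p) / C) * (∑ i ∈ s, |a i| ^ p) ^ (1 / p)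
        = ((∑ i ∈ s, |a i| ^ p) ^ (1 / p) * (α ^ p / 2 * m) ^ (1 / p)) / C := by ring
      _ ≤ (C * ‖∑ i ∈ s, a i • F i‖) / C := by
          exact div_le_div_of_nonneg_right h6 hCpos.le
      _ = ‖∑ i ∈ s, a i • F i‖ := by field_simp
  -- ====================== conclusion ======================
  refine ⟨(α ^ p / 2 * m) ^ (1 / p) / C, C * ‖f‖,
    div_pos (Real.rpow_pos_of_pos hκpos _) hCpos, ?_,
    fun a s => ⟨main_lower a s, main_upper a s⟩⟩
  have h1 := main_lower (fun _ => 1) {0}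
  have h2 := main_upper (fun _ => 1) {0}
  simp only [Finset.sum_singleton, abs_one, Real.one_rpow, one_smul, mul_one] at h1 h2
  linarith
end

section
/- Let 1 ≤ p < ∞ with p ≠ 2, and let X be a closed subspace of L_p(ℝ) containing no isomorphic copy of ℓ_p, i.e. there are no constants 0 < c ≤ C and a linear map T : ℓ_p → L_p(ℝ) with range contained in X such that c‖x‖ ≤ ‖Tx‖ ≤ C‖x‖ for all x ∈ ℓ_p. Then there exist c > 0 and K < ∞ such that ‖f‖_p ≤ K ‖f · χ_{[−c,c]}‖_p for all f ∈ X; that is, f ↦ ‖f restricted to [−c,c]‖_p is an equivalent norm on X. -/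
open MeasureTheory ENNReal Filter Topology


private lemma Lp_coeFn_sum {α E : Type*} [MeasurableSpace α] {μ : Measure α}
    [NormedAddCommGroup E] {p : ℝ≥0∞} (f : ℕ → Lp E p μ) (F : Finset ℕ) :
    ⇑(∑ k ∈ F, f k) =ᵐ[μ] fun t => ∑ k ∈ F, f k t := by
  classical
  induction F using Finset.induction_on with
  | empty => simp only [Finset.sum_empty]; exact Lp.coeFn_zero E p μ
  | insert j F' hj ih =>
      rw [Finset.sum_insert hj]
      filter_upwards [Lp.coeFn_add (f j) (∑ k ∈ F', f k), ih] with t h1 h2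
      rw [h1, Pi.add_apply, h2, Finset.sum_insert hj]

private lemma nnnorm_sum_rpow {q : ℝ} (hq : 0 < q) (F : Finset ℕ) (y : ℕ → ℝ)
    (hd : ∀ i ∈ F, ∀ j ∈ F, y i ≠ 0 → y j ≠ 0 → i = j) :
    (‖∑ k ∈ F, y k‖₊ : ℝ≥0∞) ^ q = ∑ k ∈ F, (‖y k‖₊ : ℝ≥0∞) ^ q := by
  by_cases h : ∃ j ∈ F, y j ≠ 0
  · obtain ⟨j, hjF, hj⟩ := h
    rw [Finset.sum_eq_single_of_mem j hjF (fun i hi hij => by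
        by_contra hyi; exact hij (hd i hi j hjF hyi hj)),
      Finset.sum_eq_single_of_mem j hjF (fun i hi hij => by
        have hyi : y i = 0 := by by_contra hyi; exact hij (hd i hi j hjF hyi hj)
        simp [hyi, ENNReal.zero_rpow_of_pos hq])]
  · push_neg at h
    rw [Finset.sum_eq_zero h, Finset.sum_eq_zero (fun i hi => by
      simp [h i hi, ENNReal.zero_rpow_of_pos hq])]
    simp [ENNReal.zero_rpow_of_pos hq]

private lemma lintegral_sum_disjoint {q : ℝ} (hq : 0 < q) (A : ℕ → Set ℝ)
    (hd : ∀ i j, i ≠ j → Disjoint (A i) (A j)) (v : ℕ → ℝ → ℝ)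
    (hm : ∀ k, Measurable (v k)) (hv : ∀ k, ∀ t, t ∉ A k → v k t = 0) (F : Finset ℕ) :
    ∫⁻ t, (‖∑ k ∈ F, v k t‖₊ : ℝ≥0∞) ^ q ∂(volume : Measure ℝ)
      = ∑ k ∈ F, ∫⁻ t, (‖v k t‖₊ : ℝ≥0∞) ^ q ∂(volume : Measure ℝ) := by
  rw [← lintegral_finset_sum _ (fun k _ => by
    have : Measurable fun t => (‖v k t‖₊ : ℝ≥0∞) := (hm k).nnnorm.coe_nnreal_ennreal
    exact this.pow_const q)]
  refine lintegral_congr fun t => ?_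
  refine nnnorm_sum_rpow hq F (fun k => v k t) ?_
  intro i hi j hj hyi hyj
  by_contra hij
  have hti : t ∈ A i := by by_contra ht; exact hyi (hv i t ht)
  have htj : t ∈ A j := by by_contra ht; exact hyj (hv j t ht)
  exact Set.disjoint_left.mp (hd i j hij) hti htj

private lemma eLpNorm_indicator_mono {p : ℝ≥0∞} (G : ℝ → ℝ) {s t : Set ℝ} (hst : s ⊆ t) :
    eLpNorm (s.indicator G) p (volume : Measure ℝ)
      ≤ eLpNorm (t.indicator G) p (volume : Measure ℝ) := by
  refine eLpNorm_mono fun x => ?_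
  by_cases hx : x ∈ s
  · rw [Set.indicator_of_mem hx, Set.indicator_of_mem (hst hx)]
  · rw [Set.indicator_of_notMem hx]
    simp


private lemma exists_tail_small (p : ℝ≥0∞) (hp0 : p ≠ 0) (hp' : p ≠ ∞)
    (G : ℝ → ℝ) (hG : MemLp G p (volume : Measure ℝ)) {ε : ℝ} (hε : 0 < ε) (B : ℝ) :
    ∃ b : ℝ, B ≤ b ∧
      eLpNorm ((Set.Icc (-b) b)ᶜ.indicator G) p (volume : Measure ℝ) < ENNReal.ofReal ε := by
  set q : ℝ := p.toReal with hqdef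
  have hq0 : 0 < q := ENNReal.toReal_pos hp0 hp'
  obtain ⟨G', hG'meas, hGG'⟩ :
      ∃ G' : ℝ → ℝ, StronglyMeasurable G' ∧ G =ᵐ[volume] G' :=
    ⟨hG.1.mk G, hG.1.stronglyMeasurable_mk, hG.1.ae_eq_mk⟩
  have hG'mem : MemLp G' p (volume : Measure ℝ) := hG.ae_eq hGG'
  set φ : ℝ → ℝ≥0∞ := fun t => (‖G' t‖₊ : ℝ≥0∞) ^ q with hφdef
  have hφmeas : Measurable φ :=
    (hG'meas.measurable.nnnorm.coe_nnreal_ennreal).pow_const q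
  have hind : ∀ (s : Set ℝ) (t : ℝ), (‖s.indicator G' t‖₊ : ℝ≥0∞) ^ q = s.indicator φ t := by
    intro s t
    by_cases ht : t ∈ s
    · simp [Set.indicator_of_mem ht, hφdef]
    · simp [Set.indicator_of_notMem ht, ENNReal.zero_rpow_of_pos hq0]
  set I : ℕ → ℝ≥0∞ := fun n => ∫⁻ t, (Set.Icc (-(n : ℝ)) n).indicator φ t with hIdef
  set J : ℕ → ℝ≥0∞ := fun n => ∫⁻ t, (Set.Icc (-(n : ℝ)) n)ᶜ.indicator φ t with hJdef
  set T : ℝ≥0∞ := ∫⁻ t, φ t with hTdef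
  have hsub : ∀ m n : ℕ, m ≤ n → Set.Icc (-(m : ℝ)) m ⊆ Set.Icc (-(n : ℝ)) n := by
    intro m n hmn
    exact Set.Icc_subset_Icc (neg_le_neg (Nat.cast_le.mpr hmn)) (Nat.cast_le.mpr hmn)
  have hImono : Monotone fun n : ℕ => (Set.Icc (-(n : ℝ)) n).indicator φ := by
    intro m n hmn t
    dsimp only
    by_cases ht : t ∈ Set.Icc (-(m : ℝ)) m
    · rw [Set.indicator_of_mem ht, Set.indicator_of_mem (hsub m n hmn ht)]
    · rw [Set.indicator_of_notMem ht]; exact zero_le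
  have hIsup : ∀ t, (⨆ n : ℕ, (Set.Icc (-(n : ℝ)) n).indicator φ t) = φ t := by
    intro t
    refine le_antisymm (iSup_le fun n => Set.indicator_le_self _ _ t) ?_
    have ht : t ∈ Set.Icc (-(⌈|t|⌉₊ : ℝ)) (⌈|t|⌉₊ : ℝ) := by
      constructor
      · linarith [Nat.le_ceil |t|, neg_abs_le t, abs_nonneg t]
      · linarith [Nat.le_ceil |t|, le_abs_self t]
    calc φ t = (Set.Icc (-(⌈|t|⌉₊ : ℝ)) (⌈|t|⌉₊ : ℝ)).indicator φ t :=
          (Set.indicator_of_mem ht φ).symm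
      _ ≤ _ := le_iSup (fun n : ℕ => (Set.Icc (-(n : ℝ)) n).indicator φ t) ⌈|t|⌉₊
  have hIT : Tendsto I atTop (𝓝 T) := by
    have h1 : (⨆ n, I n) = T := by
      rw [hIdef, hTdef, ← lintegral_iSup (fun n => hφmeas.indicator measurableSet_Icc) hImono]
      exact lintegral_congr fun t => hIsup t
    have := tendsto_atTop_iSup (fun m n hmn => lintegral_mono (hImono hmn) : Monotone I)
    rwa [h1] at this
  have hTne : T ≠ ∞ := by
    have h1 : eLpNorm G' p volume = T ^ (1 / q) :=
      eLpNorm_eq_lintegral_rpow_enorm_toReal hp0 hp'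
    intro hT
    exact hG'mem.eLpNorm_ne_top
      (by rw [h1, hT, ENNReal.top_rpow_of_pos (by positivity)])
  have hIJ : ∀ n, I n + J n = T := by
    intro n
    rw [hIdef, hJdef, hTdef, ← lintegral_add_left (hφmeas.indicator measurableSet_Icc)]
    exact lintegral_congr fun t =>
      congrFun (Set.indicator_self_add_compl (Set.Icc (-(n : ℝ)) n) φ) t
  have hJeq : ∀ n, J n = T - I n := by
    intro n
    have hIne : I n ≠ ∞ := fun h => hTne (by rw [← hIJ n, h, top_add])
    exact ENNReal.eq_sub_of_add_eq hIne (by rw [add_comm]; exact hIJ n)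
  have hJ0 : Tendsto J atTop (𝓝 0) := by
    have h2 : Tendsto (fun n => T - I n) atTop (𝓝 (T - T)) :=
      ENNReal.Tendsto.sub tendsto_const_nhds hIT (Or.inl hTne)
    rw [tsub_self] at h2
    exact h2.congr fun n => (hJeq n).symm
  have hεq : (0 : ℝ≥0∞) < ENNReal.ofReal ε ^ q :=
    ENNReal.rpow_pos (by simp [hε]) ENNReal.ofReal_ne_top
  obtain ⟨n, hn1, hn2⟩ := ((hJ0.eventually_lt_const hεq).and (eventually_ge_atTop ⌈B⌉₊)).exists
  refine ⟨n, ?_, ?_⟩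
  · calc B ≤ (⌈B⌉₊ : ℝ) := Nat.le_ceil B
      _ ≤ n := Nat.cast_le.mpr hn2
  · have hcongr : eLpNorm ((Set.Icc (-(n : ℝ)) n)ᶜ.indicator G) p volume
        = eLpNorm ((Set.Icc (-(n : ℝ)) n)ᶜ.indicator G') p volume := by
      refine eLpNorm_congr_ae ?_
      filter_upwards [hGG'] with t ht
      simp only [Set.indicator_apply, ht]
    rw [hcongr, eLpNorm_eq_lintegral_rpow_enorm_toReal hp0 hp']; simp only [enorm_eq_nnnorm]
    have hlint : ∫⁻ t, (‖(Set.Icc (-(n : ℝ)) n)ᶜ.indicator G' t‖₊ : ℝ≥0∞) ^ q ∂volume = J n :=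
      lintegral_congr fun t => hind _ t
    rw [show p.toReal = q from rfl, hlint]
    calc (J n) ^ (1 / q) < (ENNReal.ofReal ε ^ q) ^ (1 / q) :=
        ENNReal.rpow_lt_rpow hn1 (by positivity)
      _ = ENNReal.ofReal ε := by
        rw [← ENNReal.rpow_mul, mul_one_div_cancel hq0.ne', ENNReal.rpow_one]

set_option maxHeartbeats 2000000 in
set_option synthInstance.maxHeartbeats 1000000 in
/-- Let `1 ≤ p < ∞`, `p ≠ 2`, and let `X` be a closed subspace of `L_p(ℝ)`
containing no isomorphic copy of `ℓ_p`.  Then for some `c > 0` the restriction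
norm `f ↦ ‖f·χ_[−c,c]‖_p` is an equivalent norm on `X`. -/
theorem restriction_equivalent_norm_of_no_lp_copy
    (p : ℝ≥0∞) [Fact (1 ≤ p)] (hp : 1 ≤ p) (hp' : p ≠ ∞) (hp2 : p ≠ 2)
    (X : Submodule ℝ (Lp ℝ p (volume : Measure ℝ)))
    (hX : IsClosed (X : Set (Lp ℝ p (volume : Measure ℝ))))
    (hnolp : ¬ ∃ (c C : ℝ), 0 < c ∧ c ≤ C ∧
      ∃ T : lp (fun _ : ℕ => ℝ) p →ₗ[ℝ] Lp ℝ p (volume : Measure ℝ),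
        (∀ x, T x ∈ X) ∧ ∀ x, c * ‖x‖ ≤ ‖T x‖ ∧ ‖T x‖ ≤ C * ‖x‖) :
    ∃ c > (0 : ℝ), ∃ K : ℝ, ∀ f ∈ X,
      ‖f‖ ≤ K * (eLpNorm ((Set.Icc (-c) c).indicator (f : ℝ → ℝ)) p volume).toReal := by
  classical
  by_contra hcon
  push_neg at hcon
  have hp0 : p ≠ 0 := by
    intro h; rw [h] at hp; exact (by norm_num : ¬ (1 : ℝ≥0∞) ≤ 0) hp
  set q : ℝ := p.toReal with hqdef
  have hq0 : 0 < q := ENNReal.toReal_pos hp0 hp'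
  have hq1 : 1 ≤ q := by
    rw [← ENNReal.toReal_one]
    exact ENNReal.toReal_mono hp' hp
  set e : ℕ → ℝ := fun k => (1 / 8 : ℝ) * (1 / 2) ^ (k + 1) with hedef
  have he : ∀ k, 0 < e k := fun k => by positivity
  -- Selection of nearly-normalized elements with small mass on intervals
  have hsel : ∀ a : ℝ, ∀ ε : ℝ, 0 < ε → ∃ g : Lp ℝ p (volume : Measure ℝ),
      g ∈ X ∧ ‖g‖ = 1 ∧
      eLpNorm ((Set.Icc (-a) a).indicator (⇑g)) p volume < ENNReal.ofReal ε := by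
    intro a ε hε
    set c := max a 1 with hcdef
    obtain ⟨f, hfX, hf⟩ := hcon c (lt_of_lt_of_le one_pos (le_max_right a 1)) ε⁻¹
    set r := (eLpNorm ((Set.Icc (-c) c).indicator (⇑f)) p volume).toReal with hrdef
    have hr0 : 0 ≤ r := ENNReal.toReal_nonneg
    have hfpos : 0 < ‖f‖ := lt_of_le_of_lt (by positivity) hf
    refine ⟨‖f‖⁻¹ • f, X.smul_mem _ hfX, ?_, ?_⟩
    · rw [norm_smul, norm_inv, norm_norm, inv_mul_cancel₀ hfpos.ne']
    · have hmono : eLpNorm ((Set.Icc (-a) a).indicator (⇑(‖f‖⁻¹ • f))) p volume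
          ≤ eLpNorm ((Set.Icc (-c) c).indicator (⇑(‖f‖⁻¹ • f))) p volume :=
        eLpNorm_indicator_mono _ (Set.Icc_subset_Icc
          (neg_le_neg (le_max_left a 1)) (le_max_left a 1))
      refine lt_of_le_of_lt hmono ?_
      have hcongr : eLpNorm ((Set.Icc (-c) c).indicator (⇑(‖f‖⁻¹ • f))) p volume
          = eLpNorm (‖f‖⁻¹ • ((Set.Icc (-c) c).indicator (⇑f))) p volume := by
        refine eLpNorm_congr_ae ?_
        filter_upwards [Lp.coeFn_smul (‖f‖⁻¹) f] with t ht
        rw [Pi.smul_apply]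
        by_cases htc : t ∈ Set.Icc (-c) c
        · rw [Set.indicator_of_mem htc, Set.indicator_of_mem htc, ht]; rfl
        · rw [Set.indicator_of_notMem htc, Set.indicator_of_notMem htc, smul_zero]
      rw [hcongr, eLpNorm_const_smul]
      have hrne : eLpNorm ((Set.Icc (-c) c).indicator (⇑f)) p volume ≠ ∞ :=
        lt_of_le_of_lt (eLpNorm_indicator_le _) (Lp.eLpNorm_lt_top f) |>.ne
      have hne : (‖(‖f‖⁻¹ : ℝ)‖₊ : ℝ≥0∞) * eLpNorm ((Set.Icc (-c) c).indicator (⇑f)) p volume ≠ ∞ :=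
        ENNReal.mul_ne_top ENNReal.coe_ne_top hrne
      rw [enorm_eq_nnnorm, ← ENNReal.ofReal_toReal hne]
      apply ENNReal.ofReal_lt_ofReal_iff hε |>.mpr
      rw [ENNReal.toReal_mul, ENNReal.coe_toReal, coe_nnnorm, norm_inv, norm_norm]
      rw [← hrdef]
      have h1 : r < ε * ‖f‖ := by
        have := (inv_mul_lt_iff₀ hε).mp hf
        linarith
      rw [inv_mul_lt_iff₀ hfpos]
      linarith
  -- choice functions
  choose gf hgfX hgfn hgfs using fun (k : ℕ) (a : ℝ) => hsel a (e k) (he k)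
  choose bf hbf1 hbf2 using fun (k : ℕ) (a : ℝ) =>
    exists_tail_small p hp0 hp' (⇑(gf k a)) (Lp.memLp _) (he k) a
  -- the radii and the sequence
  set rr : ℕ → ℝ := fun k => Nat.rec (1 : ℝ) (fun k ak => bf k ak) k with hrrdef
  have hrr_succ : ∀ k, rr (k + 1) = bf k (rr k) := fun k => rfl
  set g : ℕ → Lp ℝ p (volume : Measure ℝ) := fun k => gf k (rr k) with hgdef
  have hrmono : Monotone rr := monotone_nat_of_le_succ fun k => by
    rw [hrr_succ]; exact hbf1 k (rr k)
  have hgX : ∀ k, g k ∈ X := fun k => hgfX k (rr k)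
  have hgn : ∀ k, ‖g k‖ = 1 := fun k => hgfn k (rr k)
  have hg1 : ∀ k, eLpNorm (⇑(g k)) p volume = 1 := by
    intro k
    have h1 := Lp.norm_def (g k)
    rw [hgn k] at h1
    have := Lp.eLpNorm_ne_top (g k)
    exact (ENNReal.toReal_eq_one_iff _).mp h1.symm
  have hinner : ∀ k, eLpNorm ((Set.Icc (-(rr k)) (rr k)).indicator (⇑(g k))) p volume
      < ENNReal.ofReal (e k) := fun k => hgfs k (rr k)
  have houter : ∀ k,
      eLpNorm ((Set.Icc (-(rr (k + 1))) (rr (k + 1)))ᶜ.indicator (⇑(g k))) p volume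
      < ENNReal.ofReal (e k) := fun k => by
    rw [hrr_succ]; exact hbf2 k (rr k)
  -- the disjoint annuli
  set A : ℕ → Set ℝ := fun k =>
    Set.Icc (-(rr (k + 1))) (rr (k + 1)) \ Set.Icc (-(rr k)) (rr k) with hAdef
  have hAmeas : ∀ k, MeasurableSet (A k) := fun k =>
    measurableSet_Icc.diff measurableSet_Icc
  have hIccsub : ∀ m n : ℕ, m ≤ n →
      Set.Icc (-(rr m)) (rr m) ⊆ Set.Icc (-(rr n)) (rr n) := fun m n hmn =>
    Set.Icc_subset_Icc (neg_le_neg (hrmono hmn)) (hrmono hmn)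
  have hdisj : ∀ i j, i ≠ j → Disjoint (A i) (A j) := by
    have key : ∀ i j, i < j → Disjoint (A i) (A j) := by
      intro i j hij
      refine Set.disjoint_left.mpr fun t hti htj => ?_
      exact htj.2 (hIccsub (i + 1) j hij hti.1)
    intro i j hij
    rcases lt_or_gt_of_ne hij with h | h
    · exact key i j h
    · exact (key j i h).symm
  -- truncations
  set u : ℕ → ℝ → ℝ := fun k => (A k).indicator (⇑(g k)) with hudef
  have humem : ∀ k, MemLp (u k) p volume := fun k => (Lp.memLp (g k)).indicator (hAmeas k)
  set h : ℕ → Lp ℝ p (volume : Measure ℝ) := fun k => (humem k).toLp (u k) with hhdef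
  have humeas : ∀ k, Measurable (u k) := fun k =>
    ((Lp.stronglyMeasurable (g k)).measurable).indicator (hAmeas k)
  have hupt : ∀ k, ⇑(g k) = u k + (A k)ᶜ.indicator (⇑(g k)) := by
    intro k
    funext t
    by_cases ht : t ∈ A k
    · simp [hudef, Pi.add_apply, Set.indicator_of_mem ht,
        Set.indicator_of_notMem (show t ∉ (A k)ᶜ by simpa using ht)]
    · simp [hudef, Pi.add_apply, Set.indicator_of_notMem ht,
        Set.indicator_of_mem (show t ∈ (A k)ᶜ from ht)]
  have hcompl_eq : ∀ k, (A k)ᶜ.indicator (⇑(g k))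
      = (Set.Icc (-(rr k)) (rr k)).indicator (⇑(g k))
        + (Set.Icc (-(rr (k+1))) (rr (k+1)))ᶜ.indicator (⇑(g k)) := by
    intro k
    have hseteq : (A k)ᶜ = Set.Icc (-(rr k)) (rr k)
        ∪ (Set.Icc (-(rr (k+1))) (rr (k+1)))ᶜ := by
      rw [hAdef]
      ext t
      simp only [Set.mem_compl_iff, Set.mem_diff, Set.mem_union, not_and, not_not]
      constructor
      · intro hh
        by_cases ht : t ∈ Set.Icc (-(rr (k+1))) (rr (k+1))
        · exact Or.inl (hh ht)
        · exact Or.inr ht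
      · intro hh ht1
        rcases hh with hh | hh
        · exact hh
        · exact absurd ht1 hh
    rw [hseteq, Set.indicator_union_of_disjoint (Set.disjoint_left.mpr fun t ht htc =>
      (Set.mem_compl_iff _ _).mp htc (hIccsub k (k+1) (Nat.le_succ k) ht)) _]
    rfl
  have hcompl_norm : ∀ k, eLpNorm ((A k)ᶜ.indicator (⇑(g k))) p volume
      ≤ ENNReal.ofReal (2 * e k) := by
    intro k
    rw [hcompl_eq k]
    refine le_trans (eLpNorm_add_le
      (((Lp.stronglyMeasurable (g k)).indicator measurableSet_Icc).aestronglyMeasurable)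
      (((Lp.stronglyMeasurable (g k)).indicator measurableSet_Icc.compl).aestronglyMeasurable)
      hp) ?_
    calc _ ≤ ENNReal.ofReal (e k) + ENNReal.ofReal (e k) :=
          add_le_add (hinner k).le (houter k).le
      _ = ENNReal.ofReal (2 * e k) := by
          rw [← ENNReal.ofReal_add (he k).le (he k).le]; ring_nf
  have hgh : ∀ k, ‖g k - h k‖ ≤ 2 * e k := by
    intro k
    rw [Lp.norm_def]
    have hcoe : ⇑(g k - h k) =ᵐ[volume] (A k)ᶜ.indicator (⇑(g k)) := by
      filter_upwards [Lp.coeFn_sub (g k) (h k), (humem k).coeFn_toLp] with t h1 h2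
      rw [h1, Pi.sub_apply, h2]
      by_cases ht : t ∈ A k
      · rw [show u k t = (⇑(g k)) t from Set.indicator_of_mem ht _,
          Set.indicator_of_notMem (by simpa using ht)]
        ring
      · rw [show u k t = 0 from Set.indicator_of_notMem ht _,
          Set.indicator_of_mem (by simpa using ht)]
        ring
    rw [eLpNorm_congr_ae hcoe]
    calc (eLpNorm ((A k)ᶜ.indicator (⇑(g k))) p volume).toReal
        ≤ (ENNReal.ofReal (2 * e k)).toReal :=
          ENNReal.toReal_mono ENNReal.ofReal_ne_top (hcompl_norm k)
      _ = 2 * e k := ENNReal.toReal_ofReal (by positivity)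
  -- the lintegral quantities
  set τ : ℕ → ℝ≥0∞ := fun k => ∫⁻ t, (‖u k t‖₊ : ℝ≥0∞) ^ q ∂volume with hτdef
  have hτ_eq : ∀ k, eLpNorm (u k) p volume = τ k ^ (1/q) := fun k =>
    eLpNorm_eq_lintegral_rpow_enorm_toReal hp0 hp'
  have hτ_le : ∀ k, τ k ≤ 1 := by
    intro k
    have h1 : τ k ^ (1/q) ≤ 1 := by
      rw [← hτ_eq k, hudef]
      exact le_trans (eLpNorm_indicator_le _) (hg1 k).le
    have h2 := ENNReal.rpow_le_rpow h1 hq0.le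
    rwa [← ENNReal.rpow_mul, one_div, inv_mul_cancel₀ hq0.ne', ENNReal.rpow_one,
      ENNReal.one_rpow] at h2
  have h2ek : ∀ k, 2 * e k ≤ 1/8 := by
    intro k
    rw [hedef]
    calc 2 * ((1:ℝ)/8 * (1/2)^(k+1)) = (1/8) * (1/2)^k := by ring
      _ ≤ (1/8) * 1 := by
          refine mul_le_mul_of_nonneg_left ?_ (by norm_num)
          exact pow_le_one₀ (by norm_num) (by norm_num)
      _ = 1/8 := mul_one _
  have hτ_ge78 : ∀ k, ENNReal.ofReal (7/8) ≤ eLpNorm (u k) p volume := by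
    intro k
    by_contra hlt
    push_neg at hlt
    have hdecomp : (1 : ℝ≥0∞) ≤ eLpNorm (u k) p volume + ENNReal.ofReal (1/8) := by
      calc (1:ℝ≥0∞) = eLpNorm (⇑(g k)) p volume := (hg1 k).symm
        _ = eLpNorm (u k + (A k)ᶜ.indicator (⇑(g k))) p volume := by rw [← hupt k]
        _ ≤ eLpNorm (u k) p volume + eLpNorm ((A k)ᶜ.indicator (⇑(g k))) p volume :=
            eLpNorm_add_le (humeas k).aestronglyMeasurable
              (((Lp.stronglyMeasurable (g k)).indicator (hAmeas k).compl).aestronglyMeasurable)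
              hp
        _ ≤ eLpNorm (u k) p volume + ENNReal.ofReal (1/8) := by
            refine add_le_add_right (le_trans (hcompl_norm k) ?_) _
            exact ENNReal.ofReal_le_ofReal (h2ek k)
    have hstrict : eLpNorm (u k) p volume + ENNReal.ofReal (1/8)
        < ENNReal.ofReal (7/8) + ENNReal.ofReal (1/8) :=
      ENNReal.add_lt_add_right ENNReal.ofReal_ne_top hlt
    rw [← ENNReal.ofReal_add (by norm_num) (by norm_num)] at hstrict
    have : (7/8 : ℝ) + 1/8 = 1 := by norm_num
    rw [this, ENNReal.ofReal_one] at hstrict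
    exact absurd (lt_of_le_of_lt hdecomp hstrict) (lt_irrefl _)
  have hτ_ge : ∀ k, ENNReal.ofReal (7/8) ^ q ≤ τ k := by
    intro k
    have h1 := ENNReal.rpow_le_rpow (hτ_ge78 k) hq0.le
    rwa [hτ_eq k, ← ENNReal.rpow_mul, one_div, inv_mul_cancel₀ hq0.ne',
      ENNReal.rpow_one] at h1
  -- key finite estimates
  have key : ∀ (x : lp (fun _ : ℕ => ℝ) p) (F : Finset ℕ),
      ‖∑ k ∈ F, x k • g k‖ ≤ (∑ k ∈ F, |x k| ^ q) ^ (1/q) + ∑ k ∈ F, |x k| * (2 * e k) ∧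
      (7/8) * (∑ k ∈ F, |x k| ^ q) ^ (1/q) - ∑ k ∈ F, |x k| * (2 * e k)
        ≤ ‖∑ k ∈ F, x k • g k‖ := by
    intro x F
    have hdecomp : ∑ k ∈ F, x k • g k
        = (∑ k ∈ F, x k • h k) + ∑ k ∈ F, (x k • (g k - h k)) := by
      rw [← Finset.sum_add_distrib]
      refine Finset.sum_congr rfl fun k _ => ?_
      rw [← smul_add, add_sub_cancel]
    have hR : ‖∑ k ∈ F, x k • (g k - h k)‖ ≤ ∑ k ∈ F, |x k| * (2 * e k) := by
      refine le_trans (norm_sum_le F _) (Finset.sum_le_sum fun k _ => ?_)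
      rw [norm_smul, Real.norm_eq_abs]
      exact mul_le_mul_of_nonneg_left (hgh k) (abs_nonneg _)
    have hHcoe : ⇑(∑ k ∈ F, x k • h k) =ᵐ[volume] fun t => ∑ k ∈ F, x k • u k t := by
      have h1 := Lp_coeFn_sum (fun k => x k • h k) F
      have h3 : ∀ᵐ t ∂(volume : Measure ℝ), ∀ k ∈ F, (⇑(x k • h k)) t = x k • u k t := by
        rw [Filter.eventually_all_finset]
        intro k _
        filter_upwards [Lp.coeFn_smul (x k) (h k), (humem k).coeFn_toLp] with t ht1 ht2
        rw [ht1, Pi.smul_apply, ht2]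
      filter_upwards [h1, h3] with t ht1 ht3
      rw [ht1]
      exact Finset.sum_congr rfl fun k hk => ht3 k hk
    have hHnorm : eLpNorm (fun t => ∑ k ∈ F, x k • u k t) p volume
        = (∑ k ∈ F, (‖x k‖₊ : ℝ≥0∞) ^ q * τ k) ^ (1/q) := by
      rw [eLpNorm_eq_lintegral_rpow_enorm_toReal hp0 hp']; simp only [enorm_eq_nnnorm]
      congr 1
      rw [lintegral_sum_disjoint hq0 A hdisj (fun k t => x k • u k t)
        (fun k => (humeas k).const_smul (x k))
        (fun k t ht => by simp [hudef, Set.indicator_of_notMem ht]) F]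
      refine Finset.sum_congr rfl fun k _ => ?_
      have hpt : ∀ t, (‖x k • u k t‖₊ : ℝ≥0∞) ^ q
          = (‖x k‖₊ : ℝ≥0∞) ^ q * (‖u k t‖₊ : ℝ≥0∞) ^ q := by
        intro t
        rw [nnnorm_smul, ENNReal.coe_mul, ENNReal.mul_rpow_of_nonneg _ _ hq0.le]
      calc ∫⁻ t, (‖x k • u k t‖₊ : ℝ≥0∞) ^ q ∂volume
          = ∫⁻ t, (‖x k‖₊ : ℝ≥0∞) ^ q * (‖u k t‖₊ : ℝ≥0∞) ^ q ∂volume :=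
            lintegral_congr hpt
        _ = (‖x k‖₊ : ℝ≥0∞) ^ q * τ k :=
            lintegral_const_mul _ ((humeas k).nnnorm.coe_nnreal_ennreal.pow_const q)
    set Sq : ℝ≥0∞ := ∑ k ∈ F, (‖x k‖₊ : ℝ≥0∞) ^ q with hSqdef
    have hSqne : Sq ≠ ∞ := by
      rw [hSqdef]
      refine (ENNReal.sum_lt_top.mpr fun k _ => ?_).ne
      exact ENNReal.rpow_lt_top_of_nonneg hq0.le ENNReal.coe_ne_top
    have hSqtoReal : Sq.toReal = ∑ k ∈ F, |x k| ^ q := by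
      rw [hSqdef, ENNReal.toReal_sum fun k _ =>
        (ENNReal.rpow_lt_top_of_nonneg hq0.le ENNReal.coe_ne_top).ne]
      refine Finset.sum_congr rfl fun k _ => ?_
      rw [← ENNReal.toReal_rpow, ENNReal.coe_toReal, coe_nnnorm, Real.norm_eq_abs]
    have hupper : eLpNorm (fun t => ∑ k ∈ F, x k • u k t) p volume ≤ Sq ^ (1/q) := by
      rw [hHnorm]
      refine ENNReal.rpow_le_rpow ?_ (by positivity)
      rw [hSqdef]
      refine Finset.sum_le_sum fun k _ => ?_
      calc (‖x k‖₊ : ℝ≥0∞) ^ q * τ k ≤ (‖x k‖₊ : ℝ≥0∞) ^ q * 1 :=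
          mul_le_mul_right (hτ_le k) _
        _ = _ := mul_one _
    have hlower : ENNReal.ofReal (7/8) * Sq ^ (1/q)
        ≤ eLpNorm (fun t => ∑ k ∈ F, x k • u k t) p volume := by
      rw [hHnorm]
      have h1 : ENNReal.ofReal (7/8) ^ q * Sq ≤ ∑ k ∈ F, (‖x k‖₊ : ℝ≥0∞) ^ q * τ k := by
        rw [hSqdef, Finset.mul_sum]
        refine Finset.sum_le_sum fun k _ => ?_
        rw [mul_comm (ENNReal.ofReal (7/8) ^ q)]
        exact mul_le_mul_right (hτ_ge k) _
      have h2 := ENNReal.rpow_le_rpow h1 (by positivity : (0:ℝ) ≤ 1/q)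
      rwa [ENNReal.mul_rpow_of_nonneg _ _ (by positivity), ← ENNReal.rpow_mul,
        mul_one_div_cancel hq0.ne', ENNReal.rpow_one] at h2
    have hHfin : eLpNorm (fun t => ∑ k ∈ F, x k • u k t) p volume ≠ ∞ := by
      rw [← eLpNorm_congr_ae hHcoe]
      exact Lp.eLpNorm_ne_top _
    have hHnorm_real : ‖∑ k ∈ F, x k • h k‖
        = (eLpNorm (fun t => ∑ k ∈ F, x k • u k t) p volume).toReal := by
      rw [Lp.norm_def, eLpNorm_congr_ae hHcoe]
    have hSqrle : (Sq ^ (1/q)).toReal = (∑ k ∈ F, |x k| ^ q) ^ (1/q) := by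
      rw [← ENNReal.toReal_rpow, hSqtoReal]
    have hHupper_real : ‖∑ k ∈ F, x k • h k‖ ≤ (∑ k ∈ F, |x k| ^ q) ^ (1/q) := by
      rw [hHnorm_real, ← hSqrle]
      exact ENNReal.toReal_mono (ENNReal.rpow_ne_top_of_nonneg (by positivity) hSqne) hupper
    have hHlower_real : (7/8) * (∑ k ∈ F, |x k| ^ q) ^ (1/q) ≤ ‖∑ k ∈ F, x k • h k‖ := by
      rw [hHnorm_real]
      have h2 := ENNReal.toReal_mono hHfin hlower
      rwa [ENNReal.toReal_mul, ENNReal.toReal_ofReal (by norm_num), hSqrle] at h2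
    constructor
    · calc ‖∑ k ∈ F, x k • g k‖
          ≤ ‖∑ k ∈ F, x k • h k‖ + ‖∑ k ∈ F, x k • (g k - h k)‖ := by
            rw [hdecomp]; exact norm_add_le _ _
        _ ≤ _ := add_le_add hHupper_real hR
    · have h1 : ‖∑ k ∈ F, x k • h k‖
          ≤ ‖∑ k ∈ F, x k • g k‖ + ‖∑ k ∈ F, x k • (g k - h k)‖ := by
        calc ‖∑ k ∈ F, x k • h k‖
            = ‖(∑ k ∈ F, x k • g k) - ∑ k ∈ F, x k • (g k - h k)‖ := by
              rw [hdecomp]; congr 1; abel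
          _ ≤ _ := norm_sub_le _ _
      linarith [hHlower_real]
  -- summability facts about x
  have hxsummq : ∀ x : lp (fun _ : ℕ => ℝ) p, Summable (fun k => |x k| ^ q) := by
    intro x
    have h1 := (memℓp_gen_iff hq0).mp (lp.memℓp x)
    simpa [Real.norm_eq_abs] using h1
  have hxb : ∀ (x : lp (fun _ : ℕ => ℝ) p) (k : ℕ), |x k| ≤ ‖x‖ := fun x k => by
    have h1 := lp.norm_apply_le_norm hp0 x k
    simpa [Real.norm_eq_abs] using h1
  have hgeo : Summable (fun k : ℕ => ((1:ℝ)/2) ^ k) := summable_geometric_two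
  have he_eq : ∀ C : ℝ, ∀ k : ℕ, C * (2 * e k) = (C * (1/8)) * (1/2) ^ k := by
    intro C k
    rw [hedef]
    ring
  have hxe_summ : ∀ x : lp (fun _ : ℕ => ℝ) p,
      Summable (fun k => |x k| * (2 * e k)) := by
    intro x
    refine Summable.of_nonneg_of_le (fun k => by positivity) (fun k => ?_)
      ((hgeo.mul_left (‖x‖ * (1/8))).congr fun k => (he_eq ‖x‖ k).symm)
    exact mul_le_mul_of_nonneg_right (hxb x k) (by positivity)
  have hxe_tsum : ∀ x : lp (fun _ : ℕ => ℝ) p,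
      (∑' k, |x k| * (2 * e k)) ≤ (1/4) * ‖x‖ := by
    intro x
    calc (∑' k, |x k| * (2 * e k)) ≤ ∑' k, (‖x‖ * (1/8)) * (1/2) ^ k := by
          refine Summable.tsum_le_tsum (fun k => ?_) (hxe_summ x) (hgeo.mul_left _)
          rw [← he_eq ‖x‖ k]
          exact mul_le_mul_of_nonneg_right (hxb x k) (by positivity)
      _ = (‖x‖ * (1/8)) * 2 := by rw [tsum_mul_left, tsum_geometric_two]
      _ = (1/4) * ‖x‖ := by ring
  have hxe_F : ∀ (x : lp (fun _ : ℕ => ℝ) p) (F : Finset ℕ),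
      ∑ k ∈ F, |x k| * (2 * e k) ≤ (1/4) * ‖x‖ := by
    intro x F
    refine le_trans (Summable.sum_le_tsum F (fun k _ => by positivity) (hxe_summ x)) (hxe_tsum x)
  have hnF_le : ∀ (x : lp (fun _ : ℕ => ℝ) p) (F : Finset ℕ),
      (∑ k ∈ F, |x k| ^ q) ^ (1/q) ≤ ‖x‖ := by
    intro x F
    have h1 : ∑ k ∈ F, |x k| ^ q ≤ ‖x‖ ^ q := by
      have := lp.sum_rpow_le_norm_rpow hq0 x F
      simpa [Real.norm_eq_abs] using this
    calc (∑ k ∈ F, |x k| ^ q) ^ (1/q) ≤ (‖x‖ ^ q) ^ (1/q) :=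
        Real.rpow_le_rpow (Finset.sum_nonneg fun k _ => by positivity) h1 (by positivity)
      _ = ‖x‖ := by
        rw [← Real.rpow_mul (norm_nonneg x), mul_one_div_cancel hq0.ne', Real.rpow_one]
  -- summability of the series in Lp
  have hsum : ∀ x : lp (fun _ : ℕ => ℝ) p, Summable (fun k => x k • g k) := by
    intro x
    rw [summable_iff_vanishing_norm]
    intro ε hε
    have hδq : (0:ℝ) < (ε/2) ^ q := Real.rpow_pos_of_pos (by linarith) q
    obtain ⟨s₁, hs₁⟩ := summable_iff_vanishing_norm.mp (hxsummq x) ((ε/2) ^ q) hδq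
    obtain ⟨s₂, hs₂⟩ := summable_iff_vanishing_norm.mp (hxe_summ x) (ε/2) (by linarith)
    refine ⟨s₁ ∪ s₂, fun t ht => ?_⟩
    obtain ⟨ht1, ht2⟩ := Finset.disjoint_union_right.mp ht
    have hnn : 0 ≤ ∑ k ∈ t, |x k| ^ q := Finset.sum_nonneg fun k _ => by positivity
    have hsum_lt : ∑ k ∈ t, |x k| ^ q < (ε/2) ^ q := by
      have h2 := hs₁ t ht1
      rwa [Real.norm_eq_abs, abs_of_nonneg hnn] at h2
    have hn : (∑ k ∈ t, |x k| ^ q) ^ (1/q) < ε/2 := by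
      calc (∑ k ∈ t, |x k| ^ q) ^ (1/q) < ((ε/2) ^ q) ^ (1/q) :=
          Real.rpow_lt_rpow hnn hsum_lt (by positivity)
        _ = ε/2 := by
          rw [← Real.rpow_mul (by linarith : (0:ℝ) ≤ ε/2),
            mul_one_div_cancel hq0.ne', Real.rpow_one]
    have hd : ∑ k ∈ t, |x k| * (2 * e k) < ε/2 := by
      have h2 := hs₂ t ht2
      have hnn2 : 0 ≤ ∑ k ∈ t, |x k| * (2 * e k) :=
        Finset.sum_nonneg fun k _ => by positivity
      rwa [Real.norm_eq_abs, abs_of_nonneg hnn2] at h2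
    calc ‖∑ k ∈ t, x k • g k‖
        ≤ (∑ k ∈ t, |x k| ^ q) ^ (1/q) + ∑ k ∈ t, |x k| * (2 * e k) := (key x t).1
      _ < ε/2 + ε/2 := add_lt_add hn hd
      _ = ε := by ring
  -- the linear map
  let T : lp (fun _ : ℕ => ℝ) p →ₗ[ℝ] Lp ℝ p (volume : Measure ℝ) :=
    { toFun := fun x => ∑' k, x k • g k
      map_add' := by
        intro x y
        rw [← Summable.tsum_add (hsum x) (hsum y)]
        refine tsum_congr fun k => ?_
        rw [lp.coeFn_add, Pi.add_apply, add_smul]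
      map_smul' := by
        intro c x
        simp only [RingHom.id_apply]
        rw [← Summable.tsum_const_smul c (hsum x)]
        refine tsum_congr fun k => ?_
        rw [lp.coeFn_smul, Pi.smul_apply, smul_assoc] }
  have hT_eq : ∀ x, T x = ∑' k, x k • g k := fun x => rfl
  have hT_hasSum : ∀ x, HasSum (fun k => x k • g k) (T x) := fun x => (hsum x).hasSum
  -- membership
  have hTmem : ∀ x, T x ∈ X := by
    intro x
    refine hX.mem_of_tendsto (hT_hasSum x) (Filter.Eventually.of_forall fun F => ?_)
    exact Submodule.sum_mem X fun k _ => X.smul_mem _ (hgX k)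
  -- upper bound
  have hTub : ∀ x, ‖T x‖ ≤ (5/4) * ‖x‖ := by
    intro x
    refine le_of_tendsto' (hT_hasSum x).norm fun F => ?_
    calc ‖∑ k ∈ F, x k • g k‖
        ≤ (∑ k ∈ F, |x k| ^ q) ^ (1/q) + ∑ k ∈ F, |x k| * (2 * e k) := (key x F).1
      _ ≤ ‖x‖ + (1/4) * ‖x‖ := add_le_add (hnF_le x F) (hxe_F x F)
      _ = (5/4) * ‖x‖ := by ring
  -- lower bound
  have hTlb : ∀ x, (5/8) * ‖x‖ ≤ ‖T x‖ := by
    intro x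
    have htnorm : Tendsto (fun N => ‖∑ k ∈ Finset.range N, x k • g k‖) atTop (𝓝 ‖T x‖) :=
      ((hT_hasSum x).tendsto_sum_nat).norm
    have hxnorm : ‖x‖ = (∑' k, |x k| ^ q) ^ (1/q) := by
      rw [lp.norm_eq_tsum_rpow hq0 x]
      simp [Real.norm_eq_abs, hqdef]
    have hnlim : Tendsto (fun N => (∑ k ∈ Finset.range N, |x k| ^ q) ^ (1/q)) atTop
        (𝓝 ‖x‖) := by
      rw [hxnorm]
      exact ((hxsummq x).hasSum.tendsto_sum_nat).rpow_const (Or.inr (by positivity))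
    have hdlim : Tendsto (fun N => ∑ k ∈ Finset.range N, |x k| * (2 * e k)) atTop
        (𝓝 (∑' k, |x k| * (2 * e k))) := (hxe_summ x).hasSum.tendsto_sum_nat
    have hLlim : Tendsto (fun N => (7/8) * (∑ k ∈ Finset.range N, |x k| ^ q) ^ (1/q)
        - ∑ k ∈ Finset.range N, |x k| * (2 * e k)) atTop
        (𝓝 ((7/8) * ‖x‖ - ∑' k, |x k| * (2 * e k))) :=
      (hnlim.const_mul _).sub hdlim
    have h1 : (7/8) * ‖x‖ - (∑' k, |x k| * (2 * e k)) ≤ ‖T x‖ :=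
      le_of_tendsto_of_tendsto' hLlim htnorm fun N => (key x (Finset.range N)).2
    have h2 := hxe_tsum x
    linarith [norm_nonneg x]
  exact hnolp ⟨5/8, 5/4, by norm_num, by norm_num, T, hTmem, fun x => ⟨hTlb x, hTub x⟩⟩
end

section
/- Let 1 ≤ p ≤ 2 and let x ∈ ℓ_p(ℤ; ℂ). For n ∈ ℤ define the shifted sequence x^(n) ∈ ℓ_p(ℤ; ℂ) by x^(n)(j) = x(j − n). Then the closed linear span of {x^(2n) : n ∈ ℤ} (the shifts by even integers) is a proper subspace of ℓ_p(ℤ; ℂ). -/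
open ENNReal NNReal

/-! Auxiliary weight sequence. -/

noncomputable def sigZ : ℤ → ℝ≥0 := fun m => if Odd m ∧ 1 ≤ m then 2⁻¹ ^ m.toNat else 0

lemma sigZ_summable : Summable sigZ := by
  refine Summable.of_add_one_of_neg_add_one ?_ ?_
  · refine NNReal.summable_of_le (f := fun n : ℕ => (2⁻¹ : ℝ≥0) ^ n) ?_ ?_
    · intro n
      unfold sigZ
      split
      · rw [show ((n : ℤ) + 1).toNat = n + 1 by omega]
        exact pow_le_pow_of_le_one zero_le (by rw [← NNReal.coe_le_coe]; norm_num)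
          (Nat.le_succ n)
      · exact zero_le
    · exact NNReal.summable_geometric (by rw [← NNReal.coe_lt_coe]; norm_num)
  · have : (fun n : ℕ => sigZ (-((n : ℤ) + 1))) = fun _ => 0 := by
      funext n
      unfold sigZ
      rw [if_neg]
      rintro ⟨-, h⟩
      omega
    rw [this]
    exact summable_zero

lemma odd_add_two_iff (m : ℤ) : Odd (m + 2) ↔ Odd m := by
  rw [Int.odd_iff, Int.odd_iff]; omega

lemma sigZ_rec (m : ℤ) : 4 * sigZ (m + 2) = sigZ m + (if m = -1 then 2 else 0) := by
  unfold sigZ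
  rcases eq_or_ne m (-1) with rfl | hm
  · rw [if_pos (by norm_num [Int.odd_iff]), if_neg (by rintro ⟨-, h⟩; omega), if_pos rfl]
    rw [show ((-1 : ℤ) + 2).toNat = 1 by rfl, pow_one, zero_add]
    rw [show (4:ℝ≥0) = 2*2 from by norm_num, mul_assoc, mul_inv_cancel₀ two_ne_zero, mul_one]
  · rw [if_neg hm, add_zero]
    by_cases h : Odd m ∧ 1 ≤ m
    · rw [if_pos ⟨(odd_add_two_iff m).mpr h.1, by omega⟩, if_pos h]
      have ht : (m + 2).toNat = m.toNat + 2 := by omega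
      rw [ht, pow_add]
      rw [show ((2:ℝ≥0)⁻¹)^2 = 4⁻¹ from by rw [← one_div, ← one_div, div_pow]; norm_num]
      rw [mul_comm (4:ℝ≥0), mul_assoc, inv_mul_cancel₀ (by norm_num), mul_one]
    · rw [if_neg h, if_neg, mul_zero]
      rintro ⟨h1, h2⟩
      rw [odd_add_two_iff, Int.odd_iff] at h1
      exact h ⟨Int.odd_iff.mpr h1, by omega⟩

lemma sigZ_odd_of_ne_zero {m : ℤ} (h : sigZ m ≠ 0) : Odd m := by
  unfold sigZ at h
  by_cases hc : Odd m ∧ 1 ≤ m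
  · exact hc.1
  · rw [if_neg hc] at h; exact absurd rfl h

attribute [irreducible] sigZ

/-! Generic helpers. -/

lemma ennreal_mul_le_sq_add (a b : ℝ≥0∞) : a * b ≤ a ^ 2 + b ^ 2 := by
  rcases le_total a b with h | h
  · calc a * b ≤ b * b := mul_le_mul_left h b
      _ = b ^ 2 := (sq b).symm
      _ ≤ a ^ 2 + b ^ 2 := le_add_self
  · calc a * b ≤ a * a := mul_le_mul_right h a
      _ = a ^ 2 := (sq a).symm
      _ ≤ a ^ 2 + b ^ 2 := le_self_add

lemma neg_one_zpow_odd {m : ℤ} (h : Odd m) : (-1 : ℂ) ^ m = -1 := by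
  obtain ⟨r, rfl⟩ := h
  rw [zpow_add₀ (by norm_num : (-1:ℂ) ≠ 0), zpow_one, zpow_mul,
    show ((-1:ℂ)) ^ (2:ℤ) = 1 by norm_num, one_zpow, one_mul]

lemma neg_one_zpow_add_eq_zero {u k : ℤ} (h : Odd (u + k)) : (-1:ℂ)^u + (-1:ℂ)^k = 0 := by
  have h1 : (-1:ℂ)^u * (-1:ℂ)^k = -1 := by
    rw [← zpow_add₀ (by norm_num : (-1:ℂ) ≠ 0)]; exact neg_one_zpow_odd h
  have h2 : (-1:ℂ)^k * (-1:ℂ)^k = 1 := by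
    rw [← zpow_add₀ (by norm_num : (-1:ℂ) ≠ 0), show k + k = 2*k by ring, zpow_mul,
      show ((-1:ℂ)) ^ (2:ℤ) = 1 by norm_num, one_zpow]
  have h3 : (-1:ℂ)^u = -(-1:ℂ)^k := by
    calc (-1:ℂ)^u = (-1:ℂ)^u * ((-1:ℂ)^k * (-1:ℂ)^k) := by rw [h2, mul_one]
      _ = ((-1:ℂ)^u * (-1:ℂ)^k) * (-1:ℂ)^k := by ring
      _ = -(-1:ℂ)^k := by rw [h1]; ring
  rw [h3]; ring

/-! The candidate annihilating sequence. -/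

noncomputable def gTerm (X : ℤ → ℂ) (j k : ℤ) : ℂ :=
  (-1 : ℂ) ^ k * X k * ((sigZ (j + k) : ℝ) : ℂ)

noncomputable def cSeq (X : ℤ → ℂ) (j : ℤ) : ℂ := ∑' k, gTerm X j k

lemma gTerm_nnnorm (X : ℤ → ℂ) (j k : ℤ) : ‖gTerm X j k‖₊ = ‖X k‖₊ * sigZ (j + k) := by
  unfold gTerm
  rw [nnnorm_mul, nnnorm_mul, nnnorm_zpow, nnnorm_neg, nnnorm_one, one_zpow, one_mul,
    Complex.nnnorm_real, NNReal.nnnorm_eq]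

set_option maxHeartbeats 1000000 in
lemma summable_sigZ_shift (j : ℤ) : Summable (fun k => sigZ (j + k)) :=
  (Equiv.addLeft j).summable_iff.mpr sigZ_summable

lemma gTerm_nnnorm_summable (X : ℤ → ℂ) (M : ℝ≥0) (hM : ∀ k, ‖X k‖₊ ≤ M) (j : ℤ) :
    Summable (fun k => ‖gTerm X j k‖₊) := by
  simp_rw [gTerm_nnnorm]
  exact NNReal.summable_of_le (fun k => mul_le_mul_left (hM k) _)
    ((summable_sigZ_shift j).mul_left M)

lemma gTerm_summable (X : ℤ → ℂ) (M : ℝ≥0) (hM : ∀ k, ‖X k‖₊ ≤ M) (j : ℤ) :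
    Summable (fun k => gTerm X j k) :=
  Summable.of_nnnorm (gTerm_nnnorm_summable X M hM j)

lemma cSeq_nnnorm_le (X : ℤ → ℂ) (M : ℝ≥0) (hM : ∀ k, ‖X k‖₊ ≤ M) (j : ℤ) :
    (‖cSeq X j‖₊ : ℝ≥0∞) ≤ ∑' k, (‖X k‖₊ : ℝ≥0∞) * (sigZ (j + k) : ℝ≥0∞) := by
  have h1 : ‖cSeq X j‖₊ ≤ ∑' k, ‖gTerm X j k‖₊ :=
    nnnorm_tsum_le (gTerm_nnnorm_summable X M hM j)
  calc (‖cSeq X j‖₊ : ℝ≥0∞) ≤ ((∑' k, ‖gTerm X j k‖₊ : ℝ≥0) : ℝ≥0∞) := by exact_mod_cast h1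
    _ = ∑' k, ((‖gTerm X j k‖₊ : ℝ≥0∞)) := ENNReal.coe_tsum (gTerm_nnnorm_summable X M hM j)
    _ = ∑' k, (‖X k‖₊ : ℝ≥0∞) * (sigZ (j + k) : ℝ≥0∞) := by
        congr 1; funext k; rw [gTerm_nnnorm]; push_cast; ring

set_option maxHeartbeats 1000000 in
lemma triple_sum (A W : ℤ → ℝ≥0∞) :
    ∑' j : ℤ, ∑' k : ℤ, ∑' l : ℤ, A k ^ 2 * (W (j + k) * W (j + l))
      = (∑' m, W m) ^ 2 * ∑' k, A k ^ 2 := by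
  have hL : ∀ j : ℤ, ∑' l : ℤ, W (j + l) = ∑' m, W m := fun j => (Equiv.addLeft j).tsum_eq W
  have hJ : ∀ k : ℤ, ∑' j : ℤ, W (j + k) = ∑' m, W m := fun k => (Equiv.addRight k).tsum_eq W
  calc ∑' j : ℤ, ∑' k : ℤ, ∑' l : ℤ, A k ^ 2 * (W (j + k) * W (j + l))
      = ∑' j : ℤ, ∑' k : ℤ, A k ^ 2 * (W (j + k) * ∑' m, W m) := by
        congr 1; funext j; congr 1; funext k
        rw [ENNReal.tsum_mul_left, ENNReal.tsum_mul_left, hL j]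
    _ = ∑' k : ℤ, ∑' j : ℤ, A k ^ 2 * (W (j + k) * ∑' m, W m) := ENNReal.tsum_comm
    _ = ∑' k : ℤ, A k ^ 2 * ((∑' m, W m) * ∑' m, W m) := by
        congr 1; funext k
        calc ∑' j : ℤ, A k ^ 2 * (W (j + k) * ∑' m, W m)
            = A k ^ 2 * ∑' j : ℤ, (W (j + k) * ∑' m, W m) := ENNReal.tsum_mul_left
          _ = A k ^ 2 * ((∑' j : ℤ, W (j + k)) * ∑' m, W m) := by
              rw [ENNReal.tsum_mul_right]
          _ = A k ^ 2 * ((∑' m, W m) * ∑' m, W m) := by rw [hJ k]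
    _ = (∑' m, W m) ^ 2 * ∑' k, A k ^ 2 := by
        rw [ENNReal.tsum_mul_right, ← sq, mul_comm]

set_option maxHeartbeats 1000000 in
lemma cSeq_sq_sum_le (X : ℤ → ℂ) (M : ℝ≥0) (hM : ∀ k, ‖X k‖₊ ≤ M) :
    ∑' j : ℤ, (‖cSeq X j‖₊ : ℝ≥0∞) ^ 2
      ≤ 2 * ((∑' m, (sigZ m : ℝ≥0∞)) ^ 2 * ∑' k, (‖X k‖₊ : ℝ≥0∞) ^ 2) := by
  set A : ℤ → ℝ≥0∞ := fun k => (‖X k‖₊ : ℝ≥0∞) with hA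
  set W : ℤ → ℝ≥0∞ := fun m => (sigZ m : ℝ≥0∞) with hW
  have step1 : ∀ j : ℤ, (‖cSeq X j‖₊ : ℝ≥0∞) ^ 2 ≤ (∑' k, A k * W (j + k)) ^ 2 := by
    intro j
    exact pow_le_pow_left' (cSeq_nnnorm_le X M hM j) 2
  have step2 : ∀ j : ℤ, (∑' k, A k * W (j + k)) ^ 2
      = ∑' k : ℤ, ∑' l : ℤ, (A k * W (j + k)) * (A l * W (j + l)) := by
    intro j
    rw [sq]
    rw [← ENNReal.tsum_mul_right]
    congr 1; funext k
    rw [← ENNReal.tsum_mul_left]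
  have step3 : ∀ j k l : ℤ, (A k * W (j + k)) * (A l * W (j + l))
      ≤ A k ^ 2 * (W (j + k) * W (j + l)) + A l ^ 2 * (W (j + k) * W (j + l)) := by
    intro j k l
    calc (A k * W (j + k)) * (A l * W (j + l))
        = (A k * A l) * (W (j + k) * W (j + l)) := by ring
      _ ≤ (A k ^ 2 + A l ^ 2) * (W (j + k) * W (j + l)) :=
          mul_le_mul_left (ennreal_mul_le_sq_add _ _) _
      _ = A k ^ 2 * (W (j + k) * W (j + l)) + A l ^ 2 * (W (j + k) * W (j + l)) := add_mul _ _ _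
  calc ∑' j : ℤ, (‖cSeq X j‖₊ : ℝ≥0∞) ^ 2
      ≤ ∑' j : ℤ, ∑' k : ℤ, ∑' l : ℤ, (A k * W (j + k)) * (A l * W (j + l)) := by
        refine ENNReal.tsum_le_tsum (fun j => ?_)
        rw [← step2 j]; exact step1 j
    _ ≤ ∑' j : ℤ, ∑' k : ℤ, ∑' l : ℤ,
          (A k ^ 2 * (W (j + k) * W (j + l)) + A l ^ 2 * (W (j + k) * W (j + l))) := by
        refine ENNReal.tsum_le_tsum (fun j => ENNReal.tsum_le_tsum (fun k =>
          ENNReal.tsum_le_tsum (fun l => step3 j k l)))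
    _ = (∑' j : ℤ, ∑' k : ℤ, ∑' l : ℤ, A k ^ 2 * (W (j + k) * W (j + l)))
        + (∑' j : ℤ, ∑' k : ℤ, ∑' l : ℤ, A l ^ 2 * (W (j + k) * W (j + l))) := by
        rw [← ENNReal.tsum_add]
        congr 1; funext j
        rw [← ENNReal.tsum_add]
        congr 1; funext k
        rw [← ENNReal.tsum_add]
    _ = 2 * ((∑' m, W m) ^ 2 * ∑' k, A k ^ 2) := by
        have h2 : ∑' j : ℤ, ∑' k : ℤ, ∑' l : ℤ, A l ^ 2 * (W (j + k) * W (j + l))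
            = (∑' m, W m) ^ 2 * ∑' k, A k ^ 2 := by
          have : ∀ j : ℤ, ∑' k : ℤ, ∑' l : ℤ, A l ^ 2 * (W (j + k) * W (j + l))
              = ∑' l : ℤ, ∑' k : ℤ, A l ^ 2 * (W (j + l) * W (j + k)) := by
            intro j
            rw [ENNReal.tsum_comm]
            congr 1; funext l; congr 1; funext k
            rw [mul_comm (W (j + k))]
          simp_rw [this]
          exact triple_sum A W
        rw [triple_sum A W, h2, two_mul]

set_option maxHeartbeats 1000000 in
lemma cSeq_memℓp (X : ℤ → ℂ) (M : ℝ≥0) (hM : ∀ k, ‖X k‖₊ ≤ M)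
    (hX2 : ∑' k : ℤ, (‖X k‖₊ : ℝ≥0∞) ^ 2 ≠ ⊤) :
    Memℓp (cSeq X) 2 := by
  have hS : (∑' m, (sigZ m : ℝ≥0∞)) ≠ ⊤ := by
    rw [ENNReal.tsum_coe_ne_top_iff_summable]
    exact sigZ_summable
  have hfin : ∑' j : ℤ, (‖cSeq X j‖₊ : ℝ≥0∞) ^ 2 ≠ ⊤ := by
    refine ne_top_of_le_ne_top ?_ (cSeq_sq_sum_le X M hM)
    exact ENNReal.mul_ne_top (by norm_num)
      (ENNReal.mul_ne_top (ENNReal.pow_ne_top hS) hX2)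
  have hsum : Summable (fun j : ℤ => ‖cSeq X j‖₊ ^ 2) := by
    rw [← ENNReal.tsum_coe_ne_top_iff_summable]
    simpa [ENNReal.coe_pow] using hfin
  apply memℓp_gen
  have : (fun j : ℤ => ‖cSeq X j‖ ^ (2 : ℝ≥0∞).toReal) = fun j => ((‖cSeq X j‖₊ ^ 2 : ℝ≥0) : ℝ) := by
    funext j
    rw [ENNReal.toReal_ofNat]
    push_cast
    rw [← Real.rpow_natCast ‖cSeq X j‖ 2]
    norm_num
  rw [this]
  exact_mod_cast NNReal.summable_coe.mpr hsum

/-! Orthogonality of `cSeq` to all even shifts. -/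

set_option maxHeartbeats 1000000 in
lemma G_nnnorm_summable (X : ℤ → ℂ) (n : ℤ) (hX2 : ∑' k : ℤ, (‖X k‖₊ : ℝ≥0∞) ^ 2 ≠ ⊤) :
    Summable (fun q : ℤ × ℤ => ‖X q.1 * gTerm X (q.1 + 2*n) q.2‖₊) := by
  rw [← ENNReal.tsum_coe_ne_top_iff_summable]
  set A : ℤ → ℝ≥0∞ := fun k => (‖X k‖₊ : ℝ≥0∞) with hA
  set W : ℤ → ℝ≥0∞ := fun m => (sigZ m : ℝ≥0∞) with hW
  have hS : (∑' m, W m) ≠ ⊤ := by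
    rw [hW, ENNReal.tsum_coe_ne_top_iff_summable]; exact sigZ_summable
  have hnn : ∀ q : ℤ × ℤ, ((‖X q.1 * gTerm X (q.1 + 2*n) q.2‖₊ : ℝ≥0∞))
      = A q.1 * (A q.2 * W (q.1 + (2*n + q.2))) := by
    intro q
    rw [nnnorm_mul, gTerm_nnnorm, ← add_assoc]
    push_cast
    ring
  have hbound : ∑' q : ℤ × ℤ, ((‖X q.1 * gTerm X (q.1 + 2*n) q.2‖₊ : ℝ≥0∞))
      ≤ (∑' u, A u ^ 2) * (∑' m, W m) + (∑' k, A k ^ 2) * (∑' m, W m) := by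
    have e1 : ∑' u : ℤ, ∑' k : ℤ, A u ^ 2 * W (u + (2*n + k))
        = (∑' u, A u ^ 2) * ∑' m, W m := by
      rw [← ENNReal.tsum_mul_right]
      congr 1; funext u
      rw [ENNReal.tsum_mul_left]
      congr 1
      have h : ∀ k : ℤ, u + (2*n + k) = (u + 2*n) + k := fun k => by ring
      simp_rw [h]
      exact (Equiv.addLeft (u + 2*n)).tsum_eq W
    have e2 : ∑' u : ℤ, ∑' k : ℤ, A k ^ 2 * W (u + (2*n + k))
        = (∑' k, A k ^ 2) * ∑' m, W m := by
      rw [ENNReal.tsum_comm, ← ENNReal.tsum_mul_right]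
      congr 1; funext k
      rw [ENNReal.tsum_mul_left]
      congr 1
      exact (Equiv.addRight (2*n + k)).tsum_eq W
    calc ∑' q : ℤ × ℤ, ((‖X q.1 * gTerm X (q.1 + 2*n) q.2‖₊ : ℝ≥0∞))
        = ∑' u : ℤ, ∑' k : ℤ, A u * (A k * W (u + (2*n + k))) := by
          simp_rw [hnn]; exact ENNReal.tsum_prod'
      _ ≤ ∑' u : ℤ, ∑' k : ℤ, (A u ^ 2 * W (u + (2*n + k)) + A k ^ 2 * W (u + (2*n + k))) := by
          refine ENNReal.tsum_le_tsum (fun u => ENNReal.tsum_le_tsum (fun k => ?_))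
          calc A u * (A k * W (u + (2*n + k))) = (A u * A k) * W (u + (2*n + k)) := by ring
            _ ≤ (A u ^ 2 + A k ^ 2) * W (u + (2*n + k)) :=
                mul_le_mul_left (ennreal_mul_le_sq_add _ _) _
            _ = A u ^ 2 * W (u + (2*n + k)) + A k ^ 2 * W (u + (2*n + k)) := add_mul _ _ _
      _ = (∑' u : ℤ, ∑' k : ℤ, A u ^ 2 * W (u + (2*n + k)))
          + ∑' u : ℤ, ∑' k : ℤ, A k ^ 2 * W (u + (2*n + k)) := by
          rw [← ENNReal.tsum_add]
          congr 1; funext u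
          rw [← ENNReal.tsum_add]
      _ = (∑' u, A u ^ 2) * (∑' m, W m) + (∑' k, A k ^ 2) * (∑' m, W m) := by rw [e1, e2]
  exact ne_top_of_le_ne_top
    (ENNReal.add_ne_top.mpr ⟨ENNReal.mul_ne_top hX2 hS, ENNReal.mul_ne_top hX2 hS⟩) hbound

set_option maxHeartbeats 1000000 in
lemma orth_sum (X : ℤ → ℂ) (n : ℤ) (hX2 : ∑' k : ℤ, (‖X k‖₊ : ℝ≥0∞) ^ 2 ≠ ⊤) :
    ∑' j : ℤ, X (j - 2*n) * cSeq X j = 0 := by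
  classical
  set G : ℤ × ℤ → ℂ := fun q => X q.1 * gTerm X (q.1 + 2*n) q.2 with hG
  have hGsum : Summable G := Summable.of_nnnorm (G_nnnorm_summable X n hX2)
  have hre : ∑' j : ℤ, X (j - 2*n) * cSeq X j = ∑' u : ℤ, X u * cSeq X (u + 2*n) := by
    rw [← (Equiv.addRight (2*n)).tsum_eq (fun j => X (j - 2*n) * cSeq X j)]
    congr 1; funext u
    simp only [Equiv.coe_addRight, add_sub_cancel_right]
  have hinner : ∀ u : ℤ, X u * cSeq X (u + 2*n) = ∑' k, G (u, k) := by
    intro u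
    unfold cSeq
    exact (_root_.tsum_mul_left).symm
  have hanti : ∀ q : ℤ × ℤ, G (q.2, q.1) = -G q := by
    rintro ⟨u, k⟩
    simp only [hG]
    unfold gTerm
    by_cases hz : sigZ ((u + 2*n) + k) = 0
    · have hz' : sigZ ((k + 2*n) + u) = 0 := by
        rw [show (k + 2*n) + u = (u + 2*n) + k by ring]; exact hz
      rw [hz, hz']
      push_cast
      ring
    · have hodd : Odd (u + k) := by
        rcases sigZ_odd_of_ne_zero hz with ⟨r, hr⟩
        exact ⟨r - n, by omega⟩
      have harg : (k + 2*n) + u = (u + 2*n) + k := by ring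
      rw [harg]
      have h3 : (-1:ℂ)^u = -(-1:ℂ)^k := by
        linear_combination neg_one_zpow_add_eq_zero hodd
      rw [h3]
      ring
  have hzero : ∑' q : ℤ × ℤ, G q = 0 := by
    have hs : ∑' q : ℤ × ℤ, G q = -∑' q : ℤ × ℤ, G q := by
      calc ∑' q : ℤ × ℤ, G q = ∑' q : ℤ × ℤ, G ((Equiv.prodComm ℤ ℤ) q) :=
            ((Equiv.prodComm ℤ ℤ).tsum_eq G).symm
        _ = ∑' q : ℤ × ℤ, -G q := by
            congr 1; funext q
            exact hanti q
        _ = -∑' q : ℤ × ℤ, G q := tsum_neg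
    have h2 : (2:ℂ) * ∑' q : ℤ × ℤ, G q = 0 := by linear_combination hs
    exact (mul_eq_zero.mp h2).resolve_left two_ne_zero
  rw [hre]
  calc ∑' u : ℤ, X u * cSeq X (u + 2*n) = ∑' u : ℤ, ∑' k : ℤ, G (u, k) := by
        congr 1; funext u; exact hinner u
    _ = ∑' q : ℤ × ℤ, G q := (Summable.tsum_prod' hGsum (fun u => hGsum.prod_factor u)).symm
    _ = 0 := hzero

/-! The recurrence showing `cSeq X = 0` forces `X = 0`. -/

lemma sigZ_rec_complex (m : ℤ) : (4:ℂ) * ((sigZ (m+2) : ℝ) : ℂ)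
    = ((sigZ m : ℝ) : ℂ) + (if m = -1 then (2:ℂ) else 0) := by
  rcases eq_or_ne m (-1) with rfl | hm
  · rw [if_pos rfl]
    have h := sigZ_rec (-1)
    rw [if_pos rfl] at h
    exact_mod_cast congrArg (fun t : ℝ≥0 => ((t : ℝ) : ℂ)) h
  · rw [if_neg hm, add_zero]
    have h := sigZ_rec m
    rw [if_neg hm, add_zero] at h
    exact_mod_cast congrArg (fun t : ℝ≥0 => ((t : ℝ) : ℂ)) h

set_option maxHeartbeats 1000000 in
lemma four_mul_cSeq (X : ℤ → ℂ) (M : ℝ≥0) (hM : ∀ k, ‖X k‖₊ ≤ M) (j : ℤ) :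
    (4:ℂ) * cSeq X (j+2) = cSeq X j + 2 * (-1:ℂ)^(-1-j) * X (-1-j) := by
  classical
  have hterm : ∀ k : ℤ, (4:ℂ) * gTerm X (j+2) k
      = gTerm X j k + ((-1:ℂ)^k * X k * (if j + k = -1 then (2:ℂ) else 0)) := by
    intro k
    unfold gTerm
    have harg : (j+2)+k = (j+k)+2 := by ring
    rw [harg]
    calc (4:ℂ) * ((-1:ℂ)^k * X k * ((sigZ ((j+k)+2) : ℝ) : ℂ))
        = (-1:ℂ)^k * X k * ((4:ℂ) * ((sigZ ((j+k)+2) : ℝ) : ℂ)) := by ring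
      _ = (-1:ℂ)^k * X k * (((sigZ (j+k) : ℝ) : ℂ) + (if j + k = -1 then (2:ℂ) else 0)) := by
          rw [sigZ_rec_complex (j+k)]
      _ = _ := by rw [mul_add]
  have hesum : Summable (fun k : ℤ => (-1:ℂ)^k * X k * (if j + k = -1 then (2:ℂ) else 0)) := by
    apply summable_of_ne_finset_zero (s := ({-1-j} : Finset ℤ))
    intro k hk
    rw [if_neg, mul_zero]
    simp only [Finset.mem_singleton] at hk
    omega
  calc (4:ℂ) * cSeq X (j+2) = ∑' k, (4:ℂ) * gTerm X (j+2) k := (_root_.tsum_mul_left).symm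
    _ = ∑' k, (gTerm X j k + (-1:ℂ)^k * X k * (if j + k = -1 then (2:ℂ) else 0)) := by
        congr 1; funext k; exact hterm k
    _ = cSeq X j + ∑' k, (-1:ℂ)^k * X k * (if j + k = -1 then (2:ℂ) else 0) :=
        Summable.tsum_add (gTerm_summable X M hM j) hesum
    _ = cSeq X j + 2 * (-1:ℂ)^(-1-j) * X (-1-j) := by
        congr 1
        rw [tsum_eq_single (-1-j) ?_]
        · rw [if_pos (by ring)]; ring
        · intro k hk
          rw [if_neg (by omega), mul_zero]

lemma X_zero_of_cSeq_zero (X : ℤ → ℂ) (M : ℝ≥0) (hM : ∀ k, ‖X k‖₊ ≤ M)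
    (hc : ∀ j, cSeq X j = 0) (m : ℤ) : X m = 0 := by
  have h := four_mul_cSeq X M hM (-1-m)
  rw [hc, hc] at h
  rw [show (-1:ℤ) - (-1-m) = m by ring] at h
  have h' : (2:ℂ) * ((-1:ℂ)^m * X m) = 0 := by linear_combination -h
  have h2 : (-1:ℂ)^m * X m = 0 := (mul_eq_zero.mp h').resolve_left two_ne_zero
  rcases mul_eq_zero.mp h2 with h3 | h3
  · exact absurd h3 (zpow_ne_zero m (by norm_num))
  · exact h3

/-! Norm comparison `ℓ^p → ℓ^2`. -/

lemma norm_two_le_norm {p : ℝ≥0∞} [Fact (1 ≤ p)] (hp2 : p ≤ 2) (y : lp (fun _ : ℤ => ℂ) p)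
    (y2 : lp (fun _ : ℤ => ℂ) 2) (hco : ∀ j, y2 j = y j) : ‖y2‖ ≤ ‖y‖ := by
  have hp1 : 1 ≤ p := Fact.out
  have hp0 : p ≠ 0 := by intro h; rw [h] at hp1; exact absurd hp1 (by norm_num)
  have hptop : p ≠ ⊤ := by
    intro h; rw [h] at hp2; exact absurd hp2 (by simp)
  have hpr1 : 1 ≤ p.toReal := by
    rw [← ENNReal.toReal_one]
    exact ENNReal.toReal_mono hptop hp1
  have hpr2 : p.toReal ≤ 2 := by
    have := ENNReal.toReal_mono (by norm_num : (2:ℝ≥0∞) ≠ ⊤) hp2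
    simpa using this
  have hprpos : 0 < p.toReal := lt_of_lt_of_le one_pos hpr1
  have h2r : (2 : ℝ≥0∞).toReal = (2:ℝ) := by norm_num
  have hpoint : ∀ i : ℤ, ‖y i‖ ^ (2:ℝ) ≤ ‖y‖ ^ ((2:ℝ) - p.toReal) * ‖y i‖ ^ p.toReal := by
    intro i
    have e := Real.rpow_add' (x := ‖y i‖) (norm_nonneg _)
      (y := 2 - p.toReal) (z := p.toReal) (by norm_num)
    rw [show (2:ℝ) - p.toReal + p.toReal = 2 by ring] at e
    rw [e]
    exact mul_le_mul_of_nonneg_right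
      (Real.rpow_le_rpow (norm_nonneg _) (lp.norm_apply_le_norm hp0 y i) (by linarith))
      (Real.rpow_nonneg (norm_nonneg _) _)
  have hfin : ‖y‖ ^ ((2:ℝ) - p.toReal) * ‖y‖ ^ p.toReal = ‖y‖ ^ (2:ℝ) := by
    rw [← Real.rpow_add' (lp.norm_nonneg' y) (by norm_num)]
    norm_num
  refine lp.norm_le_of_forall_sum_le (by norm_num) (lp.norm_nonneg' y) ?_
  intro s
  rw [h2r]
  calc ∑ i ∈ s, ‖y2 i‖ ^ (2:ℝ)
      = ∑ i ∈ s, ‖y i‖ ^ (2:ℝ) := Finset.sum_congr rfl (fun i _ => by rw [hco i])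
    _ ≤ ∑ i ∈ s, ‖y‖ ^ ((2:ℝ) - p.toReal) * ‖y i‖ ^ p.toReal :=
        Finset.sum_le_sum (fun i _ => hpoint i)
    _ = ‖y‖ ^ ((2:ℝ) - p.toReal) * ∑ i ∈ s, ‖y i‖ ^ p.toReal := by rw [Finset.mul_sum]
    _ ≤ ‖y‖ ^ ((2:ℝ) - p.toReal) * ‖y‖ ^ p.toReal :=
        mul_le_mul_of_nonneg_left (lp.sum_rpow_le_norm_rpow hprpos y s)
          (Real.rpow_nonneg (lp.norm_nonneg' y) _)
    _ = ‖y‖ ^ (2:ℝ) := hfin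

/-! The annihilating continuous linear functional. -/

noncomputable def inclL2 (p : ℝ≥0∞) (hp2 : p ≤ 2) (y : lp (fun _ : ℤ => ℂ) p) :
    lp (fun _ : ℤ => ℂ) 2 :=
  ⟨(y : ∀ _ : ℤ, ℂ), (lp.memℓp y).of_exponent_ge hp2⟩

noncomputable def cFun (c : ℤ → ℂ) (hc2 : Memℓp c 2) : lp (fun _ : ℤ => ℂ) 2 :=
  ⟨fun j => (starRingEnd ℂ) (c j), hc2.star_mem⟩

noncomputable def phiLin (p : ℝ≥0∞) [Fact (1 ≤ p)] (hp2 : p ≤ 2) (c : ℤ → ℂ)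
    (hc2 : Memℓp c 2) : lp (fun _ : ℤ => ℂ) p →ₗ[ℂ] ℂ where
  toFun y := @inner ℂ _ _ (cFun c hc2) (inclL2 p hp2 y)
  map_add' y z := by
    have h : inclL2 p hp2 (y + z) = inclL2 p hp2 y + inclL2 p hp2 z := by
      apply Subtype.ext
      simp only [inclL2, lp.coeFn_add]
      rfl
    show @inner ℂ _ _ (cFun c hc2) (inclL2 p hp2 (y + z)) = _
    rw [h, inner_add_right]
  map_smul' a y := by
    have h : inclL2 p hp2 (a • y) = a • inclL2 p hp2 y := by
      apply Subtype.ext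
      simp only [inclL2, lp.coeFn_smul]
      rfl
    show @inner ℂ _ _ (cFun c hc2) (inclL2 p hp2 (a • y)) = _
    rw [h, inner_smul_right]
    rfl

noncomputable def phiCLM (p : ℝ≥0∞) [Fact (1 ≤ p)] (hp2 : p ≤ 2) (c : ℤ → ℂ)
    (hc2 : Memℓp c 2) : lp (fun _ : ℤ => ℂ) p →L[ℂ] ℂ :=
  LinearMap.mkContinuous (phiLin p hp2 c hc2) ‖cFun c hc2‖ (fun y => by
    have hb := @norm_inner_le_norm ℂ _ _ _ _ (cFun c hc2) (inclL2 p hp2 y)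
    have hb2 : ‖cFun c hc2‖ * ‖inclL2 p hp2 y‖ ≤ ‖cFun c hc2‖ * ‖y‖ :=
      mul_le_mul_of_nonneg_left
        (norm_two_le_norm hp2 y (inclL2 p hp2 y) (fun j => rfl)) (norm_nonneg _)
    exact le_trans hb hb2)

lemma phiCLM_apply (p : ℝ≥0∞) [Fact (1 ≤ p)] (hp2 : p ≤ 2) (c : ℤ → ℂ)
    (hc2 : Memℓp c 2) (y : lp (fun _ : ℤ => ℂ) p) :
    phiCLM p hp2 c hc2 y = ∑' j : ℤ, c j * y j := by
  show @inner ℂ _ _ (cFun c hc2) (inclL2 p hp2 y) = _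
  rw [lp.inner_eq_tsum]
  congr 1; funext j
  rw [RCLike.inner_apply]
  show y j * (starRingEnd ℂ) ((starRingEnd ℂ) (c j)) = c j * y j
  rw [Complex.conj_conj, mul_comm]

/-! Main theorem. -/

set_option synthInstance.maxHeartbeats 400000 in
set_option maxHeartbeats 1000000 in
/-- Let `1 ≤ p ≤ 2` and `x ∈ ℓ_p(ℤ;ℂ)`.  Then the closed linear span of the
even shifts `{x^(2n) : n ∈ ℤ}` of `x` is a proper subspace of `ℓ_p(ℤ;ℂ)`. -/
theorem closed_span_even_shifts_ne_top
    (p : ℝ≥0∞) [Fact (1 ≤ p)] (hp : 1 ≤ p) (hp2 : p ≤ 2)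
    (x : lp (fun _ : ℤ => ℂ) p) :
    closure (Submodule.span ℂ {y : lp (fun _ : ℤ => ℂ) p |
        ∃ n : ℤ, ∀ j : ℤ, y j = x (j - 2 * n)} :
      Set (lp (fun _ : ℤ => ℂ) p)) ≠ Set.univ := by
  classical
  set S : Set (lp (fun _ : ℤ => ℂ) p) :=
    {y | ∃ n : ℤ, ∀ j : ℤ, y j = x (j - 2 * n)} with hSdef
  by_cases hx0 : x = 0
  · -- trivial case `x = 0`
    have hS0 : S = {0} := by
      ext y
      constructor
      · rintro ⟨n, hn⟩
        have : y = 0 := by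
          apply lp.ext
          funext j
          rw [hn j, hx0]
          simp
        simp [this]
      · rintro rfl
        exact ⟨0, fun j => by rw [hx0]; simp⟩
    rw [hS0]
    rw [Submodule.span_zero_singleton]
    intro h
    set e0 : lp (fun _ : ℤ => ℂ) p := lp.single p (0:ℤ) (1:ℂ) with he0
    have h1 : e0 ∈
        closure ((⊥ : Submodule ℂ (lp (fun _ : ℤ => ℂ) p)) : Set (lp (fun _ : ℤ => ℂ) p)) := by
      rw [h]; trivial
    rw [Submodule.bot_coe, closure_singleton] at h1
    have h2 : e0 = 0 := Set.mem_singleton_iff.mp h1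
    have h3 := congrArg (fun z : lp (fun _ : ℤ => ℂ) p => z 0) h2
    simp only [he0, lp.single_apply_self, lp.coeFn_zero, Pi.zero_apply] at h3
    exact one_ne_zero h3
  · -- main case
    set X : ℤ → ℂ := (x : ∀ _ : ℤ, ℂ) with hXdef
    -- boundedness
    have hXtop : Memℓp X ∞ := (lp.memℓp x).of_exponent_ge le_top
    obtain ⟨Mr, hMr⟩ := hXtop.bddAbove
    have hM : ∀ k, ‖X k‖₊ ≤ Mr.toNNReal := by
      intro k
      have h1 : ‖X k‖ ≤ Mr := hMr ⟨k, rfl⟩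
      rw [← norm_toNNReal]
      exact Real.toNNReal_mono h1
    -- square summability
    have hX2mem : Memℓp X 2 := (lp.memℓp x).of_exponent_ge hp2
    have hX2sumR : Summable (fun k : ℤ => ‖X k‖ ^ (2 : ℝ≥0∞).toReal) :=
      hX2mem.summable (by norm_num)
    have hX2sum : Summable (fun k : ℤ => ‖X k‖₊ ^ 2) := by
      rw [← NNReal.summable_coe]
      have he : (fun k : ℤ => ((‖X k‖₊ ^ 2 : ℝ≥0) : ℝ))
          = fun k : ℤ => ‖X k‖ ^ (2 : ℝ≥0∞).toReal := by
        funext k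
        rw [ENNReal.toReal_ofNat]
        push_cast
        rw [← Real.rpow_natCast ‖X k‖ 2]
        norm_num
      rw [he]
      exact hX2sumR
    have hX2 : ∑' k : ℤ, (‖X k‖₊ : ℝ≥0∞) ^ 2 ≠ ⊤ := by
      have := ENNReal.tsum_coe_ne_top_iff_summable.mpr hX2sum
      simpa [ENNReal.coe_pow] using this
    -- the functional
    have hc2 : Memℓp (cSeq X) 2 := cSeq_memℓp X Mr.toNNReal hM hX2
    set φ := phiCLM p hp2 (cSeq X) hc2 with hφ
    -- φ vanishes on S
    have hvanish : ∀ y ∈ S, φ y = 0 := by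
      rintro y ⟨n, hn⟩
      rw [hφ, phiCLM_apply]
      have : (fun j : ℤ => cSeq X j * y j) = fun j : ℤ => X (j - 2*n) * cSeq X j := by
        funext j
        rw [hn j, mul_comm]
      rw [this]
      exact orth_sum X n hX2
    -- φ vanishes on the closure of the span
    have hker : closure (Submodule.span ℂ S : Set (lp (fun _ : ℤ => ℂ) p))
        ⊆ {y | φ y = 0} := by
      have hclosed : IsClosed {y : lp (fun _ : ℤ => ℂ) p | φ y = 0} :=
        isClosed_eq φ.continuous continuous_const
      refine closure_minimal ?_ hclosed
      have hle : Submodule.span ℂ S ≤ LinearMap.ker (φ : lp (fun _ : ℤ => ℂ) p →ₗ[ℂ] ℂ) := by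
        rw [Submodule.span_le]
        intro y hy
        exact LinearMap.mem_ker.mpr (hvanish y hy)
      intro y hy
      exact hle hy
    -- there is an index where cSeq X is nonzero
    have hcnz : ∃ j0, cSeq X j0 ≠ 0 := by
      by_contra h
      push_neg at h
      apply hx0
      apply lp.ext
      funext k
      exact X_zero_of_cSeq_zero X Mr.toNNReal hM h k
    obtain ⟨j0, hj0⟩ := hcnz
    -- conclude
    intro hcontra
    have hmem : (lp.single p j0 (1:ℂ) : lp (fun _ : ℤ => ℂ) p) ∈
        closure (Submodule.span ℂ S : Set (lp (fun _ : ℤ => ℂ) p)) := by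
      rw [hcontra]; trivial
    have hzero : φ (lp.single p j0 (1:ℂ)) = 0 := hker hmem
    rw [hφ, phiCLM_apply] at hzero
    rw [tsum_eq_single j0 ?_] at hzero
    · rw [lp.single_apply_self, mul_one] at hzero
      exact hj0 hzero
    · intro k hk
      rw [lp.single_apply_ne p j0 _ hk, mul_zero]
end

section
/- Let 1 ≤ p ≤ 2 and let X be a complex Banach space of dimension at least 2. Let F ∈ ℓ_p(ℤ; X) and for n ∈ ℤ define the shift F^(n) ∈ ℓ_p(ℤ; X) by F^(n)(j) = F(j − n). Then the closed linear span of {F^(n) : n ∈ ℤ} is a proper subspace of ℓ_p(ℤ; X). -/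
open ENNReal MeasureTheory
open scoped ComplexConjugate

noncomputable section

namespace ShiftProofAux

variable {p : ℝ≥0∞} {X : Type*} [NormedAddCommGroup X] [NormedSpace ℂ X]

lemma pr_facts (hp : 1 ≤ p) (hp2 : p ≤ 2) : 1 ≤ p.toReal ∧ p.toReal ≤ 2 := by
  have hptop : p ≠ ∞ := fun h => by rw [h] at hp2; exact absurd hp2 (by simp)
  constructor
  · have := ENNReal.toReal_mono hptop hp
    simpa using this
  · have := ENNReal.toReal_mono (by norm_num) hp2
    simpa using this

lemma memℓp_comp (hp : 1 ≤ p) (hp2 : p ≤ 2) (φ : X →L[ℂ] ℂ)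
    (G : lp (fun _ : ℤ => X) p) : Memℓp (fun j => φ (G j)) 2 := by
  obtain ⟨h1, _⟩ := pr_facts hp hp2
  have hpr : 0 < p.toReal := by linarith
  refine Memℓp.of_exponent_ge ?_ hp2
  apply memℓp_gen
  have hs : Summable fun j : ℤ => ‖φ‖ ^ p.toReal * ‖G j‖ ^ p.toReal :=
    ((lp.memℓp G).summable hpr).mul_left _
  refine hs.of_nonneg_of_le (fun j => Real.rpow_nonneg (norm_nonneg _) _) (fun j => ?_)
  rw [← Real.mul_rpow (norm_nonneg _) (norm_nonneg _)]
  exact Real.rpow_le_rpow (norm_nonneg _) (φ.le_opNorm _) (le_of_lt hpr)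

lemma tsum_sq_le (hp : 1 ≤ p) (hp2 : p ≤ 2) [Fact (1 ≤ p)] (φ : X →L[ℂ] ℂ)
    (G : lp (fun _ : ℤ => X) p) :
    ∑' j : ℤ, ‖φ (G j)‖ ^ (2 : ℝ) ≤ (‖φ‖ * ‖G‖) ^ (2 : ℝ) := by
  obtain ⟨h1, h2⟩ := pr_facts hp hp2
  have hpr : 0 < p.toReal := by linarith
  set pr := p.toReal with hprdef
  set K := ‖φ‖ * ‖G‖ with hK
  have hK0 : 0 ≤ K := mul_nonneg (norm_nonneg _) (norm_nonneg _)
  have hp0 : p ≠ 0 := by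
    intro h; rw [h] at hp; exact absurd hp (by simp)
  have hbd : ∀ j : ℤ, ‖φ (G j)‖ ^ (2 : ℝ) ≤ (‖φ‖ ^ pr * K ^ (2 - pr)) * ‖G j‖ ^ pr := by
    intro j
    have h₁ : ‖φ (G j)‖ ≤ ‖φ‖ * ‖G j‖ := φ.le_opNorm _
    have hGj : ‖G j‖ ≤ ‖G‖ := lp.norm_apply_le_norm hp0 G j
    have h₂ : ‖φ (G j)‖ ≤ K := h₁.trans (by rw [hK]; gcongr)
    have hsplit : ‖φ (G j)‖ ^ (2 : ℝ) = ‖φ (G j)‖ ^ pr * ‖φ (G j)‖ ^ (2 - pr) := by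
      rw [← Real.rpow_add' (norm_nonneg _) (by norm_num)]
      norm_num
    rw [hsplit]
    have hA : ‖φ (G j)‖ ^ pr ≤ (‖φ‖ * ‖G j‖) ^ pr :=
      Real.rpow_le_rpow (norm_nonneg _) h₁ (le_of_lt hpr)
    have hB : ‖φ (G j)‖ ^ (2 - pr) ≤ K ^ (2 - pr) :=
      Real.rpow_le_rpow (norm_nonneg _) h₂ (by linarith)
    calc ‖φ (G j)‖ ^ pr * ‖φ (G j)‖ ^ (2 - pr)
        ≤ (‖φ‖ * ‖G j‖) ^ pr * K ^ (2 - pr) := by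
          exact mul_le_mul hA hB (Real.rpow_nonneg (norm_nonneg _) _)
            (Real.rpow_nonneg (mul_nonneg (norm_nonneg _) (norm_nonneg _)) _)
      _ = (‖φ‖ ^ pr * K ^ (2 - pr)) * ‖G j‖ ^ pr := by
          rw [Real.mul_rpow (norm_nonneg _) (norm_nonneg _)]; ring
  have hsum₁ : Summable fun j : ℤ => ‖φ (G j)‖ ^ (2 : ℝ) := by
    have := (memℓp_comp hp hp2 φ G).summable (p := 2) (by norm_num)
    simpa using this
  have hsum₂ : Summable fun j : ℤ => (‖φ‖ ^ pr * K ^ (2 - pr)) * ‖G j‖ ^ pr :=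
    ((lp.memℓp G).summable hpr).mul_left _
  calc ∑' j : ℤ, ‖φ (G j)‖ ^ (2 : ℝ)
      ≤ ∑' j : ℤ, (‖φ‖ ^ pr * K ^ (2 - pr)) * ‖G j‖ ^ pr := Summable.tsum_le_tsum hbd hsum₁ hsum₂
    _ = (‖φ‖ ^ pr * K ^ (2 - pr)) * ∑' j : ℤ, ‖G j‖ ^ pr := tsum_mul_left
    _ = (‖φ‖ ^ pr * K ^ (2 - pr)) * ‖G‖ ^ pr := by rw [← lp.norm_rpow_eq_tsum hpr]
    _ = (K ^ pr) * K ^ (2 - pr) := by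
        rw [hK, Real.mul_rpow (norm_nonneg _) (norm_nonneg _),
          Real.mul_rpow (norm_nonneg _) (norm_nonneg _)]; ring
    _ = K ^ (2 : ℝ) := by
        rw [← Real.rpow_add' hK0 (by norm_num)]; norm_num

variable [Fact (1 ≤ p)]

/-- Post-composition with a functional, as a continuous linear map `ℓᵖ(ℤ;X) → ℓ²(ℤ;ℂ)`. -/
def compL (hp : 1 ≤ p) (hp2 : p ≤ 2) (φ : X →L[ℂ] ℂ) :
    lp (fun _ : ℤ => X) p →L[ℂ] lp (fun _ : ℤ => ℂ) 2 :=
  LinearMap.mkContinuous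
    { toFun := fun G => (⟨fun j => φ (G j), memℓp_comp hp hp2 φ G⟩ : lp (fun _ : ℤ => ℂ) 2)
      map_add' := fun G G' => by
        apply lp.ext
        funext j
        simp [lp.coeFn_add, map_add]; rfl
      map_smul' := fun c G => by
        apply lp.ext
        funext j
        simp [lp.coeFn_smul, _root_.map_smul] }
    ‖φ‖
    (fun G => by
      refine lp.norm_le_of_tsum_le (by norm_num) (mul_nonneg (norm_nonneg _) (norm_nonneg _)) ?_
      have h2r : ((2 : ℝ≥0∞).toReal) = (2 : ℝ) := by norm_num
      rw [h2r]
      exact tsum_sq_le hp hp2 φ G)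

@[simp] lemma compL_apply (hp : 1 ≤ p) (hp2 : p ≤ 2) (φ : X →L[ℂ] ℂ)
    (G : lp (fun _ : ℤ => X) p) (j : ℤ) : compL hp hp2 φ G j = φ (G j) := rfl


section Fourier

open AddCircle

abbrev ee : Lp ℂ 2 (@haarAddCircle 1 _) ≃ₗᵢ[ℂ] lp (fun _ : ℤ => ℂ) 2 :=
  (@fourierBasis 1 _).repr

lemma fourier_norm_one (n : ℤ) (x : AddCircle (1:ℝ)) : ‖fourier n x‖ = 1 :=
  Circle.norm_coe _

lemma memℒp_fourier_mul (A : Lp ℂ 2 (@haarAddCircle 1 _)) (n : ℤ) :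
    MemLp (fun θ : AddCircle (1:ℝ) => fourier n θ * A θ) 2 haarAddCircle := by
  refine MemLp.of_le (Lp.memLp A)
    (((fourier n).continuous.aestronglyMeasurable).mul (Lp.aestronglyMeasurable A)) ?_
  filter_upwards with θ
  rw [norm_mul, fourier_norm_one, one_mul]

/-- Key lemma: the inverse Fourier transform of a shifted sequence is the product with a
character. -/
lemma symm_shift (a a' : lp (fun _ : ℤ => ℂ) 2) (n : ℤ)
    (h : ∀ j : ℤ, a' j = a (j - n)) :
    (ee.symm a' : Lp ℂ 2 (@haarAddCircle 1 _))
      = (memℒp_fourier_mul (ee.symm a) n).toLp _ := by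
  apply ee.injective
  apply lp.ext
  funext j
  rw [LinearIsometryEquiv.apply_symm_apply]
  have h1 : (ee ((memℒp_fourier_mul (ee.symm a) n).toLp _)) j
      = fourierCoeff (((memℒp_fourier_mul (ee.symm a) n).toLp _ :
          Lp ℂ 2 (@haarAddCircle 1 _)) : AddCircle (1:ℝ) → ℂ) j := fourierBasis_repr _ j
  rw [h1]
  have h2 : fourierCoeff (((memℒp_fourier_mul (ee.symm a) n).toLp _ :
        Lp ℂ 2 (@haarAddCircle 1 _)) : AddCircle (1:ℝ) → ℂ) j
      = fourierCoeff (fun θ : AddCircle (1:ℝ) => fourier n θ * (ee.symm a) θ) j := by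
    unfold fourierCoeff
    apply integral_congr_ae
    filter_upwards [(memℒp_fourier_mul (ee.symm a) n).coeFn_toLp] with θ hθ
    rw [hθ]
  rw [h2]
  have h3 : fourierCoeff (fun θ : AddCircle (1:ℝ) => fourier n θ * (ee.symm a) θ) j
      = fourierCoeff ((ee.symm a : Lp ℂ 2 (@haarAddCircle 1 _)) : AddCircle (1:ℝ) → ℂ) (j - n) := by
    unfold fourierCoeff
    apply integral_congr_ae
    filter_upwards with θ
    rw [smul_eq_mul, smul_eq_mul, ← mul_assoc, ← fourier_add]
    congr 2
    ring
  rw [h3, ← fourierBasis_repr, LinearIsometryEquiv.apply_symm_apply, h j]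

end Fourier

end ShiftProofAux

open ShiftProofAux AddCircle MeasureTheory
open scoped ComplexConjugate

set_option maxHeartbeats 1600000 in
/-- Let `1 ≤ p ≤ 2`, let `X` be a complex Banach space of dimension at least
`2`, and let `F ∈ ℓ_p(ℤ; X)`.  Then the closed linear span of the shifts
`{F^(n) : n ∈ ℤ}` is a proper subspace of `ℓ_p(ℤ; X)`. -/
theorem closed_span_shifts_ne_top_vector_valued
    (p : ℝ≥0∞) [Fact (1 ≤ p)] (hp : 1 ≤ p) (hp2 : p ≤ 2)
    (X : Type*) [NormedAddCommGroup X] [NormedSpace ℂ X] [CompleteSpace X]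
    (hdim : 2 ≤ Module.rank ℂ X)
    (F : lp (fun _ : ℤ => X) p) :
    closure (Submodule.span ℂ {G : lp (fun _ : ℤ => X) p |
        ∃ n : ℤ, ∀ j : ℤ, G j = F (j - n)} :
      Set (lp (fun _ : ℤ => X) p)) ≠ Set.univ := by
  classical
  have hp0 : p ≠ 0 := fun h => by rw [h] at hp; exact absurd hp (by simp)
  set S : Set (lp (fun _ : ℤ => X) p) :=
    {G : lp (fun _ : ℤ => X) p | ∃ n : ℤ, ∀ j : ℤ, G j = F (j - n)} with hSdef
  -- Step 1: reduce to producing a nonzero continuous functional vanishing on `S`.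
  suffices h : ∃ L : lp (fun _ : ℤ => X) p →L[ℂ] ℂ,
      (∀ G ∈ S, L G = 0) ∧ ∃ G₀, L G₀ ≠ 0 by
    obtain ⟨L, hker, G₀, hG₀⟩ := h
    intro hcl
    have hsub : closure (Submodule.span ℂ S : Set (lp (fun _ : ℤ => X) p))
        ⊆ {G | L G = 0} := by
      apply closure_minimal
      · have hle : Submodule.span ℂ S ≤ LinearMap.ker (L : lp (fun _ : ℤ => X) p →ₗ[ℂ] ℂ) :=
          Submodule.span_le.mpr fun G hG => LinearMap.mem_ker.mpr (hker G hG)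
        exact fun G hG => hle hG
      · exact isClosed_eq L.continuous continuous_const
    exact hG₀ (hsub (hcl ▸ Set.mem_univ G₀))
  -- Step 2: a pair of vectors and a dual pair of functionals.
  haveI : Nontrivial X := by
    rw [← rank_pos_iff_nontrivial (R := ℂ)]
    exact lt_of_lt_of_le (by norm_num) hdim
  obtain ⟨x₂, hx₂⟩ := exists_ne (0 : X)
  have hnot : ¬ Module.rank ℂ X ≤ 1 := fun h => absurd (hdim.trans h) (by norm_num)
  rw [rank_le_one_iff] at hnot
  push_neg at hnot
  obtain ⟨x₁, hx₁⟩ := hnot x₂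
  have hli : LinearIndependent ℂ ![x₁, x₂] := by
    rw [linearIndependent_fin2]
    exact ⟨by simpa using hx₂, fun r => by simpa using hx₁ r⟩
  haveI : FiniteDimensional ℂ (Submodule.span ℂ (Set.range ![x₁, x₂])) :=
    FiniteDimensional.span_of_finite ℂ (Set.finite_range _)
  obtain ⟨φ, hφ, -⟩ := exists_extension_norm_eq _
    (LinearMap.toContinuousLinearMap ((Module.Basis.span hli).coord 0))
  obtain ⟨ψ, hψ, -⟩ := exists_extension_norm_eq _
    (LinearMap.toContinuousLinearMap ((Module.Basis.span hli).coord 1))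
  have hφ1 : φ x₁ = 1 := by
    have h0 := hφ ((Module.Basis.span hli) 0)
    simp only [LinearMap.coe_toContinuousLinearMap', Module.Basis.coord_apply,
      Module.Basis.repr_self] at h0
    rw [Module.Basis.span_apply] at h0
    simpa [LinearMap.coe_toContinuousLinearMap', Module.Basis.coord_apply, Module.Basis.repr_self]
      using h0
  have hφ2 : φ x₂ = 0 := by
    have h0 := hφ ((Module.Basis.span hli) 1)
    simp only [LinearMap.coe_toContinuousLinearMap', Module.Basis.coord_apply,
      Module.Basis.repr_self] at h0
    rw [Module.Basis.span_apply] at h0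
    simpa [LinearMap.coe_toContinuousLinearMap', Module.Basis.coord_apply, Module.Basis.repr_self]
      using h0
  have hψ2 : ψ x₂ = 1 := by
    have h0 := hψ ((Module.Basis.span hli) 1)
    simp only [LinearMap.coe_toContinuousLinearMap', Module.Basis.coord_apply,
      Module.Basis.repr_self] at h0
    rw [Module.Basis.span_apply] at h0
    simpa [LinearMap.coe_toContinuousLinearMap', Module.Basis.coord_apply, Module.Basis.repr_self]
      using h0
  -- evaluation at 0 as a continuous linear map
  let ev : lp (fun _ : ℤ => X) p →L[ℂ] X :=
    LinearMap.mkContinuous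
      { toFun := fun G => G 0
        map_add' := fun G G' => by
          have := lp.coeFn_add G G'
          exact congrFun this 0
        map_smul' := fun c G => by
          have := lp.coeFn_smul c G
          exact congrFun this 0 }
      1 (fun G => by simpa using lp.norm_apply_le_norm hp0 G 0)
  -- Step 3 : degenerate case
  by_cases hdeg : ∀ j : ℤ, φ (F j) = 0
  · refine ⟨φ.comp ev, fun G hG => ?_, lp.single p 0 x₁, ?_⟩
    · obtain ⟨n, hn⟩ := hG
      have : ev G = F (0 - n) := hn 0
      simp only [ContinuousLinearMap.comp_apply, this]
      exact hdeg _
    · have h1 : ev (lp.single p 0 x₁) = (lp.single p 0 x₁ : lp (fun _ : ℤ => X) p) 0 := rfl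
      have h2 : (lp.single p 0 x₁ : lp (fun _ : ℤ => X) p) 0 = x₁ :=
        lp.single_apply_self (E := fun _ : ℤ => X) p 0 x₁
      simp only [ContinuousLinearMap.comp_apply, h1, h2, hφ1]
      exact one_ne_zero
  · push_neg at hdeg
    obtain ⟨j₀, hj₀⟩ := hdeg
    -- Step 4 : main case
    set Φφ := compL hp hp2 (X := X) φ with hΦφ
    set Φψ := compL hp hp2 (X := X) ψ with hΦψ
    set a : lp (fun _ : ℤ => ℂ) 2 := Φφ F with ha
    set b2 : lp (fun _ : ℤ => ℂ) 2 := Φψ F with hb2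
    set A : Lp ℂ 2 (@haarAddCircle 1 _) := ee.symm a with hA
    set B : Lp ℂ 2 (@haarAddCircle 1 _) := ee.symm b2 with hB
    set w : AddCircle (1:ℝ) → ℝ := fun θ => (1 + ‖A θ‖ + ‖B θ‖)⁻¹ with hw
    have hw_pos : ∀ θ, 0 < w θ := fun θ => by
      rw [hw]
      have := norm_nonneg (A θ); have := norm_nonneg (B θ)
      positivity
    have hw_le : ∀ θ, w θ ≤ 1 := fun θ => by
      rw [hw]
      have h1 : (1:ℝ) ≤ 1 + ‖A θ‖ + ‖B θ‖ := by
        have := norm_nonneg (A θ); have := norm_nonneg (B θ); linarith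
      simpa using inv_anti₀ one_pos h1
    set Cf : AddCircle (1:ℝ) → ℂ := fun θ => star (B θ) * ((w θ : ℝ) : ℂ) with hCf
    set Df : AddCircle (1:ℝ) → ℂ := fun θ => -(star (A θ) * ((w θ : ℝ) : ℂ)) with hDf
    have hwm : AEStronglyMeasurable (fun θ => ((w θ : ℝ) : ℂ)) haarAddCircle := by
      apply Complex.continuous_ofReal.comp_aestronglyMeasurable
      exact ((aemeasurable_const.add (Lp.aestronglyMeasurable A).norm.aemeasurable).add
        (Lp.aestronglyMeasurable B).norm.aemeasurable).inv.aestronglyMeasurable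
    have hwn : ∀ θ, ‖((w θ : ℝ) : ℂ)‖ ≤ 1 := fun θ => by
      rw [Complex.norm_real, Real.norm_eq_abs, abs_of_pos (hw_pos θ)]
      exact hw_le θ
    have memCf : MemLp Cf 2 haarAddCircle := by
      refine MemLp.of_le (Lp.memLp B)
        ((continuous_star.comp_aestronglyMeasurable (Lp.aestronglyMeasurable B)).mul hwm) ?_
      filter_upwards with θ
      rw [hCf]
      calc ‖star (B θ) * ((w θ : ℝ) : ℂ)‖ = ‖B θ‖ * ‖((w θ : ℝ) : ℂ)‖ := by
            rw [norm_mul, norm_star]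
        _ ≤ ‖B θ‖ * 1 := by
            have := hwn θ; have := norm_nonneg (B θ)
            exact mul_le_mul_of_nonneg_left (hwn θ) (norm_nonneg _)
        _ = ‖B θ‖ := mul_one _
    have memDf : MemLp Df 2 haarAddCircle := by
      refine MemLp.of_le (Lp.memLp A)
        (((continuous_star.comp_aestronglyMeasurable
          (Lp.aestronglyMeasurable A)).mul hwm).neg) ?_
      filter_upwards with θ
      rw [hDf]
      calc ‖-(star (A θ) * ((w θ : ℝ) : ℂ))‖ = ‖A θ‖ * ‖((w θ : ℝ) : ℂ)‖ := by
            rw [norm_neg, norm_mul, norm_star]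
        _ ≤ ‖A θ‖ * 1 := mul_le_mul_of_nonneg_left (hwn θ) (norm_nonneg _)
        _ = ‖A θ‖ := mul_one _
    set C : Lp ℂ 2 (@haarAddCircle 1 _) := memCf.toLp Cf with hC
    set D : Lp ℂ 2 (@haarAddCircle 1 _) := memDf.toLp Df with hD
    set c : lp (fun _ : ℤ => ℂ) 2 := ee C with hc
    set d : lp (fun _ : ℤ => ℂ) 2 := ee D with hd
    refine ⟨(innerSL ℂ c).comp Φφ + (innerSL ℂ d).comp Φψ, fun G hG => ?_, ?_⟩
    · -- vanishing on shifts
      obtain ⟨n, hn⟩ := hG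
      have haG : ∀ j : ℤ, (Φφ G) j = a (j - n) := fun j => by
        rw [hΦφ, compL_apply, hn j, ha, hΦφ, compL_apply]
      have hbG : ∀ j : ℤ, (Φψ G) j = b2 (j - n) := fun j => by
        rw [hΦψ, compL_apply, hn j, hb2, hΦψ, compL_apply]
      have eA : ee.symm (Φφ G) = (memℒp_fourier_mul A n).toLp _ := by
        rw [hA]; exact symm_shift a (Φφ G) n haG
      have eB : ee.symm (Φψ G) = (memℒp_fourier_mul B n).toLp _ := by
        rw [hB]; exact symm_shift b2 (Φψ G) n hbG
      have hΦG : Φφ G = ee ((memℒp_fourier_mul A n).toLp _) := by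
        rw [← eA, LinearIsometryEquiv.apply_symm_apply]
      have hΨG : Φψ G = ee ((memℒp_fourier_mul B n).toLp _) := by
        rw [← eB, LinearIsometryEquiv.apply_symm_apply]
      have hstep1 : ((innerSL ℂ c).comp Φφ + (innerSL ℂ d).comp Φψ) G
          = inner ℂ c (Φφ G) + inner ℂ d (Φψ G) := rfl
      have : ((innerSL ℂ c).comp Φφ + (innerSL ℂ d).comp Φψ) G
          = inner ℂ C ((memℒp_fourier_mul A n).toLp _)
            + inner ℂ D ((memℒp_fourier_mul B n).toLp _) := by
        rw [hstep1, hΦG, hΨG, hc, hd, LinearIsometryEquiv.inner_map_map,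
          LinearIsometryEquiv.inner_map_map]
      rw [this, L2.inner_def, L2.inner_def,
        ← integral_add (L2.integrable_inner (𝕜 := ℂ) _ _) (L2.integrable_inner (𝕜 := ℂ) _ _)]
      rw [show (0 : ℂ) = ∫ _θ : AddCircle (1:ℝ), (0:ℂ) ∂haarAddCircle by simp]
      apply integral_congr_ae
      filter_upwards [memCf.coeFn_toLp, memDf.coeFn_toLp,
        (memℒp_fourier_mul A n).coeFn_toLp, (memℒp_fourier_mul B n).coeFn_toLp]
        with θ h1 h2 h3 h4
      rw [h1, h2, h3, h4, RCLike.inner_apply', RCLike.inner_apply']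
      have hstarR : ∀ r : ℝ, star ((r : ℝ) : ℂ) = ((r : ℝ) : ℂ) := fun r => by
        rw [← starRingEnd_apply]; exact Complex.conj_ofReal r
      simp only [hCf, hDf, starRingEnd_apply, star_mul, star_star, star_neg, hstarR]
      ring
    · -- nonvanishing
      have hDne : D ≠ 0 := by
        intro h0
        have hdf0 : Df =ᵐ[haarAddCircle] 0 := by
          have h1 : (⇑D) =ᵐ[haarAddCircle] 0 := Lp.eq_zero_iff_ae_eq_zero.mp h0
          exact (memDf.coeFn_toLp.symm.trans h1)
        have hAf0 : (⇑A) =ᵐ[haarAddCircle] 0 := by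
          filter_upwards [hdf0] with θ hθ
          rw [hDf] at hθ
          simp only [Pi.zero_apply, neg_eq_zero, mul_eq_zero] at hθ
          rcases hθ with h | h
          · simpa using h
          · exact absurd h (by
              simp only [Complex.ofReal_eq_zero]
              exact ne_of_gt (hw_pos θ))
        have hA0 : A = 0 := Lp.eq_zero_iff_ae_eq_zero.mpr hAf0
        have ha0 : a = 0 := by
          have := congrArg ee hA0
          rwa [hA, LinearIsometryEquiv.apply_symm_apply, map_zero] at this
        apply hj₀
        have : a j₀ = φ (F j₀) := by rw [ha, hΦφ, compL_apply]
        rw [← this, ha0]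
        simp [lp.coeFn_zero]
      obtain ⟨j₁, hj₁⟩ : ∃ j : ℤ, d j ≠ 0 := by
        by_contra hcon
        push_neg at hcon
        apply hDne
        have hd0 : d = 0 := by
          apply lp.eq_zero_iff_coeFn_eq_zero.mpr
          funext j; exact hcon j
        have := congrArg ee.symm hd0
        rwa [hd, LinearIsometryEquiv.symm_apply_apply, map_zero] at this
      refine ⟨lp.single p j₁ x₂, ?_⟩
      have hsφ : Φφ (lp.single p j₁ x₂) = lp.single 2 j₁ (φ x₂) := by
        apply lp.ext
        funext j
        rw [hΦφ, compL_apply]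
        by_cases h : j = j₁
        · subst h; rw [lp.single_apply_self, lp.single_apply_self]
        · rw [lp.single_apply_ne p j₁ _ h, lp.single_apply_ne 2 j₁ _ h, map_zero]
      have hsψ : Φψ (lp.single p j₁ x₂) = lp.single 2 j₁ (ψ x₂) := by
        apply lp.ext
        funext j
        rw [hΦψ, compL_apply]
        by_cases h : j = j₁
        · subst h; rw [lp.single_apply_self, lp.single_apply_self]
        · rw [lp.single_apply_ne p j₁ _ h, lp.single_apply_ne 2 j₁ _ h, map_zero]
      simp only [ContinuousLinearMap.add_apply, ContinuousLinearMap.comp_apply,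
        innerSL_apply_apply, hsφ, hsψ, hφ2, hψ2]
      rw [lp.inner_single_right, lp.inner_single_right, RCLike.inner_apply',
        RCLike.inner_apply']
      simp only [mul_one, mul_zero, zero_add, map_zero]
      intro hcontra
      apply hj₁
      have := congrArg star hcontra
      rwa [starRingEnd_apply, star_star, star_zero] at this
end
end
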